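/- arXiv:1208.1627 — 7 statements merged into one kernel-verified Lean document; each statement's English description precedes it below -/
import Mathlib

section
/- Let q be a power of a prime and let F be the finite field with q² elements. For a, b ∈ F set c = a^(q+1) + b^q + b. Then the non-vertical line {(x,y) : y = a·x + b} intersects the Hermitian curve H in exactly 1 point if c = 0, and in exactly q+1 points if c ≠ 0. Moreover, the number of pairs (a,b) ∈ F × F with a^(q+1) + b^q + b = 0 is exactly q³, so exactly q³ of the q⁴ non-vertical lines are tangent to H and the remaining q⁴ − q³ lines intersect H in q+1 points. -/
open Polynomial

private lemma ncard_le_of_poly {F : Type*} [Field F] [Fintype F] (S : Set F) (f : F[X])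
    (hf : f ≠ 0) (h : ∀ x ∈ S, f.eval x = 0) : S.ncard ≤ f.natDegree := by
  classical
  have hsub : S ⊆ (f.roots.toFinset : Set F) := by
    intro x hx
    simp only [Finset.coe_sort_coe, Multiset.mem_toFinset, Finset.mem_coe]
    rw [mem_roots hf]
    exact h x hx
  calc S.ncard ≤ Set.ncard (f.roots.toFinset : Set F) :=
        Set.ncard_le_ncard hsub (Set.toFinite _)
    _ = f.roots.toFinset.card := Set.ncard_coe_finset _
    _ ≤ Multiset.card f.roots := Multiset.toFinset_card_le _
    _ ≤ f.natDegree := f.card_roots'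

private lemma ncard_eq_of_poly_dvd {F : Type*} [Field F] [Fintype F] (S : Set F) (f : F[X])
    (hdeg : f.natDegree ≠ 0) (hdvd : f ∣ X ^ Fintype.card F - X)
    (hS : ∀ x, x ∈ S ↔ f.eval x = 0) : S.ncard = f.natDegree := by
  classical
  have hf : f ≠ 0 := fun h => hdeg (by simp [h])
  obtain ⟨p, hchar⟩ := CharP.exists F
  haveI := hchar
  haveI : Fact p.Prime := ⟨CharP.char_is_prime F p⟩
  obtain ⟨n, hp, hcard⟩ := FiniteField.card F p
  have hpdvd : p ∣ Fintype.card F := by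
    rw [hcard]; exact dvd_pow_self p n.2.ne'
  have hgsep : (X ^ Fintype.card F - X : F[X]).Separable := galois_poly_separable p _ hpdvd
  have hfsep : f.Separable := hgsep.of_dvd hdvd
  have hg0 : (X ^ Fintype.card F - X : F[X]) ≠ 0 :=
    FiniteField.X_pow_card_sub_X_ne_zero F Fintype.one_lt_card
  have hgsplit : (X ^ Fintype.card F - X : F[X]).Splits := by
    rw [splits_iff_card_roots, FiniteField.roots_X_pow_card_sub_X,
      FiniteField.X_pow_card_sub_X_natDegree_eq F Fintype.one_lt_card]
    simp
  have hfsplit : f.Splits := hgsplit.of_dvd hg0 hdvd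
  have hnodup : f.roots.Nodup := nodup_roots hfsep
  have hset : S = (f.roots.toFinset : Set F) := by
    ext x
    simp only [hS, Finset.coe_sort_coe, Multiset.mem_toFinset, Finset.mem_coe]
    rw [mem_roots hf]
    exact Iff.rfl
  rw [hset, Set.ncard_coe_finset, Multiset.toFinset_card_of_nodup hnodup,
    splits_iff_card_roots.mp hfsplit]

private lemma char_of_card {F : Type*} [Field F] [Fintype F] {q p k : ℕ} (hp : p.Prime)
    (hk : 0 < k) (hpk : p ^ k = q) (hF : Fintype.card F = q ^ 2) : CharP F p := by
  obtain ⟨p', hchar⟩ := CharP.exists F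
  haveI := hchar
  have hp' : p'.Prime := CharP.char_is_prime F p'
  obtain ⟨n, _, hcard⟩ := FiniteField.card F p'
  have h1 : p' ∣ p ^ (k * 2) := by
    have : p' ^ (n : ℕ) = p ^ (k * 2) := by rw [← hcard, hF, ← hpk, ← pow_mul]
    rw [← this]
    exact dvd_pow_self p' n.2.ne'
  have : p' = p := (Nat.prime_dvd_prime_iff_eq hp' hp).mp (hp'.dvd_of_dvd_pow h1)
  rwa [this] at hchar

theorem stmt_1 (q : ℕ) (hq : IsPrimePow q) (F : Type*) [Field F] [Fintype F]
    (hF : Fintype.card F = q ^ 2) :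
    (∀ a b : F,
      (a ^ (q + 1) + b ^ q + b = 0 →
        Set.ncard {p : F × F | p.1 ^ (q + 1) = p.2 ^ q + p.2 ∧ p.2 = a * p.1 + b} = 1) ∧
      (a ^ (q + 1) + b ^ q + b ≠ 0 →
        Set.ncard {p : F × F | p.1 ^ (q + 1) = p.2 ^ q + p.2 ∧ p.2 = a * p.1 + b} = q + 1)) ∧
    Nat.card {ab : F × F // ab.1 ^ (q + 1) + ab.2 ^ q + ab.2 = 0} = q ^ 3 ∧
    Nat.card {ab : F × F //
      Set.ncard {p : F × F | p.1 ^ (q + 1) = p.2 ^ q + p.2 ∧ p.2 = ab.1 * p.1 + ab.2} = 1}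
      = q ^ 3 ∧
    Nat.card {ab : F × F //
      Set.ncard {p : F × F | p.1 ^ (q + 1) = p.2 ^ q + p.2 ∧ p.2 = ab.1 * p.1 + ab.2} = q + 1}
      = q ^ 4 - q ^ 3 := by
  classical
  obtain ⟨p, k, hpp, hk, hpk⟩ := hq
  have hp : p.Prime := Nat.prime_iff.mpr hpp
  haveI : Fact p.Prime := ⟨hp⟩
  haveI : CharP F p := char_of_card hp hk hpk hF
  have hq2 : 2 ≤ q := by
    rw [← hpk]
    calc 2 ≤ p := hp.two_le
      _ = p ^ 1 := (pow_one p).symm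
      _ ≤ p ^ k := Nat.pow_le_pow_right hp.pos hk
  have hq0 : q ≠ 0 := by omega
  -- Frobenius facts
  have hfrob : ∀ x y : F, (x + y) ^ q = x ^ q + y ^ q := by
    intro x y; rw [← hpk]; exact add_pow_char_pow x y p k
  have hfrobs : ∀ x y : F, (x - y) ^ q = x ^ q - y ^ q := by
    intro x y; rw [← hpk]; exact sub_pow_char_pow x y k
  have hcard4 : ∀ x : F, x ^ (q ^ 2) = x := fun x => by rw [← hF]; exact FiniteField.pow_card x
  have hbqq : ∀ x : F, (x ^ q) ^ q = x := by
    intro x; rw [← pow_mul, ← pow_two, hcard4]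
  have hnorm : ∀ x : F, (x ^ (q + 1)) ^ q = x ^ (q + 1) := by
    intro x
    rw [← pow_mul]
    have h : (q + 1) * q = q ^ 2 + q := by ring
    rw [h, pow_add, hcard4, ← pow_succ']
  -- key pointwise equivalence
  have hiff : ∀ a b x : F, (x ^ (q + 1) = (a * x + b) ^ q + (a * x + b)) ↔
      ((x - a ^ q) ^ (q + 1) = a ^ (q + 1) + b ^ q + b) := by
    intro a b x
    have h1 : (a * x + b) ^ q = a ^ q * x ^ q + b ^ q := by rw [hfrob, mul_pow]
    have hxa : (x - a ^ q) ^ q = x ^ q - a := by rw [hfrobs, hbqq]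
    rw [h1]
    simp only [pow_succ]
    rw [hxa]
    constructor <;> intro h <;> linear_combination h
  -- the intersection set as an image
  have himg : ∀ a b : F, {p : F × F | p.1 ^ (q + 1) = p.2 ^ q + p.2 ∧ p.2 = a * p.1 + b}
      = (fun u : F => (u + a ^ q, a * (u + a ^ q) + b)) ''
        {u : F | u ^ (q + 1) = a ^ (q + 1) + b ^ q + b} := by
    intro a b
    ext ⟨x, y⟩
    simp only [Set.mem_setOf_eq, Set.mem_image, Prod.mk.injEq]
    constructor
    · rintro ⟨hc, rfl⟩
      refine ⟨x - a ^ q, ?_, by simp, by rw [sub_add_cancel]⟩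
      · exact (hiff a b x).mp hc
    · rintro ⟨u, hu, hx, hy⟩
      subst hx; subst hy
      refine ⟨?_, rfl⟩
      have := (hiff a b (u + a ^ q)).mpr (by simpa using hu)
      exact this
  have hinj : ∀ a b : F, Function.Injective
      (fun u : F => (u + a ^ q, a * (u + a ^ q) + b)) :=
    fun a b u v h => by simpa using congrArg Prod.fst h
  have hncard : ∀ a b : F,
      Set.ncard {p : F × F | p.1 ^ (q + 1) = p.2 ^ q + p.2 ∧ p.2 = a * p.1 + b}
        = Set.ncard {u : F | u ^ (q + 1) = a ^ (q + 1) + b ^ q + b} := by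
    intro a b
    rw [himg a b, Set.ncard_image_of_injective _ (hinj a b)]
  -- c is fixed by Frobenius
  have hcfix : ∀ a b : F, (a ^ (q + 1) + b ^ q + b) ^ q = a ^ (q + 1) + b ^ q + b := by
    intro a b
    rw [hfrob, hfrob, hnorm, hbqq]
    ring
  -- counting solutions of u^(q+1) = c
  have hcount0 : ∀ c : F, c = 0 → Set.ncard {u : F | u ^ (q + 1) = c} = 1 := by
    intro c hc
    subst hc
    have : {u : F | u ^ (q + 1) = 0} = {0} := by
      ext u
      simp [pow_eq_zero_iff (Nat.succ_ne_zero q)]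
    rw [this, Set.ncard_singleton]
  have hcount1 : ∀ c : F, c ≠ 0 → c ^ q = c → Set.ncard {u : F | u ^ (q + 1) = c} = q + 1 := by
    intro c hc hcq
    have hj : (q - 1) + 1 = q := by omega
    have hcj : c ^ (q - 1) = 1 := by
      have h1 : c ^ (q - 1) * c = 1 * c := by
        rw [one_mul, ← pow_succ, hj, hcq]
      exact mul_right_cancel₀ hc h1
    have hdvd1 : (X ^ (q + 1) - C c : F[X]) ∣ (X ^ (q + 1)) ^ (q - 1) - (C c) ^ (q - 1) :=
      sub_dvd_pow_sub_pow _ _ _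
    have harith : (q + 1) * (q - 1) + 1 = q ^ 2 := by
      obtain ⟨m, rfl⟩ := Nat.exists_eq_add_of_le (show 1 ≤ q by omega)
      simp only [Nat.add_sub_cancel_left]
      ring
    have hdvd2 : (X ^ (q + 1) - C c : F[X]) ∣ X ^ Fintype.card F - X := by
      have h2 : (X ^ (q + 1) : F[X]) ^ (q - 1) - (C c) ^ (q - 1)
          = X ^ ((q + 1) * (q - 1)) - 1 := by
        rw [← pow_mul, ← C_pow, hcj, C_1]
      have h3 : (X ^ Fintype.card F - X : F[X])
          = X * (X ^ ((q + 1) * (q - 1)) - 1) := by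
        rw [hF, ← harith]
        ring
      rw [h3]
      exact Dvd.dvd.mul_left (h2 ▸ hdvd1) X
    have hdeg : (X ^ (q + 1) - C c : F[X]).natDegree = q + 1 := by
      rw [natDegree_X_pow_sub_C]
    have := ncard_eq_of_poly_dvd {u : F | u ^ (q + 1) = c} (X ^ (q + 1) - C c)
      (by rw [hdeg]; omega) hdvd2 ?_
    · rw [this, hdeg]
    · intro x
      simp [sub_eq_zero]
  -- part 1
  have hpart1 : ∀ a b : F,
      (a ^ (q + 1) + b ^ q + b = 0 →
        Set.ncard {p : F × F | p.1 ^ (q + 1) = p.2 ^ q + p.2 ∧ p.2 = a * p.1 + b} = 1) ∧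
      (a ^ (q + 1) + b ^ q + b ≠ 0 →
        Set.ncard {p : F × F | p.1 ^ (q + 1) = p.2 ^ q + p.2 ∧ p.2 = a * p.1 + b} = q + 1) := by
    intro a b
    constructor
    · intro hc
      rw [hncard a b]
      exact hcount0 _ hc
    · intro hc
      rw [hncard a b]
      exact hcount1 _ hc (hcfix a b)
  -- the additive map b ↦ b^q + b
  set ψ : F →+ F := AddMonoidHom.mk' (fun b => b ^ q + b)
    (fun x y => by show (x + y) ^ q + (x + y) = x ^ q + x + (y ^ q + y); rw [hfrob]; ring) with hψ
  have hψa : ∀ b : F, ψ b = b ^ q + b := fun b => rfl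
  have hker_le : Nat.card ψ.ker ≤ q := by
    have he : (↥ψ.ker) ≃ {b : F | b ^ q + b = 0} :=
      Equiv.subtypeEquivRight (fun x => by
        rw [AddMonoidHom.mem_ker, hψa]; rfl)
    rw [Nat.card_congr he, Nat.card_coe_set_eq]
    have hdeg : (X ^ q + X : F[X]).natDegree = q := by
      have h1 : (X : F[X]).degree < (X ^ q : F[X]).degree := by
        rw [degree_X_pow, degree_X]
        exact_mod_cast (by omega : 1 < q)
      rw [natDegree_eq_of_degree_eq (degree_add_eq_left_of_degree_lt h1), natDegree_X_pow]
    refine le_trans (ncard_le_of_poly _ (X ^ q + X) (fun h => ?_) (fun x hx => by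
      simpa using hx)) (le_of_eq hdeg)
    rw [h, natDegree_zero] at hdeg; omega
  have hT_le : Set.ncard {t : F | t ^ q = t} ≤ q := by
    have hdeg : (X ^ q - X : F[X]).natDegree = q :=
      FiniteField.X_pow_card_sub_X_natDegree_eq F (by omega)
    refine le_trans (ncard_le_of_poly _ (X ^ q - X)
      (FiniteField.X_pow_card_sub_X_ne_zero F (by omega)) (fun x hx => by
        simp only [eval_sub, eval_pow, eval_X, sub_eq_zero]
        exact hx)) (le_of_eq hdeg)
  have hrange_sub : (Set.range ψ) ⊆ {t : F | t ^ q = t} := by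
    rintro t ⟨b, rfl⟩
    show (ψ b) ^ q = ψ b
    rw [hψa, hfrob, hbqq]
    ring
  have heR : (↥ψ.range) ≃ ↥(Set.range ψ) := Equiv.subtypeEquivRight (fun x => by
    rw [AddMonoidHom.mem_range, Set.mem_range])
  have hrange_le : Nat.card ψ.range ≤ q := by
    rw [Nat.card_congr heR, Nat.card_coe_set_eq]
    exact le_trans (Set.ncard_le_ncard hrange_sub (Set.toFinite _)) hT_le
  have hprodc : q * q = Nat.card ψ.range * Nat.card ψ.ker := by
    have h1 : Nat.card F = Nat.card (F ⧸ ψ.ker) * Nat.card ψ.ker :=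
      AddSubgroup.card_eq_card_quotient_mul_card_addSubgroup _
    have h2 : Nat.card (F ⧸ ψ.ker) = Nat.card ψ.range :=
      Nat.card_congr (QuotientAddGroup.quotientKerEquivRange ψ).toEquiv
    have h3 : Nat.card F = q * q := by rw [Nat.card_eq_fintype_card, hF]; ring
    rw [← h3, h1, h2]
  have hker_eq : Nat.card ψ.ker = q := by
    refine le_antisymm hker_le ?_
    by_contra h
    push_neg at h
    nlinarith [hprodc, hker_le, hrange_le]
  have hrange_eq : Nat.card ψ.range = q := by
    refine le_antisymm hrange_le ?_
    by_contra h
    push_neg at h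
    nlinarith [hprodc, hker_le, hrange_le]
  have hrange_set : Set.range ψ = {t : F | t ^ q = t} := by
    refine Set.eq_of_subset_of_ncard_le hrange_sub ?_ (Set.toFinite _)
    have : (Set.range ψ).ncard = q := by
      rw [← Nat.card_coe_set_eq, ← Nat.card_congr heR, hrange_eq]
    rw [this]
    exact hT_le
  have hsol : ∀ a : F, ∃ b0 : F, b0 ^ q + b0 = -(a ^ (q + 1)) := by
    intro a
    have hmem : -(a ^ (q + 1)) ∈ {t : F | t ^ q = t} := by
      show (-(a ^ (q + 1))) ^ q = -(a ^ (q + 1))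
      rw [← zero_sub, hfrobs, zero_pow hq0, hnorm, zero_sub]
    rw [← hrange_set] at hmem
    obtain ⟨b0, hb0⟩ := hmem
    exact ⟨b0, hb0⟩
  have hker_q : Nat.card {b : F // b ^ q + b = 0} = q := by
    have he2 : {b : F // b ^ q + b = 0} ≃ ↥ψ.ker :=
      Equiv.subtypeEquivRight (fun x => by rw [AddMonoidHom.mem_ker, hψa])
    rw [Nat.card_congr he2, hker_eq]
  -- count of tangent lines
  have hcount2 : Nat.card {ab : F × F // ab.1 ^ (q + 1) + ab.2 ^ q + ab.2 = 0} = q ^ 3 := by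
    have e : {ab : F × F // ab.1 ^ (q + 1) + ab.2 ^ q + ab.2 = 0}
        ≃ F × {b : F // b ^ q + b = 0} :=
    { toFun := fun x => (x.1.1, ⟨x.1.2 - (hsol x.1.1).choose, by
        have hb0 := (hsol x.1.1).choose_spec
        have hx := x.2
        rw [hfrobs]
        linear_combination hx - hb0⟩)
      invFun := fun y => ⟨(y.1, y.2.1 + (hsol y.1).choose), by
        have hb0 := (hsol y.1).choose_spec
        have hu := y.2.2
        rw [hfrob]
        linear_combination hu + hb0⟩
      left_inv := fun x => Subtype.ext (by simp)
      right_inv := fun y => by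
        refine Prod.ext rfl (Subtype.ext ?_)
        simp }
    rw [Nat.card_congr e, Nat.card_prod, Nat.card_eq_fintype_card, hF, hker_q]
    ring
  -- assemble
  have hiff1 : ∀ ab : F × F,
      Set.ncard {p : F × F | p.1 ^ (q + 1) = p.2 ^ q + p.2 ∧ p.2 = ab.1 * p.1 + ab.2} = 1
        ↔ ab.1 ^ (q + 1) + ab.2 ^ q + ab.2 = 0 := by
    intro ab
    constructor
    · intro h
      by_contra hc
      rw [(hpart1 ab.1 ab.2).2 hc] at h
      omega
    · exact (hpart1 ab.1 ab.2).1
  have hiff2 : ∀ ab : F × F,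
      Set.ncard {p : F × F | p.1 ^ (q + 1) = p.2 ^ q + p.2 ∧ p.2 = ab.1 * p.1 + ab.2} = q + 1
        ↔ ¬(ab.1 ^ (q + 1) + ab.2 ^ q + ab.2 = 0) := by
    intro ab
    constructor
    · intro h hc
      rw [(hpart1 ab.1 ab.2).1 hc] at h
      omega
    · exact (hpart1 ab.1 ab.2).2
  refine ⟨hpart1, hcount2, ?_, ?_⟩
  · rw [Nat.card_congr (Equiv.subtypeEquivRight hiff1)]
    exact hcount2
  · rw [Nat.card_congr (Equiv.subtypeEquivRight hiff2), Nat.card_eq_fintype_card,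
      Fintype.card_subtype_compl, ← Nat.card_eq_fintype_card (α := {ab : F × F //
        ab.1 ^ (q + 1) + ab.2 ^ q + ab.2 = 0}), hcount2, Fintype.card_prod, hF]
    have : q ^ 2 * q ^ 2 = q ^ 4 := by ring
    rw [this]
end

section
/- Let q be an odd power of a prime and let F be the finite field with q² elements. For every a, b, c ∈ F with a ≠ 0, the cardinality of the set {(x,y) ∈ F×F : x^(q+1) = y^q + y and y = a·x² + b·x + c} belongs to the set {0, 1, q−1, q, q+1, 2q−1, 2q}. -/
open Polynomial in
lemma root_bound {F : Type*} [Field F] (P : Polynomial F) (hP : P ≠ 0) :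
    {x : F | P.eval x = 0}.ncard ≤ P.natDegree := by
  classical
  have hset : {x : F | P.eval x = 0} = ↑P.roots.toFinset := by
    ext x; simp [Polynomial.mem_roots, hP]
  rw [hset, Set.ncard_coe_finset]
  exact le_trans (Multiset.toFinset_card_le _) (Polynomial.card_roots' P)

open Polynomial in
lemma bound_linfrob {F : Type*} [Field F] {q : ℕ} (hq : 2 ≤ q) (α β : F) (hβ : β ≠ 0) :
    {x : F | α * x ^ q + β * x = 0}.ncard ≤ q := by
  have h1 : {x : F | α * x ^ q + β * x = 0} = {x : F | (C α * X ^ q + C β * X).eval x = 0} := by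
    ext x; simp
  rw [h1]
  refine le_trans (root_bound _ ?_) ?_
  · intro h
    have := congrArg (fun P => Polynomial.coeff P 1) h
    simp only [coeff_add, coeff_C_mul, coeff_X_pow, coeff_X_one, mul_one, coeff_zero] at this
    rw [if_neg (by omega : ¬ (1 = q))] at this
    simp at this
    exact hβ this
  · refine le_trans (natDegree_add_le _ _) ?_
    simp only [max_le_iff]
    constructor
    · exact le_trans (natDegree_C_mul_le _ _) (by simp)
    · exact le_trans (natDegree_C_mul_le _ _) (by simp; omega)

open Polynomial in
lemma bound_pow {F : Type*} [Field F] {n : ℕ} (hn : 0 < n) (s : F) :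
    {x : F | x ^ n = s}.ncard ≤ n := by
  have h1 : {x : F | x ^ n = s} = {x : F | (X ^ n - C s).eval x = 0} := by
    ext x; simp [sub_eq_zero]
  rw [h1]
  refine le_trans (root_bound _ ?_) (le_of_eq (natDegree_X_pow_sub_C))
  intro h
  have := congrArg natDegree h
  rw [natDegree_X_pow_sub_C, natDegree_zero] at this; omega

open Polynomial in
lemma bound_quad {F : Type*} [Field F] (a b e : F) (ha : a ≠ 0) :
    {x : F | a * x ^ 2 + b * x + e = 0}.ncard ≤ 2 := by
  have h1 : {x : F | a * x ^ 2 + b * x + e = 0}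
      = {x : F | (C a * X ^ 2 + C b * X + C e).eval x = 0} := by
    ext x; simp
  rw [h1]
  refine le_trans (root_bound _ ?_) ?_
  · intro h
    have := congrArg (fun P => Polynomial.coeff P 2) h
    simp [coeff_X_pow] at this
    exact ha this
  · refine le_trans (natDegree_add_le _ _) ?_
    simp only [max_le_iff]
    refine ⟨le_trans (natDegree_add_le _ _) ?_, by simp⟩
    simp only [max_le_iff]
    exact ⟨le_trans (natDegree_C_mul_le _ _) (by simp), le_trans (natDegree_C_mul_le _ _) (by simp)⟩

lemma addhom_card {F : Type*} [AddCommGroup F] (f : F →+ F) :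
    Nat.card F = Nat.card (Set.range f) * {x : F | f x = 0}.ncard := by
  classical
  have h1 := AddSubgroup.card_eq_card_quotient_mul_card_addSubgroup (f.ker)
  have h2 : Nat.card (F ⧸ f.ker) = Nat.card (Set.range f) := by
    refine Nat.card_congr ?_
    refine (QuotientAddGroup.quotientKerEquivRange f).toEquiv.trans ?_
    rfl
  have h3 : {x : F | f x = 0}.ncard = Nat.card f.ker := by
    rw [← Nat.card_coe_set_eq]
    congr 1
  rw [h1, h2, h3]

lemma addhom_fiber {F : Type*} [AddCommGroup F] (f : F →+ F) (s : F) (x₀ : F) (hx₀ : f x₀ = s) :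
    {x : F | f x = s}.ncard = {x : F | f x = 0}.ncard := by
  apply Set.ncard_congr (fun x _ => x - x₀)
  · intro x hx; simp only [Set.mem_setOf_eq] at *; rw [map_sub, hx, hx₀, sub_self]
  · intro x y _ _ h; simpa using h
  · intro y hy; refine ⟨y + x₀, ?_, by simp⟩
    simp only [Set.mem_setOf_eq] at *; rw [map_add, hy, hx₀, zero_add]

lemma mulhom_card {G : Type*} [CommGroup G] (f : G →* G) :
    Nat.card G = Nat.card (Set.range f) * Nat.card {x : G | f x = 1} := by
  classical
  have h1 := Subgroup.card_eq_card_quotient_mul_card_subgroup (f.ker)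
  have h2 : Nat.card (G ⧸ f.ker) = Nat.card (Set.range f) := by
    refine Nat.card_congr ?_
    exact (QuotientGroup.quotientKerEquivRange f).toEquiv.trans (Equiv.refl _)
  have h3 : Nat.card {x : G | f x = 1} = Nat.card f.ker := rfl
  rw [h1, h2, h3]

lemma mulhom_fiber {G : Type*} [CommGroup G] (f : G →* G) (s : G) (x₀ : G) (hx₀ : f x₀ = s) :
    Nat.card {x : G | f x = s} = Nat.card {x : G | f x = 1} := by
  apply Nat.card_congr
  refine ⟨fun x => ⟨x.1 / x₀, ?_⟩, fun y => ⟨y.1 * x₀, ?_⟩, ?_, ?_⟩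
  · have := x.2; simp only [Set.mem_setOf_eq] at *; rw [map_div, this, hx₀, div_self']
  · have := y.2; simp only [Set.mem_setOf_eq] at *; rw [map_mul, this, hx₀, one_mul]
  · intro x; ext; simp
  · intro y; ext; simp

lemma card_mul_eq {A B m k : ℕ} (hA : 0 < A) (hB : 0 < B) (hm : m ≤ A) (hk : k ≤ B)
    (h : A * B ≤ m * k) : m = A ∧ k = B := by
  have hk' : B ≤ k := by
    have : A * B ≤ A * k := le_trans h (Nat.mul_le_mul_right k hm)
    exact Nat.le_of_mul_le_mul_left this hA
  have hm' : A ≤ m := by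
    have : A * B ≤ m * B := le_trans h (Nat.mul_le_mul_left m hk)
    exact Nat.le_of_mul_le_mul_right this hB
  exact ⟨le_antisymm hm hm', le_antisymm hk hk'⟩

section FieldLemmas
variable {F : Type*} [Field F] [Fintype F] {q : ℕ}

lemma neg_pow_q (hq : 3 ≤ q) (hadd : ∀ x y : F, (x + y) ^ q = x ^ q + y ^ q) :
    ∀ x : F, (-x) ^ q = -x ^ q := by
  intro x
  have h0 : (0 : F) ^ q = 0 := zero_pow (by omega)
  have h := hadd x (-x)
  rw [add_neg_cancel, h0] at h
  linear_combination -h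

lemma card_fix (hq : 3 ≤ q) (hF : Fintype.card F = q ^ 2)
    (hadd : ∀ x y : F, (x + y) ^ q = x ^ q + y ^ q)
    (hqq : ∀ x : F, (x ^ q) ^ q = x) :
    {x : F | x ^ q = x}.ncard = q := by
  classical
  have hneg := neg_pow_q hq hadd
  set f : F →+ F := AddMonoidHom.mk' (fun x => x ^ q - x)
    (fun x y => by show (x + y) ^ q - (x + y) = _; rw [hadd]; ring) with hf
  have hfx : ∀ x, f x = x ^ q - x := fun x => rfl
  have hker : {x : F | f x = 0} = {x : F | x ^ q = x} := by
    ext x; simp [hfx, sub_eq_zero]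
  have hfixle : {x : F | x ^ q = x}.ncard ≤ q := by
    have hs : {x : F | x ^ q = x} = {x : F | (1:F) * x ^ q + (-1) * x = 0} := by
      ext x; constructor <;> intro h <;> simp only [Set.mem_setOf_eq] at * <;> linear_combination h
    rw [hs]; exact bound_linfrob (by omega) 1 (-1) (by norm_num)
  have hrangele : (Set.range f).ncard ≤ q := by
    have hsub : Set.range f ⊆ {v : F | (1:F) * v ^ q + 1 * v = 0} := by
      rintro v ⟨x, rfl⟩
      simp only [hfx, Set.mem_setOf_eq, one_mul]
      have : (x ^ q - x) ^ q = x - x ^ q := by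
        rw [sub_eq_add_neg, hadd, hqq, hneg]; ring
      rw [this]; ring
    refine le_trans (Set.ncard_le_ncard hsub (Set.toFinite _)) ?_
    exact bound_linfrob (by omega) 1 1 one_ne_zero
  have hcard := addhom_card f
  rw [Nat.card_eq_fintype_card, hF, hker, Nat.card_coe_set_eq] at hcard
  exact (card_mul_eq (A := q) (B := q) (by omega) (by omega) hrangele hfixle
    (by rw [← pow_two, hcard])).2

lemma ker_card (hq : 3 ≤ q) (hF : Fintype.card F = q ^ 2)
    (hadd : ∀ x y : F, (x + y) ^ q = x ^ q + y ^ q)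
    (hqq : ∀ x : F, (x ^ q) ^ q = x)
    (β : F) (hN : β * β ^ q = 1) :
    {u : F | β * u ^ q = u}.ncard = q := by
  classical
  set f : F →+ F := AddMonoidHom.mk' (fun u => β * u ^ q - u)
    (fun x y => by show β * (x + y) ^ q - (x + y) = _; rw [hadd]; ring) with hf
  have hfx : ∀ u, f u = β * u ^ q - u := fun _ => rfl
  have hker : {u : F | f u = 0} = {u : F | β * u ^ q = u} := by
    ext u; simp [hfx, sub_eq_zero]
  have hneg := neg_pow_q hq hadd
  have hkerle : {u : F | β * u ^ q = u}.ncard ≤ q := by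
    have hs : {u : F | β * u ^ q = u} = {u : F | β * u ^ q + (-1) * u = 0} := by
      ext u; constructor <;> intro h <;> simp only [Set.mem_setOf_eq] at * <;> linear_combination h
    rw [hs]; exact bound_linfrob (by omega) β (-1) (by norm_num)
  have hrangele : (Set.range f).ncard ≤ q := by
    have hsub : Set.range f ⊆ {v : F | β * v ^ q + 1 * v = 0} := by
      rintro v ⟨u, rfl⟩
      simp only [hfx, Set.mem_setOf_eq, one_mul]
      have h1 : (β * u ^ q - u) ^ q = β ^ q * u - u ^ q := by
        rw [sub_eq_add_neg, hadd, hneg, mul_pow, hqq]; ring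
      rw [h1]; linear_combination u * hN
    refine le_trans (Set.ncard_le_ncard hsub (Set.toFinite _)) ?_
    exact bound_linfrob (by omega) β 1 one_ne_zero
  have hcard := addhom_card f
  rw [Nat.card_eq_fintype_card, hF, hker, Nat.card_coe_set_eq] at hcard
  exact (card_mul_eq (A := q) (B := q) (by omega) (by omega) hrangele hkerle
    (by rw [← pow_two, hcard])).2

lemma units_set_card {P : F → Prop} (h0 : ¬ P 0) :
    Nat.card {x : Fˣ | P (x : F)} = {x : F | P x}.ncard := by
  classical
  rw [← Nat.card_coe_set_eq]
  apply Nat.card_congr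
  refine ⟨fun u => ⟨(u.1 : F), u.2⟩,
      fun x => ⟨Units.mk0 x.1 (fun h => h0 (by rw [← h]; exact x.2)), x.2⟩, ?_, ?_⟩
  · intro u; apply Subtype.ext; apply Units.ext; rfl
  · intro x; rfl

lemma norm_fiber (hq : 3 ≤ q) (hF : Fintype.card F = q ^ 2)
    (hadd : ∀ x y : F, (x + y) ^ q = x ^ q + y ^ q)
    (hqq : ∀ x : F, (x ^ q) ^ q = x)
    (s : F) (hs : s ≠ 0) (hsK : s ^ q = s) :
    {x : F | x ^ (q + 1) = s}.ncard = q + 1 := by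
  classical
  set ν : Fˣ →* Fˣ := powMonoidHom (q + 1) with hν
  have hνx : ∀ x : Fˣ, ν x = x ^ (q + 1) := fun _ => rfl
  have hsets1 : {x : Fˣ | ν x = 1} = {x : Fˣ | (x : F) ^ (q + 1) = 1} := by
    ext x
    simp only [Set.mem_setOf_eq, hνx]
    rw [← Units.val_eq_one, Units.val_pow_eq_pow_val]
  have hker1 : Nat.card {x : Fˣ | ν x = 1} = {x : F | x ^ (q + 1) = 1}.ncard := by
    rw [hsets1]
    exact units_set_card (P := fun x : F => x ^ (q + 1) = 1) (by simp [zero_pow])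
  have hkerle : Nat.card {x : Fˣ | ν x = 1} ≤ q + 1 := by
    rw [hker1]; exact bound_pow (by omega) 1
  have hrangesub : Set.range ν ⊆ {x : Fˣ | (x : F) ^ q = (x : F)} := by
    rintro y ⟨x, rfl⟩
    simp only [Set.mem_setOf_eq, hνx, Units.val_pow_eq_pow_val]
    set v : F := (x : F)
    calc (v ^ (q+1)) ^ q = ((v ^ q) ^ q) * v ^ q := by ring
    _ = v ^ (q + 1) := by rw [hqq]; ring
  have hKcard : Nat.card {x : Fˣ | (x : F) ^ q = (x : F)} = q - 1 := by
    have h1 : {x : Fˣ | (x:F) ^ q = (x:F)} = {x : Fˣ | (x:F) ^ q = (x:F) ∧ (x:F) ≠ 0} := by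
      ext x; simp [x.ne_zero]
    rw [h1]
    refine Eq.trans (units_set_card (P := fun x : F => x ^ q = x ∧ x ≠ 0) (by simp)) ?_
    show {x : F | x ^ q = x ∧ x ≠ 0}.ncard = q - 1
    have h2 : {x : F | x ^ q = x ∧ x ≠ 0} = {x : F | x ^ q = x} \ {0} := by
      ext x; simp [Set.mem_diff, and_comm]
    rw [h2, Set.ncard_diff_singleton_of_mem (by simp [zero_pow (by omega : q ≠ 0)]),
      card_fix hq hF hadd hqq]
  have hrangele : Nat.card (Set.range ν) ≤ q - 1 := by
    rw [Nat.card_coe_set_eq]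
    refine le_trans (Set.ncard_le_ncard hrangesub (Set.toFinite _)) ?_
    rw [← Nat.card_coe_set_eq]; exact le_of_eq hKcard
  have hcard := mulhom_card ν
  have hcardU : Nat.card Fˣ = q ^ 2 - 1 := by
    rw [Nat.card_eq_fintype_card, Fintype.card_units, hF]
  rw [hcardU] at hcard
  obtain ⟨m, hm⟩ : ∃ m, q = m + 3 := ⟨q - 3, by omega⟩
  have harith : (q - 1) * (q + 1) = q ^ 2 - 1 := by
    subst hm
    have : (m + 3) ^ 2 - 1 = m ^ 2 + 6 * m + 8 := by ring_nf; omega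
    rw [this]
    have h2 : (m + 3) - 1 = m + 2 := by omega
    rw [h2]; ring
  have hkey := card_mul_eq (A := q - 1) (B := q + 1) (by omega) (by omega) hrangele hkerle
    (by rw [harith, hcard])
  -- s as a unit lies in the range
  have hrangeeq : Set.range ν = {x : Fˣ | (x : F) ^ q = (x : F)} := by
    apply Set.eq_of_subset_of_ncard_le hrangesub
    rw [← Nat.card_coe_set_eq, ← Nat.card_coe_set_eq, hKcard, hkey.1]
  set su : Fˣ := Units.mk0 s hs with hsu
  have hsmem : su ∈ Set.range ν := by rw [hrangeeq]; exact hsK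
  obtain ⟨x₀, hx₀⟩ := hsmem
  have hfib := mulhom_fiber ν su x₀ hx₀
  have hsets2 : {x : Fˣ | ν x = su} = {x : Fˣ | (x : F) ^ (q + 1) = s} := by
    ext x
    simp only [Set.mem_setOf_eq, hνx]
    rw [Units.ext_iff, Units.val_pow_eq_pow_val]
    rfl
  have hfin : Nat.card {x : Fˣ | ν x = su} = {x : F | x ^ (q + 1) = s}.ncard := by
    rw [hsets2]
    exact units_set_card (P := fun x : F => x ^ (q + 1) = s)
      (fun h => hs (by rw [← h]; simp [zero_pow]))
  rw [← hfin, hfib, hkey.2]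

end FieldLemmas

lemma ncard_preimage_inj {α β : Type*} (f : α → β) (hf : Function.Injective f) (T : Set β) :
    (f ⁻¹' T).ncard = (T ∩ Set.range f).ncard := by
  rw [← Set.image_preimage_eq_inter_range (f := f) (t := T), Set.ncard_image_of_injective _ hf]

lemma addhom_preimage_card {F : Type*} [AddCommGroup F] [Fintype F] (f : F →+ F) (Z : Set F) :
    (f ⁻¹' Z).ncard = {x : F | f x = 0}.ncard * (Z ∩ Set.range f).ncard := by
  classical
  rw [← Nat.card_coe_set_eq, ← Nat.card_coe_set_eq, ← Nat.card_coe_set_eq,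
    ← Nat.card_prod]
  apply Nat.card_congr
  set g := Function.invFun f with hg
  have hinv : ∀ w : F, w ∈ Set.range f → f (g w) = w := fun w hw => Function.invFun_eq hw
  refine ⟨fun x => ⟨⟨x.1 - g (f x.1), ?_⟩, ⟨f x.1, x.2, ⟨x.1, rfl⟩⟩⟩,
      fun zw => ⟨zw.1.1 + g zw.2.1, ?_⟩, ?_, ?_⟩
  · have : f (g (f x.1)) = f x.1 := hinv _ ⟨x.1, rfl⟩
    simp only [Set.mem_setOf_eq, map_sub, this, sub_self]
  · have h1 : f (g zw.2.1) = zw.2.1 := hinv _ zw.2.2.2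
    have h2 : f zw.1.1 = 0 := zw.1.2
    simp only [Set.mem_preimage, map_add, h1, h2, zero_add]
    exact zw.2.2.1
  · intro x
    apply Subtype.ext
    have : f (g (f x.1)) = f x.1 := hinv _ ⟨x.1, rfl⟩
    simp
  · intro zw
    have h1 : f (g zw.2.1) = zw.2.1 := hinv _ zw.2.2.2
    have h2 : f zw.1.1 = 0 := zw.1.2
    have hval : f (zw.1.1 + g zw.2.1) = zw.2.1 := by rw [map_add, h1, h2, zero_add]
    ext
    · simp only [hval]
      simp
    · simp only [hval]
  
lemma ncard_sprod {α β : Type*} (s : Set α) (t : Set β) :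
    (s ×ˢ t).ncard = s.ncard * t.ncard := by
  rw [← Nat.card_coe_set_eq, ← Nat.card_coe_set_eq, ← Nat.card_coe_set_eq,
    Nat.card_congr (Equiv.Set.prod s t), Nat.card_prod]

lemma key_poly {F : Type*} [Field F] (a B δ u v : F) (hδ : δ ^ 2 = 1 - 4 * a * B) :
    8 * a * B * (a * u ^ 2 + B * v ^ 2 - v * u)
      = (-1 - δ) * ((δ - 1) * u + 2 * B * v) * (2 * a * u + (δ - 1) * v) := by
  linear_combination (2 * a * u ^ 2 + 2 * B * v ^ 2 - (1 - δ) * u * v) * hδ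

section CaseLemmas
variable {F : Type*} [Field F] [Fintype F] {q : ℕ}

lemma case_deg (hq : 3 ≤ q) (hF : Fintype.card F = q ^ 2)
    (hadd : ∀ x y : F, (x + y) ^ q = x ^ q + y ^ q)
    (hqq : ∀ x : F, (x ^ q) ^ q = x)
    (h2 : (2 : F) ≠ 0)
    (a b e : F) (ha : a ≠ 0) (h4 : 4 * a * a ^ q = 1) (he : e ^ q = e) :
    {x : F | a * x ^ 2 + a ^ q * x ^ (2 * q) - x ^ (q + 1) + b * x + b ^ q * x ^ q + e = 0}.ncard
      ∈ ({0, q, 2 * q} : Set ℕ) := by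
  classical
  set R : Set F :=
    {x : F | a * x ^ 2 + a ^ q * x ^ (2 * q) - x ^ (q + 1) + b * x + b ^ q * x ^ q + e = 0}
    with hRdef
  have hneg := neg_pow_q hq hadd
  have hsub : ∀ x y : F, (x - y) ^ q = x ^ q - y ^ q := by
    intro x y; rw [sub_eq_add_neg, hadd, hneg, ← sub_eq_add_neg]
  have h2q : (2 : F) ^ q = 2 := by
    have h := hadd 1 1; norm_num at h; exact h
  have hx2q : ∀ x : F, x ^ (2 * q) = (x ^ q) ^ 2 := by
    intro x; rw [← pow_mul, mul_comm]
  have hxq1 : ∀ x : F, x ^ (q + 1) = x ^ q * x := fun x => pow_succ x q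
  set f : F →+ F := AddMonoidHom.mk' (fun x => 2 * a * x - x ^ q)
    (fun x y => by show 2 * a * (x + y) - (x + y) ^ q = _; rw [hadd]; ring) with hfdef
  have hfx : ∀ x, f x = 2 * a * x - x ^ q := fun _ => rfl
  have hfq : ∀ x, (f x) ^ q = 2 * a ^ q * x ^ q - x := by
    intro x
    rw [hfx, hsub, mul_pow, mul_pow, h2q, hqq]
  have hexp0 : ∀ x : F, (2 * a * x - x ^ q) ^ q = 2 * a ^ q * x ^ q - x := by
    intro x; rw [hsub, mul_pow, mul_pow, h2q, hqq]
  have hkeyd : ∀ x : F, 2 * (a * x ^ 2 + a ^ q * x ^ (2 * q) - x ^ (q + 1))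
      = -((f x) ^ q * (f x)) := by
    intro x
    rw [hfq, hfx, hx2q, hxq1]
    linear_combination (x * x ^ q) * h4
  have hmem : ∀ x : F, x ∈ R ↔ ((2 * a * x - x ^ q) ^ q * (2 * a * x - x ^ q)
      = 2 * b * x + 2 * b ^ q * x ^ q + 2 * e) := by
    intro x
    have hfeq : (f x) ^ q * (f x) = (2 * a * x - x ^ q) ^ q * (2 * a * x - x ^ q) := rfl
    rw [hRdef, Set.mem_setOf_eq, ← hfeq]
    constructor
    · intro h; linear_combination hkeyd x - 2 * h
    · intro h
      have h0 : (2 : F) * (a * x ^ 2 + a ^ q * x ^ (2 * q) - x ^ (q + 1)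
          + b * x + b ^ q * x ^ q + e) = 0 := by linear_combination hkeyd x - h
      exact (mul_eq_zero.mp h0).resolve_left h2
  set U : Set F := {u : F | (-2 * a) * u ^ q = u} with hUdef
  have hUcard : U.ncard = q := by
    apply ker_card hq hF hadd hqq
    rw [show ((-2 : F) * a) ^ q = -(2 * a ^ q) by
      rw [show ((-2 : F) * a) = -(2 * a) by ring, hneg, mul_pow, h2q]]
    linear_combination h4
  have hUmem : ∀ x : F, f x ∈ U := by
    intro x
    show (-2 * a) * (f x) ^ q = f x
    rw [hfq, hfx]
    linear_combination (-x ^ q) * h4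
  have hkerset : {x : F | f x = 0} = {x : F | (2 * a)⁻¹ * x ^ q = x} := by
    ext x
    simp only [Set.mem_setOf_eq, hfx, sub_eq_zero]
    rw [inv_mul_eq_div, div_eq_iff (mul_ne_zero h2 ha)]
    constructor <;> intro h <;> linear_combination -h
  have hkercard : {x : F | f x = 0}.ncard = q := by
    rw [hkerset]
    apply ker_card hq hF hadd hqq
    have h1 : ((2 * a)⁻¹ : F) ^ q = (2 * a ^ q)⁻¹ := by rw [inv_pow, mul_pow, h2q]
    rw [h1, ← mul_inv, inv_eq_one]
    linear_combination h4
  have hrangesub : Set.range ⇑f ⊆ U := by rintro u ⟨x, rfl⟩; exact hUmem x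
  have hrangecard : (Set.range ⇑f).ncard = q := by
    have hcard := addhom_card f
    rw [Nat.card_eq_fintype_card, hF, hkercard, Nat.card_coe_set_eq] at hcard
    have h5 : q * q = (Set.range ⇑f).ncard * q := by rw [← pow_two]; exact hcard
    exact (Nat.eq_of_mul_eq_mul_right (by omega) h5.symm)
  have hrangeU : Set.range ⇑f = U :=
    Set.eq_of_subset_of_ncard_le hrangesub (by rw [hUcard, hrangecard])
  have hrex : ∃ r : F, f r = 0 ∧ r ≠ 0 := by
    by_contra hcon
    push_neg at hcon
    have hsub1 : {x : F | f x = 0} ⊆ {0} := by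
      intro x hx; exact hcon x hx.out
    have := Set.ncard_le_ncard hsub1 (Set.finite_singleton 0)
    rw [hkercard, Set.ncard_singleton] at this
    omega
  obtain ⟨r, hr0, hrne⟩ := hrex
  have hrq : r ^ q = 2 * a * r := by
    have h := hr0; rw [hfx] at h; linear_combination -h
  have hKr : ∀ k : F, k ^ q = k → f (k * r) = 0 := by
    intro k hk; rw [hfx, mul_pow, hk, hrq]; ring
  have hkerKr : {x : F | f x = 0} = (fun k => k * r) '' {k : F | k ^ q = k} := by
    refine (Set.eq_of_subset_of_ncard_le ?_ ?_ (Set.toFinite _)).symm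
    · rintro x ⟨k, hk, rfl⟩; exact hKr k hk.out
    · rw [Set.ncard_image_of_injective _ (fun k1 k2 h => mul_right_cancel₀ hrne h),
        card_fix hq hF hadd hqq, hkercard]
  by_cases hT : b * r + b ^ q * r ^ q = 0
  · -- degenerate linear part
    have hb : 2 * a * b ^ q = -b := by
      rw [hrq] at hT
      have h1 : r * (b + 2 * a * b ^ q) = 0 := by linear_combination hT
      have h2' := (mul_eq_zero.mp h1).resolve_left hrne
      linear_combination h2'
    set Z : Set F := {u : F | u ^ q * u + 2 * b ^ q * u - 2 * e = 0} with hZdef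
    have hRZ : R = ⇑f ⁻¹' Z := by
      ext x
      rw [hmem x]
      have hZm : x ∈ ⇑f ⁻¹' Z ↔ ((2 * a * x - x ^ q) ^ q * (2 * a * x - x ^ q)
          + 2 * b ^ q * (2 * a * x - x ^ q) - 2 * e = 0) := Iff.rfl
      rw [hZm, hexp0]
      constructor
      · intro h; linear_combination h + 2 * x * hb
      · intro h; linear_combination h - 2 * x * hb
    have hM2 : (Z ∩ U).ncard ≤ 2 := by
      refine le_trans (Set.ncard_le_ncard ?_ (Set.toFinite _))
        (bound_quad 1 (2 * b) (4 * a * e) one_ne_zero)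
      rintro u ⟨hz, hu⟩
      have hz' : u ^ q * u + 2 * b ^ q * u - 2 * e = 0 := hz.out
      have hu' : (-2 * a) * u ^ q = u := hu.out
      show (1 : F) * u ^ 2 + 2 * b * u + 4 * a * e = 0
      linear_combination (-2 * a) * hz' - u * hu' + 2 * u * hb
    have hcount : R.ncard = q * (Z ∩ U).ncard := by
      rw [hRZ, addhom_preimage_card f Z, hkercard, hrangeU]
    set M := (Z ∩ U).ncard with hM
    rw [hcount]
    simp only [Set.mem_insert_iff, Set.mem_singleton_iff]
    interval_cases M <;> omega
  · -- nondegenerate linear part : count is q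
    have hinjOn : Set.InjOn f R := by
      intro x hx y hy hxy
      have hker0 : (x - y) ∈ {x : F | f x = 0} := by
        show f (x - y) = 0
        rw [map_sub, hxy, sub_self]
      rw [hkerKr] at hker0
      obtain ⟨k, hk, hkr0⟩ := hker0
      have hkK : k ^ q = k := hk.out
      have hkr : k * r = x - y := hkr0
      have hdq : k * r ^ q = x ^ q - y ^ q := by
        rw [← hsub, ← hkr, mul_pow, hkK]
      have hmx := (hmem x).mp hx
      have hmy := (hmem y).mp hy
      have hxy' : 2 * a * x - x ^ q = 2 * a * y - y ^ q := hxy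
      have hxyq : 2 * a ^ q * x ^ q - x = 2 * a ^ q * y ^ q - y := by
        rw [← hexp0, ← hexp0, hxy']
      rw [hexp0] at hmx hmy
      have hzero : 2 * k * (b * r + b ^ q * r ^ q) = 0 := by
        linear_combination hmy - hmx + 2 * b * hkr + 2 * b ^ q * hdq
          + (2 * a * x - x ^ q) * hxyq + (2 * a ^ q * y ^ q - y) * hxy'
      have hk0 : k = 0 := by
        by_contra hkne
        exact (mul_ne_zero (mul_ne_zero h2 hkne) hT) hzero
      have hxy0 : x - y = 0 := by linear_combination -hkr + r * hk0
      exact sub_eq_zero.mp hxy0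
    have himg : ⇑f '' R = U := by
      apply Set.Subset.antisymm
      · exact le_trans (Set.image_subset_range _ _) (le_of_eq hrangeU)
      · intro u hu
        have : u ∈ Set.range ⇑f := by rw [hrangeU]; exact hu
        obtain ⟨x₁, hx₁⟩ := this
        have huq : (u ^ q * u - 2 * b * x₁ - 2 * b ^ q * x₁ ^ q - 2 * e) ^ q
            = u ^ q * u - 2 * b * x₁ - 2 * b ^ q * x₁ ^ q - 2 * e := by
          rw [hsub, hsub, hsub, mul_pow, hqq, mul_pow, mul_pow, h2q, mul_pow, mul_pow, h2q,
            hqq, hqq, mul_pow, h2q, he]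
          ring
        have hTq : (2 * (b * r + b ^ q * r ^ q)) ^ q = 2 * (b * r + b ^ q * r ^ q) := by
          rw [mul_pow, h2q, hadd, mul_pow, mul_pow, hqq, hqq]
          ring
        set k : F := (u ^ q * u - 2 * b * x₁ - 2 * b ^ q * x₁ ^ q - 2 * e)
          / (2 * (b * r + b ^ q * r ^ q)) with hkdef
        have hkK : k ^ q = k := by
          rw [hkdef, div_pow, huq, hTq]
        have h2T : 2 * (b * r + b ^ q * r ^ q) ≠ 0 := mul_ne_zero h2 hT
        have hk2 : 2 * (b * r + b ^ q * r ^ q) * k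
            = u ^ q * u - 2 * b * x₁ - 2 * b ^ q * x₁ ^ q - 2 * e := by
          rw [hkdef]; field_simp
        have hfeq : f (x₁ + k * r) = u := by
          rw [map_add, hKr k hkK, add_zero, hx₁]
        refine ⟨x₁ + k * r, ?_, hfeq⟩
        rw [hmem]
        have hfval : 2 * a * (x₁ + k * r) - (x₁ + k * r) ^ q = u := hfeq
        rw [hfval]
        have hexp1 : (x₁ + k * r) ^ q = x₁ ^ q + k * r ^ q := by
          rw [hadd, mul_pow, hkK]
        rw [hexp1]
        linear_combination -hk2
    have : R.ncard = q := by
      rw [← Set.ncard_image_of_injOn hinjOn, himg, hUcard]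
    rw [this]
    simp only [Set.mem_insert_iff, Set.mem_singleton_iff]
    tauto

end CaseLemmas

section CaseLemmas2
variable {F : Type*} [Field F] [Fintype F] {q : ℕ}

lemma case_nondeg_sq (hq : 3 ≤ q) (hF : Fintype.card F = q ^ 2)
    (hadd : ∀ x y : F, (x + y) ^ q = x ^ q + y ^ q)
    (hqq : ∀ x : F, (x ^ q) ^ q = x)
    (h2 : (2 : F) ≠ 0)
    (a δ s : F) (ha : a ≠ 0) (hδ : δ ^ 2 = 1 - 4 * a * a ^ q) (hδ0 : δ ≠ 0)
    (hδq : δ ^ q = δ) (hs : s ^ q = s) :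
    {x : F | a * x ^ 2 + a ^ q * x ^ (2 * q) - x ^ (q + 1) = s}.ncard
      ∈ ({1, q + 1} : Set ℕ) := by
  classical
  have hneg := neg_pow_q hq hadd
  have hsub : ∀ x y : F, (x - y) ^ q = x ^ q - y ^ q := by
    intro x y; rw [sub_eq_add_neg, hadd, hneg, ← sub_eq_add_neg]
  have h2q : (2 : F) ^ q = 2 := by
    have h := hadd 1 1; norm_num at h; exact h
  have hx2q : ∀ x : F, x ^ (2 * q) = (x ^ q) ^ 2 := by
    intro x; rw [← pow_mul, mul_comm]
  have hxq1 : ∀ x : F, x ^ (q + 1) = x ^ q * x := fun x => pow_succ x q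
  have haq : a ^ q ≠ 0 := pow_ne_zero _ ha
  have h4F : (4 : F) ≠ 0 := by
    rw [show (4 : F) = 2 * 2 by norm_num]; exact mul_ne_zero h2 h2
  have h8F : (8 : F) ≠ 0 := by
    rw [show (8 : F) = 2 * 4 by norm_num]; exact mul_ne_zero h2 h4F
  have h8aa : 8 * a * a ^ q ≠ 0 := mul_ne_zero (mul_ne_zero h8F ha) haq
  have hδ1 : δ ≠ 1 := by
    intro h; rw [h] at hδ
    have h0 : 4 * a * a ^ q = 0 := by linear_combination hδ
    exact mul_ne_zero (mul_ne_zero h4F ha) haq h0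
  have hδm1 : δ ≠ -1 := by
    intro h; rw [h] at hδ
    have h0 : 4 * a * a ^ q = 0 := by linear_combination hδ
    exact mul_ne_zero (mul_ne_zero h4F ha) haq h0
  have hc : (-1 - δ : F) ≠ 0 := by
    intro h; exact hδm1 (by linear_combination -h)
  have hδs1 : (δ - 1 : F) ≠ 0 := sub_ne_zero.mpr hδ1
  have h8q : (8 : F) ^ q = 8 := by
    rw [show (8 : F) = 2 ^ 3 by norm_num, ← pow_mul, mul_comm 3 q, pow_mul, h2q]
  set φ : F → F := fun x => 2 * a * x + (δ - 1) * x ^ q with hφdef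
  have hφx : ∀ x, φ x = 2 * a * x + (δ - 1) * x ^ q := fun _ => rfl
  have hφq : ∀ x, (φ x) ^ q = 2 * a ^ q * x ^ q + (δ - 1) * x := by
    intro x
    rw [hφx, hadd, mul_pow, mul_pow, h2q, mul_pow, hsub, hδq, one_pow, hqq]
  have hkey : ∀ x : F, 8 * a * a ^ q * (a * x ^ 2 + a ^ q * x ^ (2 * q) - x ^ (q + 1))
      = (-1 - δ) * (2 * a ^ q * x ^ q + (δ - 1) * x) * (2 * a * x + (δ - 1) * x ^ q) := by
    intro x
    rw [hx2q, hxq1]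
    linear_combination key_poly a (a ^ q) δ x (x ^ q) hδ
  have hφinj : Function.Injective φ := by
    have h0 : ∀ z : F, φ z = 0 → z = 0 := by
      intro z hz
      have hz' : 2 * a * z + (δ - 1) * z ^ q = 0 := hz
      have hzq : 2 * a ^ q * z ^ q + (δ - 1) * z = 0 := by
        rw [← hφq z, hz]; exact zero_pow (by omega)
      have hzz : ((δ - 1) * (2 * δ)) * z ^ q = 0 := by
        linear_combination (δ - 1) * hz' - 2 * a * hzq + z ^ q * hδ
      have hzq0 : z ^ q = 0 :=
        (mul_eq_zero.mp hzz).resolve_left (mul_ne_zero hδs1 (mul_ne_zero h2 hδ0))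
      exact pow_eq_zero_iff (by omega) |>.mp hzq0
    intro x y hxy
    have hxy' : 2 * a * x + (δ - 1) * x ^ q = 2 * a * y + (δ - 1) * y ^ q := hxy
    have hφ0 : φ (x - y) = 0 := by
      show 2 * a * (x - y) + (δ - 1) * (x - y) ^ q = 0
      rw [hsub]
      linear_combination hxy'
    exact sub_eq_zero.mp (h0 _ hφ0)
  have hφsurj : Function.Surjective φ := Finite.injective_iff_surjective.mp hφinj
  set s' : F := 8 * a * a ^ q * s / (-1 - δ) with hs'def
  have hset : {x : F | a * x ^ 2 + a ^ q * x ^ (2 * q) - x ^ (q + 1) = s}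
      = φ ⁻¹' {u : F | u ^ (q + 1) = s'} := by
    ext x
    simp only [Set.mem_setOf_eq, Set.mem_preimage]
    rw [hxq1 (φ x), hφq x, hφx x, hs'def, eq_div_iff hc]
    constructor
    · intro h; linear_combination -hkey x + 8 * a * a ^ q * h
    · intro h
      refine mul_left_cancel₀ h8aa ?_
      linear_combination hkey x + h
  rw [hset, ncard_preimage_inj φ hφinj, Set.range_eq_univ.mpr hφsurj, Set.inter_univ]
  by_cases hs0 : s = 0
  · have hs'0 : s' = 0 := by rw [hs'def, hs0]; simp
    have hone : {u : F | u ^ (q + 1) = s'} = {0} := by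
      rw [hs'0]; ext u
      simp [pow_eq_zero_iff (show q + 1 ≠ 0 by omega)]
    rw [hone, Set.ncard_singleton]
    exact Set.mem_insert _ _
  · have hs'ne : s' ≠ 0 := div_ne_zero (mul_ne_zero h8aa hs0) hc
    have hs'K : s' ^ q = s' := by
      rw [hs'def, div_pow, mul_pow, mul_pow, mul_pow, h8q, hqq, hs,
        show (-1 - δ : F) ^ q = -1 - δ by rw [hsub, hδq, hneg, one_pow]]
      ring
    rw [norm_fiber hq hF hadd hqq s' hs'ne hs'K]
    exact Set.mem_insert_iff.mpr (Or.inr rfl)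

end CaseLemmas2

section CaseLemmas3
variable {F : Type*} [Field F] [Fintype F] {q : ℕ}

lemma case_nondeg_nsq (hq : 3 ≤ q) (hF : Fintype.card F = q ^ 2)
    (hadd : ∀ x y : F, (x + y) ^ q = x ^ q + y ^ q)
    (hqq : ∀ x : F, (x ^ q) ^ q = x)
    (h2 : (2 : F) ≠ 0)
    (a δ s : F) (ha : a ≠ 0) (hδ : δ ^ 2 = 1 - 4 * a * a ^ q) (hδ0 : δ ≠ 0)
    (hδq : δ ^ q = -δ) (hs : s ^ q = s) :
    {x : F | a * x ^ 2 + a ^ q * x ^ (2 * q) - x ^ (q + 1) = s}.ncard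
      ∈ ({q - 1, 2 * q - 1} : Set ℕ) := by
  classical
  have hneg := neg_pow_q hq hadd
  have hsub : ∀ x y : F, (x - y) ^ q = x ^ q - y ^ q := by
    intro x y; rw [sub_eq_add_neg, hadd, hneg, ← sub_eq_add_neg]
  have h2q : (2 : F) ^ q = 2 := by
    have h := hadd 1 1; norm_num at h; exact h
  have hx2q : ∀ x : F, x ^ (2 * q) = (x ^ q) ^ 2 := by
    intro x; rw [← pow_mul, mul_comm]
  have hxq1 : ∀ x : F, x ^ (q + 1) = x ^ q * x := fun x => pow_succ x q
  have haq : a ^ q ≠ 0 := pow_ne_zero _ ha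
  have h4F : (4 : F) ≠ 0 := by
    rw [show (4 : F) = 2 * 2 by norm_num]; exact mul_ne_zero h2 h2
  have h8F : (8 : F) ≠ 0 := by
    rw [show (8 : F) = 2 * 4 by norm_num]; exact mul_ne_zero h2 h4F
  have h8aa : 8 * a * a ^ q ≠ 0 := mul_ne_zero (mul_ne_zero h8F ha) haq
  have h8q : (8 : F) ^ q = 8 := by
    rw [show (8 : F) = 2 ^ 3 by norm_num, ← pow_mul, mul_comm 3 q, pow_mul, h2q]
  have hδ1 : δ ≠ 1 := by
    intro h; rw [h] at hδ
    have h0 : 4 * a * a ^ q = 0 := by linear_combination hδ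
    exact mul_ne_zero (mul_ne_zero h4F ha) haq h0
  have hδm1 : δ ≠ -1 := by
    intro h; rw [h] at hδ
    have h0 : 4 * a * a ^ q = 0 := by linear_combination hδ
    exact mul_ne_zero (mul_ne_zero h4F ha) haq h0
  have hc : (-1 - δ : F) ≠ 0 := by
    intro h; exact hδm1 (by linear_combination -h)
  have hδs1 : (δ - 1 : F) ≠ 0 := sub_ne_zero.mpr hδ1
  have hδp1 : (δ + 1 : F) ≠ 0 := by
    intro h; exact hδm1 (by linear_combination h)
  have h1δ : (1 - δ : F) ≠ 0 := sub_ne_zero.mpr (Ne.symm hδ1)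
  have hkey : ∀ x : F, 8 * a * a ^ q * (a * x ^ 2 + a ^ q * x ^ (2 * q) - x ^ (q + 1))
      = (-1 - δ) * (2 * a ^ q * x ^ q + (δ - 1) * x) * (2 * a * x + (δ - 1) * x ^ q) := by
    intro x
    rw [hx2q, hxq1]
    linear_combination key_poly a (a ^ q) δ x (x ^ q) hδ
  set U : Set F := {u : F | (-(2 * a) / (δ + 1)) * u ^ q = u} with hUdef
  set W : Set F := {w : F | ((δ - 1) / (2 * a)) * w ^ q = w} with hWdef
  have hβUq : (-(2 * a) / (δ + 1) : F) ^ q = -(2 * a ^ q) / (1 - δ) := by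
    rw [div_pow, hneg, mul_pow, h2q, hadd, hδq, one_pow,
      show (-δ + 1 : F) = 1 - δ by ring]
  have hβWq : ((δ - 1) / (2 * a) : F) ^ q = (-δ - 1) / (2 * a ^ q) := by
    rw [div_pow, hsub, hδq, one_pow, mul_pow, h2q]
  have hUcard : U.ncard = q := by
    apply ker_card hq hF hadd hqq
    rw [hβUq, div_mul_div_comm, div_eq_one_iff_eq (mul_ne_zero hδp1 h1δ)]
    linear_combination hδ
  have hWcard : W.ncard = q := by
    apply ker_card hq hF hadd hqq
    rw [hβWq, div_mul_div_comm, div_eq_one_iff_eq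
      (mul_ne_zero (mul_ne_zero h2 ha) (mul_ne_zero h2 haq))]
    linear_combination -hδ
  have hUmem : ∀ x : F, (2 * a * x + (δ - 1) * x ^ q) ∈ U := by
    intro x
    show (-(2 * a) / (δ + 1)) * (2 * a * x + (δ - 1) * x ^ q) ^ q
      = 2 * a * x + (δ - 1) * x ^ q
    rw [hadd, mul_pow, mul_pow, h2q, mul_pow, hsub, hδq, one_pow, hqq,
      div_mul_eq_mul_div, div_eq_iff hδp1]
    linear_combination (-x ^ q) * hδ
  have hWmem : ∀ x : F, ((δ - 1) * x + 2 * a ^ q * x ^ q) ∈ W := by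
    intro x
    show ((δ - 1) / (2 * a)) * ((δ - 1) * x + 2 * a ^ q * x ^ q) ^ q
      = (δ - 1) * x + 2 * a ^ q * x ^ q
    rw [hadd, mul_pow, hsub, hδq, one_pow, mul_pow, mul_pow, h2q, hqq, hqq,
      div_mul_eq_mul_div, div_eq_iff (mul_ne_zero h2 ha)]
    linear_combination (-x ^ q) * hδ
  set Φ : F → F × F := fun x =>
    (2 * a * x + (δ - 1) * x ^ q, (δ - 1) * x + 2 * a ^ q * x ^ q) with hΦdef
  have hΦinj : Function.Injective Φ := by
    intro x y h
    have h1 : 2 * a * x + (δ - 1) * x ^ q = 2 * a * y + (δ - 1) * y ^ q :=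
      congrArg Prod.fst h
    have h2' : (δ - 1) * x + 2 * a ^ q * x ^ q = (δ - 1) * y + 2 * a ^ q * y ^ q :=
      congrArg Prod.snd h
    have hz1 : 2 * a * (x - y) + (δ - 1) * (x - y) ^ q = 0 := by
      rw [hsub]; linear_combination h1
    have hz2 : (δ - 1) * (x - y) + 2 * a ^ q * (x - y) ^ q = 0 := by
      rw [hsub]; linear_combination h2'
    have hzz : (-2 * δ * (δ - 1)) * (x - y) = 0 := by
      linear_combination 2 * a ^ q * hz1 - (δ - 1) * hz2 + (-(x - y)) * hδ
    have hm2δ : (-2 * δ * (δ - 1) : F) ≠ 0 := by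
      refine mul_ne_zero (mul_ne_zero ?_ hδ0) hδs1
      simpa using h2
    exact sub_eq_zero.mp ((mul_eq_zero.mp hzz).resolve_left hm2δ)
  have hrangesub : Set.range Φ ⊆ U ×ˢ W := by
    rintro p ⟨x, rfl⟩
    exact ⟨hUmem x, hWmem x⟩
  have hrangecard : (Set.range Φ).ncard = q ^ 2 := by
    rw [← Set.image_univ, Set.ncard_image_of_injective _ hΦinj, Set.ncard_univ,
      Nat.card_eq_fintype_card, hF]
  have hrange : Set.range Φ = U ×ˢ W := by
    apply Set.eq_of_subset_of_ncard_le hrangesub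
    rw [hrangecard, ncard_sprod, hUcard, hWcard, pow_two]
  set T : Set (F × F) := {p : F × F | (-1 - δ) * (p.2 * p.1) = 8 * a * a ^ q * s} with hTdef
  have hset : {x : F | a * x ^ 2 + a ^ q * x ^ (2 * q) - x ^ (q + 1) = s} = Φ ⁻¹' T := by
    ext x
    simp only [Set.mem_setOf_eq, Set.mem_preimage, hTdef, hΦdef]
    constructor
    · intro h; linear_combination -hkey x + 8 * a * a ^ q * h
    · intro h
      refine mul_left_cancel₀ h8aa ?_
      linear_combination hkey x + h
  rw [hset, ncard_preimage_inj Φ hΦinj, hrange]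
  have h0U : (0 : F) ∈ U := by
    show _ * (0 : F) ^ q = 0
    rw [zero_pow (by omega : q ≠ 0), mul_zero]
  have h0W : (0 : F) ∈ W := by
    show _ * (0 : F) ^ q = 0
    rw [zero_pow (by omega : q ≠ 0), mul_zero]
  by_cases hs0 : s = 0
  · have hsplit : T ∩ U ×ˢ W = ({(0 : F)} ×ˢ W) ∪ ((U \ {0}) ×ˢ ({0} : Set F)) := by
      ext ⟨u, w⟩
      simp only [Set.mem_inter_iff, Set.mem_prod, Set.mem_union, Set.mem_diff,
        Set.mem_singleton_iff, hTdef, Set.mem_setOf_eq, hs0, mul_zero]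
      constructor
      · rintro ⟨hT, hU', hW'⟩
        have hw0 : w * u = 0 := by
          rcases mul_eq_zero.mp hT with h | h
          · exact absurd h hc
          · exact h
        by_cases hu0 : u = 0
        · left; exact ⟨hu0, hW'⟩
        · right
          refine ⟨⟨hU', hu0⟩, ?_⟩
          rcases mul_eq_zero.mp hw0 with h | h
          · exact h
          · exact absurd h hu0
      · rintro (⟨rfl, hW'⟩ | ⟨⟨hU', hune⟩, rfl⟩)
        · exact ⟨by ring, h0U, hW'⟩
        · exact ⟨by ring, hU', h0W⟩
    have hdisj : Disjoint (({(0 : F)} ×ˢ W)) ((U \ {0}) ×ˢ ({0} : Set F)) := by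
      rw [Set.disjoint_left]
      rintro ⟨u, w⟩ ⟨hu1, _⟩ ⟨⟨_, hu2⟩, _⟩
      exact hu2 hu1
    rw [hsplit, Set.ncard_union_eq hdisj (Set.toFinite _) (Set.toFinite _),
      ncard_sprod, ncard_sprod, Set.ncard_singleton, hWcard,
      Set.ncard_diff_singleton_of_mem h0U, hUcard]
    simp only [Set.mem_insert_iff, Set.mem_singleton_iff]
    right; omega
  · -- s ≠ 0 : count is q - 1
    have hk8s : 8 * a * a ^ q * s ≠ 0 := mul_ne_zero h8aa hs0
    set k : F := 8 * a * a ^ q * s / (-1 - δ) with hkdef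
    have hkk : (-1 - δ) * k = 8 * a * a ^ q * s := by
      rw [hkdef, mul_comm, div_mul_cancel₀ _ hc]
    have hkne : k ≠ 0 := by rw [hkdef]; exact div_ne_zero hk8s hc
    have hkq : (δ - 1) * k ^ q = 8 * a ^ q * a * s := by
      rw [hkdef, div_pow, mul_pow, mul_pow, mul_pow, h8q, hqq, hs,
        show (-1 - δ : F) ^ q = δ - 1 by rw [hsub, hδq, hneg, one_pow]; ring,
        mul_comm, div_mul_cancel₀ _ hδs1]
    have hbij : (U \ {0}).ncard = (T ∩ U ×ˢ W).ncard := by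
      apply Set.ncard_congr (fun (u : F) (_ : u ∈ U \ {0}) => ((u, k / u) : F × F))
      · rintro u ⟨huU, hune0⟩
        have hune : u ≠ 0 := fun h => hune0 (Set.mem_singleton_iff.mpr h)
        have huq' : -(2 * a) * u ^ q = (δ + 1) * u := by
          have h' : (-(2 * a) / (δ + 1)) * u ^ q = u := huU
          rw [div_mul_eq_mul_div, div_eq_iff hδp1] at h'
          linear_combination h'
        refine ⟨?_, huU, ?_⟩
        · show (-1 - δ) * ((k / u) * u) = 8 * a * a ^ q * s
          rw [div_mul_cancel₀ k hune]
          exact hkk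
        · show ((δ - 1) / (2 * a)) * (k / u) ^ q = k / u
          rw [div_pow]
          rw [div_mul_div_comm, div_eq_div_iff (mul_ne_zero (mul_ne_zero h2 ha)
            (pow_ne_zero _ hune)) hune]
          -- (δ-1) * k^q * u = 2*a*u^q * k
          linear_combination u * hkq + k * huq' - u * hkk
      · intro u v hu hv h
        exact congrArg Prod.fst h
      · rintro ⟨u, w⟩ ⟨hT', hU', hW'⟩
        have hT'' : (-1 - δ) * (w * u) = 8 * a * a ^ q * s := hT'
        have hune : u ≠ 0 := by
          rintro rfl
          rw [mul_zero, mul_zero] at hT''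
          exact hk8s hT''.symm
        refine ⟨u, ⟨hU', fun h => hune (Set.mem_singleton_iff.mp h)⟩, ?_⟩
        have hw : w = k / u := by
          rw [eq_div_iff hune]
          refine mul_left_cancel₀ hc ?_
          rw [hkk]
          exact hT''
        show (u, k / u) = (u, w)
        rw [hw]
    rw [← hbij, Set.ncard_diff_singleton_of_mem h0U, hUcard]
    exact Set.mem_insert _ _

end CaseLemmas3

theorem stmt_4 (q : ℕ) (hq : IsPrimePow q) (hodd : Odd q) (F : Type*) [Field F] [Fintype F]
    (hF : Fintype.card F = q ^ 2) (a b c : F) (ha : a ≠ 0) :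
    Set.ncard {p : F × F | p.1 ^ (q + 1) = p.2 ^ q + p.2 ∧
        p.2 = a * p.1 ^ 2 + b * p.1 + c}
      ∈ ({0, 1, q - 1, q, q + 1, 2 * q - 1, 2 * q} : Set ℕ) := by
  classical
  obtain ⟨p, n, hpp, hn, hpq⟩ := hq
  have hp' : p.Prime := Nat.prime_iff.mpr hpp
  have hq2 : 2 ≤ q := by
    rw [← hpq]
    exact Nat.one_lt_pow (by omega) hp'.two_le
  have hq3 : 3 ≤ q := by
    rcases hodd with ⟨m, hm⟩; omega
  set pc := ringChar F with hpc
  haveI hcharF : CharP F pc := ringChar.charP F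
  have hpcp : pc.Prime := CharP.char_is_prime F pc
  obtain ⟨m, _, hcard⟩ := FiniteField.card F pc
  have hpceq : pc = p := by
    have h1 : pc ∣ Fintype.card F := by
      rw [hcard]
      exact dvd_pow_self pc (by positivity)
    rw [hF, ← hpq] at h1
    have h2 : pc ∣ p := hpcp.dvd_of_dvd_pow (hpcp.dvd_of_dvd_pow (by rwa [← pow_mul] at h1))
    exact (Nat.prime_dvd_prime_iff_eq hpcp hp').mp h2
  have hpodd : pc ≠ 2 := by
    intro h
    have hdvd : p ∣ q := by rw [← hpq]; exact dvd_pow_self p (by omega)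
    rcases hodd with ⟨mm, hmm⟩
    rw [← hpceq, h] at hdvd
    omega
  haveI : Fact pc.Prime := ⟨hpcp⟩
  -- Frobenius additivity
  have hadd : ∀ x y : F, (x + y) ^ q = x ^ q + y ^ q := by
    intro x y
    rw [← hpq, ← hpceq]
    exact add_pow_char_pow x y pc n
  have hqq : ∀ x : F, (x ^ q) ^ q = x := by
    intro x
    rw [← pow_mul, show q * q = q ^ 2 by rw [pow_two], ← hF, FiniteField.pow_card]
  have h2 : (2 : F) ≠ 0 := by
    have h1 : ((2 : ℕ) : F) ≠ 0 := by
      rw [Ne, CharP.cast_eq_zero_iff F pc 2]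
      intro hdvd
      exact hpodd ((Nat.prime_dvd_prime_iff_eq hpcp Nat.prime_two).mp hdvd)
    simpa using h1
  have hneg := neg_pow_q hq3 hadd
  have hsub : ∀ x y : F, (x - y) ^ q = x ^ q - y ^ q := by
    intro x y; rw [sub_eq_add_neg, hadd, hneg, ← sub_eq_add_neg]
  have h2q : (2 : F) ^ q = 2 := by
    have h := hadd 1 1; norm_num at h; exact h
  have h4q : (4 : F) ^ q = 4 := by
    rw [show (4 : F) = 2 ^ 2 by norm_num, ← pow_mul, mul_comm 2 q, pow_mul, h2q]
  have hx2q : ∀ x : F, x ^ (2 * q) = (x ^ q) ^ 2 := by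
    intro x; rw [← pow_mul, mul_comm]
  have hxq1 : ∀ x : F, x ^ (q + 1) = x ^ q * x := fun x => pow_succ x q
  -- square roots of "real" elements
  have hsq : ∀ z : F, z ≠ 0 → z ^ q = z → ∃ d : F, d * d = z := by
    intro z hz hzK
    have hch2 : ringChar F ≠ 2 := hpodd
    have hzq1 : z ^ (q - 1) = 1 := by
      refine mul_right_cancel₀ hz ?_
      rw [one_mul, ← pow_succ, show q - 1 + 1 = q by omega, hzK]
    have hsq1 : z ^ (Fintype.card F / 2) = 1 := by
      rw [hF]
      rcases hodd with ⟨mm, hmm⟩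
      have hexp : q ^ 2 / 2 = (q - 1) * ((q + 1) / 2) := by
        subst hmm
        have hA : (2 * mm + 1) - 1 = 2 * mm := by omega
        have hB : ((2 * mm + 1) + 1) / 2 = mm + 1 := by omega
        have h2'' : (2 * mm + 1) ^ 2 = 2 * (2 * mm * (mm + 1)) + 1 := by ring
        rw [hA, hB, h2'', Nat.mul_add_div (by norm_num)]
        norm_num
      rw [hexp, pow_mul, hzq1, one_pow]
    obtain ⟨d, hd⟩ := (FiniteField.isSquare_iff hch2 hz).mpr hsq1
    exact ⟨d, hd.symm⟩
  -- reduction to a curve in one variable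
  set e : F := c ^ q + c with hedef
  have he : e ^ q = e := by
    rw [hedef, hadd, hqq]; ring
  set R : Set F :=
    {x : F | a * x ^ 2 + a ^ q * x ^ (2 * q) - x ^ (q + 1) + b * x + b ^ q * x ^ q + e = 0}
    with hRdef
  have hSR : {p : F × F | p.1 ^ (q + 1) = p.2 ^ q + p.2 ∧
      p.2 = a * p.1 ^ 2 + b * p.1 + c}.ncard = R.ncard := by
    have hexpand : ∀ x : F, (a * x ^ 2 + b * x + c) ^ q
        = a ^ q * x ^ (2 * q) + b ^ q * x ^ q + c ^ q := by
      intro x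
      rw [hadd, hadd, mul_pow, mul_pow, ← pow_mul]
    have himg : {p : F × F | p.1 ^ (q + 1) = p.2 ^ q + p.2 ∧
        p.2 = a * p.1 ^ 2 + b * p.1 + c}
        = (fun x : F => (x, a * x ^ 2 + b * x + c)) '' R := by
      ext ⟨x, y⟩
      simp only [Set.mem_setOf_eq, Set.mem_image, Prod.mk.injEq]
      constructor
      · rintro ⟨h1, rfl⟩
        refine ⟨x, ?_, rfl, rfl⟩
        show a * x ^ 2 + a ^ q * x ^ (2 * q) - x ^ (q + 1) + b * x + b ^ q * x ^ q + e = 0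
        rw [hexpand] at h1
        rw [hedef]
        linear_combination -h1
      · rintro ⟨x', hx', rfl, rfl⟩
        have hx'' : a * x' ^ 2 + a ^ q * x' ^ (2 * q) - x' ^ (q + 1) + b * x' + b ^ q * x' ^ q
            + e = 0 := hx'
        refine ⟨?_, rfl⟩
        rw [hexpand, hedef] at *
        linear_combination -hx''
    rw [himg, Set.ncard_image_of_injective _ (fun x y h => congrArg Prod.fst h)]
  rw [hSR]
  simp only [Set.mem_insert_iff, Set.mem_singleton_iff]
  by_cases hD : (1 : F) - 4 * a * a ^ q = 0
  · -- degenerate conic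
    have h4 : 4 * a * a ^ q = 1 := by linear_combination -hD
    have hmem := case_deg hq3 hF hadd hqq h2 a b e ha h4 he
    simp only [Set.mem_insert_iff, Set.mem_singleton_iff] at hmem
    rcases hmem with h | h | h <;> rw [h] <;> omega
  · -- nondegenerate conic : complete the square
    have hDK : ((1 : F) - 4 * a * a ^ q) ^ q = 1 - 4 * a * a ^ q := by
      rw [hsub, one_pow, mul_pow, mul_pow, h4q, hqq]
      ring
    obtain ⟨δ, hδδ⟩ := hsq _ hD hDK
    have hδ : δ ^ 2 = 1 - 4 * a * a ^ q := by rw [pow_two]; exact hδδ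
    have hδ0 : δ ≠ 0 := by
      rintro rfl
      rw [show (0 : F) ^ 2 = 0 by ring] at hδ
      exact hD hδ.symm
    have hδpm : δ ^ q = δ ∨ δ ^ q = -δ := by
      have hsq2 : (δ ^ q) ^ 2 = δ ^ 2 := by
        rw [pow_right_comm δ q 2, hδ, hDK, ← hδ]
      have hfac : (δ ^ q - δ) * (δ ^ q + δ) = 0 := by linear_combination hsq2
      rcases mul_eq_zero.mp hfac with h | h
      · left; linear_combination h
      · right; linear_combination h
    -- find the shift t
    have ginj : Function.Injective (fun t : F => 2 * a * t - t ^ q) := by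
      intro t1 t2 h
      have h' : 2 * a * t1 - t1 ^ q = 2 * a * t2 - t2 ^ q := h
      have hz : 2 * a * (t1 - t2) - (t1 - t2) ^ q = 0 := by
        rw [hsub]; linear_combination h'
      set z := t1 - t2 with hzdef
      have hzq : z ^ q = 2 * a * z := by linear_combination -hz
      have hzqq := hqq z
      rw [hzq, mul_pow, mul_pow, h2q, hzq] at hzqq
      have hDz : ((1 : F) - 4 * a * a ^ q) * z = 0 := by linear_combination -hzqq
      have hz0 : z = 0 := (mul_eq_zero.mp hDz).resolve_left hD
      exact sub_eq_zero.mp hz0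
    obtain ⟨t, ht⟩ := Finite.injective_iff_surjective.mp ginj (-b)
    have ht' : 2 * a * t - t ^ q = -b := ht
    have htq : 2 * a ^ q * t ^ q - t = -b ^ q := by
      have h' := congrArg (fun z : F => z ^ q) ht'
      rw [hsub, mul_pow, mul_pow, h2q, hqq, hneg] at h'
      exact h'
    set s : F := -(a * t ^ 2 + a ^ q * (t ^ q) ^ 2 - t ^ q * t + b * t + b ^ q * t ^ q + e)
      with hsdef
    have hsK : s ^ q = s := by
      rw [hsdef, hneg, hadd, hadd, hadd, hsub, hadd, mul_pow, mul_pow, mul_pow, mul_pow,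
        mul_pow, hqq, hqq, hqq, pow_right_comm t 2 q, pow_right_comm (t ^ q) 2 q, hqq, he]
      ring
    have hshift : ∀ x : F, a * (x + t) ^ 2 + a ^ q * (x + t) ^ (2 * q) - (x + t) ^ (q + 1)
        + b * (x + t) + b ^ q * (x + t) ^ q + e
        = (a * x ^ 2 + a ^ q * x ^ (2 * q) - x ^ (q + 1)) - s := by
      intro x
      have h1 : (x + t) ^ q = x ^ q + t ^ q := hadd x t
      have h2' : (x + t) ^ (2 * q) = (x ^ q + t ^ q) ^ 2 := by rw [hx2q, h1]
      have h3 : (x + t) ^ (q + 1) = (x ^ q + t ^ q) * (x + t) := by rw [hxq1, h1]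
      rw [h2', h3, h1, hx2q x, hxq1 x]
      linear_combination x * ht' + x ^ q * htq + hsdef
    set R' : Set F := {x : F | a * x ^ 2 + a ^ q * x ^ (2 * q) - x ^ (q + 1) = s} with hR'def
    have himage : R = (fun x : F => x + t) '' R' := by
      ext y
      simp only [hRdef, hR'def, Set.mem_setOf_eq, Set.mem_image]
      constructor
      · intro hy
        refine ⟨y - t, ?_, by ring⟩
        have hsh := hshift (y - t)
        rw [sub_add_cancel] at hsh
        show a * (y - t) ^ 2 + a ^ q * (y - t) ^ (2 * q) - (y - t) ^ (q + 1) = s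
        linear_combination hy - hsh
      · rintro ⟨x, hx, rfl⟩
        have hx' : a * x ^ 2 + a ^ q * x ^ (2 * q) - x ^ (q + 1) = s := hx
        linear_combination hshift x + hx'
    have htinj : Function.Injective (fun x : F => x + t) := by
      intro u v h
      have := congrArg (fun z : F => z - t) h
      simpa using this
    have hRR' : R.ncard = R'.ncard := by
      rw [himage, Set.ncard_image_of_injective _ htinj]
    rw [hRR']
    rcases hδpm with hδq | hδq
    · have hmem := case_nondeg_sq hq3 hF hadd hqq h2 a δ s ha hδ hδ0 hδq hsK
      simp only [Set.mem_insert_iff, Set.mem_singleton_iff] at hmem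
      rcases hmem with h | h <;> rw [h] <;> omega
    · have hmem := case_nondeg_nsq hq3 hF hadd hqq h2 a δ s ha hδ hδ0 hδq hsK
      simp only [Set.mem_insert_iff, Set.mem_singleton_iff] at hmem
      rcases hmem with h | h <;> rw [h] <;> omega
end

section
/- Let q be an even power of 2 (i.e. q = 2^e, e ≥ 1) and let F be the finite field with q² elements. For every a, b, c ∈ F with a ≠ 0, the cardinality of the set {(x,y) ∈ F×F : x^(q+1) = y^q + y and y = a·x² + b·x + c} belongs to the set {1, q−1, q+1, 2q−1}. -/
open Finset



-- test group counting lemma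
lemma units_count {F : Type*} [Field F] [Fintype F] {q : ℕ} (hq : 2 ≤ q)
    (hcard : Fintype.card F = q^2) :
    Nat.card (MonoidHom.ker (powMonoidHom (q-1) : Fˣ →* Fˣ)) = q - 1 ∧
    MonoidHom.range (powMonoidHom (q-1) : Fˣ →* Fˣ)
      = MonoidHom.ker (powMonoidHom (q+1) : Fˣ →* Fˣ) ∧
    Nat.card (MonoidHom.ker (powMonoidHom (q+1) : Fˣ →* Fˣ)) = q + 1 := by
  classical
  set ψ : Fˣ →* Fˣ := powMonoidHom (q-1) with hψ
  set φ : Fˣ →* Fˣ := powMonoidHom (q+1) with hφ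
  have cardG : Nat.card Fˣ = q^2 - 1 := by
    rw [Nat.card_eq_fintype_card, Fintype.card_units, hcard]
  have bound : ∀ n : ℕ, 0 < n →
      Nat.card (MonoidHom.ker (powMonoidHom n : Fˣ →* Fˣ)) ≤ n := by
    intro n hn
    have : Nat.card (MonoidHom.ker (powMonoidHom n : Fˣ →* Fˣ))
        = #{u : Fˣ | u ^ n = 1} := by
      rw [Nat.card_eq_fintype_card, Fintype.card_subtype]
      congr 1
      ext u
      simp [MonoidHom.mem_ker, powMonoidHom_apply]
    rw [this]
    exact IsCyclic.card_pow_eq_one_le hn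
  have hsub : MonoidHom.range ψ ≤ MonoidHom.ker φ := by
    rintro x ⟨u, rfl⟩
    simp only [MonoidHom.mem_ker, hψ, hφ, powMonoidHom_apply]
    rw [← pow_mul]
    have hqq : (q-1)*(q+1) = q^2 - 1 := by
      rcases Nat.exists_eq_add_of_le hq with ⟨k, rfl⟩
      have e1 : 2 + k - 1 = k + 1 := by omega
      rw [e1]
      symm; apply Nat.sub_eq_of_eq_add; ring
    rw [hqq, ← cardG]
    exact pow_card_eq_one'
  have hmul : Nat.card (MonoidHom.range ψ) * Nat.card (MonoidHom.ker ψ) = q^2 - 1 := by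
    rw [← cardG, Subgroup.card_eq_card_quotient_mul_card_subgroup (MonoidHom.ker ψ)]
    congr 1
    exact (Nat.card_congr (QuotientGroup.quotientKerEquivRange ψ).toEquiv).symm
  have h1 : Nat.card (MonoidHom.ker ψ) ≤ q - 1 := bound _ (by omega)
  have h2 : Nat.card (MonoidHom.ker φ) ≤ q + 1 := bound _ (by omega)
  have h3 : Nat.card (MonoidHom.range ψ) ≤ Nat.card (MonoidHom.ker φ) :=
    Subgroup.card_le_of_le hsub
  have hqq : (q-1)*(q+1) = q^2 - 1 := by
    rcases Nat.exists_eq_add_of_le hq with ⟨k, rfl⟩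
    have e1 : 2 + k - 1 = k + 1 := by omega
    rw [e1]
    symm; apply Nat.sub_eq_of_eq_add; ring
  have hB : Nat.card (MonoidHom.range ψ) ≤ q + 1 := h3.trans h2
  have hA : Nat.card (MonoidHom.ker ψ) = q - 1 := by
    refine le_antisymm h1 ?_
    have step : (q+1) * (q-1) ≤ (q+1) * Nat.card (MonoidHom.ker ψ) := by
      calc (q+1)*(q-1) = (q-1)*(q+1) := by ring
        _ = Nat.card (MonoidHom.range ψ) * Nat.card (MonoidHom.ker ψ) := by rw [hmul, hqq]
        _ ≤ (q+1) * Nat.card (MonoidHom.ker ψ) := Nat.mul_le_mul_right _ hB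
    exact Nat.le_of_mul_le_mul_left step (by omega)
  have hBeq : Nat.card (MonoidHom.range ψ) = q + 1 := by
    have : Nat.card (MonoidHom.range ψ) * (q-1) = (q+1) * (q-1) := by
      conv_lhs => rw [← hA]
      rw [hmul, ← hqq]; ring
    have hq1 : 0 < q - 1 := by omega
    exact Nat.eq_of_mul_eq_mul_right hq1 this
  have hker : Nat.card (MonoidHom.ker ψ) = q - 1 ∧
      Nat.card (MonoidHom.range ψ) = q + 1 := ⟨hA, hBeq⟩
  have hrange : MonoidHom.range ψ = MonoidHom.ker φ := by
    apply Subgroup.eq_of_le_of_card_ge hsub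
    rw [hker.2]; exact h2
  exact ⟨hker.1, hrange, by rw [← hrange, hker.2]⟩

def powOneEquiv (F : Type*) [Field F] (n : ℕ) (hn : n ≠ 0) :
    {t : F | t^n = 1} ≃ (MonoidHom.ker (powMonoidHom n : Fˣ →* Fˣ)) where
  toFun x := ⟨Units.mk0 x.1 (fun h => one_ne_zero (α := F)
      (by rw [← x.2, h, zero_pow hn])), by
    rw [MonoidHom.mem_ker, powMonoidHom_apply]
    ext
    push_cast
    exact x.2⟩
  invFun u := ⟨((u.1 : Fˣ) : F), by
    have h := u.2
    rw [MonoidHom.mem_ker, powMonoidHom_apply] at h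
    have := congrArg Units.val h
    simpa using this⟩
  left_inv x := by ext; simp
  right_inv u := by ext; simp

lemma M_ncard {F : Type*} [Field F] [Fintype F] {q : ℕ} (hq : 2 ≤ q)
    (hcard : Fintype.card F = q^2) : {t : F | t^(q+1) = 1}.ncard = q + 1 := by
  rw [← Nat.card_coe_set_eq, Nat.card_congr (powOneEquiv F (q+1) (by omega))]
  exact (units_count hq hcard).2.2

lemma K_ncard {F : Type*} [Field F] [Fintype F] {q : ℕ} (hq : 2 ≤ q)
    (hcard : Fintype.card F = q^2) : {u : F | u^(q-1) = 1}.ncard = q - 1 := by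
  rw [← Nat.card_coe_set_eq, Nat.card_congr (powOneEquiv F (q-1) (by omega))]
  exact (units_count hq hcard).1

lemma fiber_ncard {F : Type*} [Field F] [Fintype F] {q : ℕ} (hq : 2 ≤ q)
    (hcard : Fintype.card F = q^2) (t : F) (ht : t^(q+1) = 1) :
    {z : F | z^(q-1) = t}.ncard = q - 1 := by
  have ht0 : t ≠ 0 := by
    intro h
    rw [h, zero_pow (by omega : q+1 ≠ 0)] at ht
    exact zero_ne_one ht
  set tu : Fˣ := Units.mk0 t ht0 with htu
  have htk : tu ∈ MonoidHom.ker (powMonoidHom (q+1) : Fˣ →* Fˣ) := by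
    rw [MonoidHom.mem_ker, powMonoidHom_apply]
    ext; push_cast; exact ht
  rw [← (units_count hq hcard).2.1] at htk
  obtain ⟨z₀, hz₀⟩ := htk
  rw [powMonoidHom_apply] at hz₀
  have mem0 : ∀ z : F, z^(q-1) = t → z ≠ 0 := by
    intro z hz h0
    rw [h0, zero_pow (by omega : q-1 ≠ 0)] at hz
    exact ht0 hz.symm
  have e : {z : F | z^(q-1) = t} ≃ (MonoidHom.ker (powMonoidHom (q-1) : Fˣ →* Fˣ)) :=
  { toFun := fun x => ⟨z₀⁻¹ * Units.mk0 x.1 (mem0 x.1 x.2), by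
      rw [MonoidHom.mem_ker, powMonoidHom_apply, mul_pow]
      have : (Units.mk0 x.1 (mem0 x.1 x.2))^(q-1) = tu := by
        ext; push_cast; exact x.2
      rw [this, inv_pow, hz₀, inv_mul_cancel]⟩
    invFun := fun u => ⟨((z₀ * u.1 : Fˣ) : F), by
      have h := u.2
      rw [MonoidHom.mem_ker, powMonoidHom_apply] at h
      have : (z₀ * u.1)^(q-1) = tu := by rw [mul_pow, hz₀, h, mul_one]
      have := congrArg Units.val this
      simpa [htu] using this⟩
    left_inv := fun x => by ext; simp
    right_inv := fun u => by ext; simp }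
  rw [← Nat.card_coe_set_eq, Nat.card_congr e]
  exact (units_count hq hcard).1

lemma char_facts {F : Type*} [Field F] [Fintype F] {q e : ℕ} (he : 1 ≤ e)
    (hqe : q = 2^e) (hF : Fintype.card F = q^2) :
    (2:F) = 0 ∧ (∀ x y : F, (x+y)^q = x^q + y^q) ∧ (∀ x : F, x^(q^2) = x) := by
  obtain ⟨p, hp⟩ := CharP.exists F
  have hprime : p.Prime := CharP.char_is_prime F p
  haveI : Fact p.Prime := ⟨hprime⟩
  obtain ⟨n, hn2, hn⟩ := FiniteField.card F p
  have hcard2 : Fintype.card F = 2 ^ (2*e) := by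
    rw [hF, hqe, ← pow_mul, mul_comm]
  have hp2 : p = 2 := by
    have hd : p ∣ 2^(2*e) := by
      rw [← hcard2, hn]
      exact dvd_pow_self p n.ne_zero
    have h2 := hprime.dvd_of_dvd_pow hd
    exact (Nat.prime_dvd_prime_iff_eq hprime Nat.prime_two).mp h2
  subst hp2
  refine ⟨CharP.cast_eq_zero F 2, ?_, ?_⟩
  · intro x y
    rw [hqe]
    exact add_pow_char_pow x y 2 e
  · intro x
    rw [← hF]
    exact FiniteField.pow_card x

section
variable {F : Type*} [Field F] [Fintype F] {q e : ℕ}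

lemma count_Q (he : 1 ≤ e) (hqe : q = 2^e) (hF : Fintype.card F = q^2)
    (a d : F) (ha : a ≠ 0) (hd : d^q = d) :
    Set.ncard {z : F | a^q * z^(2*q) + z^(q+1) + a * z^2 = d}
      ∈ ({1, q-1, q+1, 2*q-1} : Set ℕ) := by
  obtain ⟨h2, frob, pcard⟩ := char_facts he hqe hF
  have hq : 2 ≤ q := by
    rw [hqe]; calc 2 = 2^1 := (pow_one 2).symm
                   _ ≤ 2^e := Nat.pow_le_pow_right (by norm_num) he
  obtain ⟨A, hA⟩ : ∃ A : F, A = a^q := ⟨_, rfl⟩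
  have hA0 : A ≠ 0 := hA ▸ pow_ne_zero q ha
  have hAq : A^q = a := by rw [hA, ← pow_mul, ← pow_two]; exact pcard a
  rw [← hA]
  -- factorization of Q
  have hQfac : ∀ z : F, A * z^(2*q) + z^(q+1) + a * z^2
      = z^2 * (A*(z^(q-1))^2 + z^(q-1) + a) := by
    intro z
    have e1 : z^(2*q) = z^2 * (z^(q-1))^2 := by
      rw [← pow_mul, ← pow_add]; congr 1; omega
    have e2 : z^(q+1) = z^2 * z^(q-1) := by
      rw [← pow_add]; congr 1; omega
    rw [e1, e2]; ring
  -- mu membership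
  have hμ : ∀ z : F, z ≠ 0 → (z^(q-1))^(q+1) = 1 := by
    intro z hz
    rw [← pow_mul]
    have harith : (q-1)*(q+1) = q^2 - 1 := by
      rcases Nat.exists_eq_add_of_le hq with ⟨k, rfl⟩
      have e1 : 2 + k - 1 = k + 1 := by omega
      rw [e1]; symm; apply Nat.sub_eq_of_eq_add; ring
    rw [harith, ← hF]
    exact FiniteField.pow_card_sub_one_eq_one z hz
  -- squaring injective
  have sqinj : ∀ x y : F, x^2 = y^2 → x = y := by
    intro x y hxy
    have hz : (x - y)^2 = 0 := by linear_combination hxy - x*y*h2 + y^2*h2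
    have := pow_eq_zero_iff (n := 2) (by norm_num) |>.mp hz
    exact sub_eq_zero.mp this
  -- key identity t^2 * (h t)^q = h t for t in mu
  have hkey : ∀ t : F, t^(q+1) = 1 → t^2 * (A*t^2 + t + a)^q = A*t^2 + t + a := by
    intro t ht
    have h1 : (A*t^2 + t + a)^q = a*t^(2*q) + t^q + A := by
      rw [frob, frob, mul_pow, hAq, ← pow_mul, ← hA]
    rw [h1]
    have e1 : t^2 * t^(2*q) = (t^(q+1))^2 := by rw [← pow_add, ← pow_mul]; congr 1; omega
    have e2 : t^2 * t^q = t * t^(q+1) := by rw [← pow_add, ← pow_succ']; congr 1; omega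
    calc t^2 * (a*t^(2*q) + t^q + A) = a * (t^2 * t^(2*q)) + t^2*t^q + A*t^2 := by ring
      _ = a * (t^(q+1))^2 + t*t^(q+1) + A*t^2 := by rw [e1, e2]
      _ = A*t^2 + t + a := by rw [ht]; ring
  set R : Set F := {t : F | t^(q+1) = 1 ∧ A*t^2 + t + a = 0} with hRdef
  have hRcases : R = ∅ ∨ ∃ r r' : F, r ≠ r' ∧ R = {r, r'} := by
    rcases Set.eq_empty_or_nonempty R with hemp | ⟨r, hrμ, hr⟩
    · exact Or.inl hemp
    right
    have hr0 : r ≠ 0 := by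
      intro h0
      rw [h0] at hr
      simp at hr
      exact ha hr
    set r' : F := a / (A * r) with hr'def
    have hAr0 : A * r ≠ 0 := mul_ne_zero hA0 hr0
    have hr'root : A*r'^2 + r' + a = 0 := by
      have hid : (A*r)^2 * (A*r'^2 + r' + a) = (a*A) * (A*r^2 + r + a) := by
        rw [hr'def]; field_simp; ring
      have h0 : (A*r)^2 * (A*r'^2 + r' + a) = 0 := by rw [hid, hr, mul_zero]
      exact (mul_eq_zero.mp h0).resolve_left (pow_ne_zero _ hAr0)
    have hAq1 : A^(q+1) = a^(q+1) := by
      rw [hA, ← pow_mul]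
      have harith : q*(q+1) = q^2 + q := by ring
      rw [harith, pow_add, pcard a, ← pow_succ']
    have hr'μ : r'^(q+1) = 1 := by
      rw [hr'def, div_pow, mul_pow, hAq1, hrμ, mul_one]
      exact div_self (pow_ne_zero _ ha)
    have hne : r ≠ r' := by
      intro heq
      have hAr2 : A * r^2 = a := by
        rw [hr'def, eq_div_iff hAr0] at heq
        linear_combination heq
      have : r = 0 := by linear_combination hr - hAr2 - a*h2
      exact hr0 this
    refine ⟨r, r', hne, ?_⟩
    ext s
    simp only [hRdef, Set.mem_setOf_eq, Set.mem_insert_iff, Set.mem_singleton_iff]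
    constructor
    · rintro ⟨hsμ, hs⟩
      have key : (s - r) * (A*(s - r) + 1) = 0 := by
        linear_combination hs - hr + A*(r^2 - s*r)*h2
      rcases mul_eq_zero.mp key with hc | hc
      · exact Or.inl (sub_eq_zero.mp hc)
      · right
        have hsar : s*(A*r) = a := by
          linear_combination r*hc + hr - (r+a)*h2
        rw [hr'def, eq_div_iff hAr0]
        linear_combination hsar
    · rintro (rfl | rfl)
      · exact ⟨hrμ, hr⟩
      · exact ⟨hr'μ, hr'root⟩
  have hQ0 : A * (0:F)^(2*q) + (0:F)^(q+1) + a*(0:F)^2 = 0 := by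
    rw [hQfac 0, zero_pow (by norm_num : (2:ℕ) ≠ 0), zero_mul]
  have hμ0 : ∀ t : F, t^(q+1) = 1 → t ≠ 0 := by
    intro t ht h0
    rw [h0, zero_pow (by omega : q+1 ≠ 0)] at ht
    exact zero_ne_one ht
  by_cases hd0 : d = 0
  · subst hd0
    rcases hRcases with hemp | ⟨r, r', hne, hRset⟩
    · have hZ : {z : F | A * z^(2*q) + z^(q+1) + a*z^2 = 0} = {0} := by
        ext z
        simp only [Set.mem_setOf_eq, Set.mem_singleton_iff]
        constructor
        · intro hz
          by_contra h0
          rw [hQfac z] at hz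
          have hh : A*(z^(q-1))^2 + z^(q-1) + a = 0 :=
            (mul_eq_zero.mp hz).resolve_left (pow_ne_zero _ h0)
          have hmem : z^(q-1) ∈ R := ⟨hμ z h0, hh⟩
          rw [hemp] at hmem
          exact hmem
        · rintro rfl
          exact hQ0
      rw [hZ, Set.ncard_singleton]
      left; rfl
    · have hrmem : r ∈ R := by rw [hRset]; exact Set.mem_insert r _
      have hr'mem : r' ∈ R := by rw [hRset]; exact Set.mem_insert_of_mem _ rfl
      obtain ⟨hrμ, hrroot⟩ := hrmem
      obtain ⟨hr'μ, hr'root⟩ := hr'mem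
      have hr0 := hμ0 r hrμ
      have hr'0 := hμ0 r' hr'μ
      have hZ : {z : F | A * z^(2*q) + z^(q+1) + a*z^2 = 0}
          = {0} ∪ ({z : F | z^(q-1) = r} ∪ {z : F | z^(q-1) = r'}) := by
        ext z
        simp only [Set.mem_setOf_eq, Set.mem_union, Set.mem_singleton_iff]
        constructor
        · intro hz
          by_cases h0 : z = 0
          · exact Or.inl h0
          right
          rw [hQfac z] at hz
          have hh : A*(z^(q-1))^2 + z^(q-1) + a = 0 :=
            (mul_eq_zero.mp hz).resolve_left (pow_ne_zero _ h0)
          have hmem : z^(q-1) ∈ R := ⟨hμ z h0, hh⟩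
          rw [hRset] at hmem
          exact hmem
        · rintro (rfl | hc | hc)
          · exact hQ0
          · rw [hQfac z, hc, hrroot, mul_zero]
          · rw [hQfac z, hc, hr'root, mul_zero]
      have hdisj1 : Disjoint ({0} : Set F)
          ({z : F | z^(q-1) = r} ∪ {z : F | z^(q-1) = r'}) := by
        rw [Set.disjoint_left]
        rintro z rfl (hc | hc) <;>
          rw [Set.mem_setOf_eq, zero_pow (by omega : q-1 ≠ 0)] at hc
        · exact hr0 hc.symm
        · exact hr'0 hc.symm
      have hdisj2 : Disjoint {z : F | z^(q-1) = r} {z : F | z^(q-1) = r'} := by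
        rw [Set.disjoint_left]
        rintro z hz1 hz2
        rw [Set.mem_setOf_eq] at hz1 hz2
        exact hne (hz1 ▸ hz2 ▸ rfl)
      rw [hZ, Set.ncard_union_eq hdisj1 (Set.toFinite _) (Set.toFinite _),
        Set.ncard_union_eq hdisj2 (Set.toFinite _) (Set.toFinite _),
        Set.ncard_singleton, fiber_ncard hq hF r hrμ, fiber_ncard hq hF r' hr'μ]
      right; right; right
      show 1 + (q - 1 + (q - 1)) = 2*q - 1
      omega
  · -- d ≠ 0
    have hdq1 : d^(q-1) = 1 := by
      have h1 : d^((q-1)+1) = d := by rw [Nat.sub_add_cancel (by omega : 1 ≤ q)]; exact hd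
      rw [pow_succ] at h1
      have := mul_right_cancel₀ hd0 (h1.trans (one_mul d).symm)
      exact this
    have sqsurj : ∀ w : F, ∃ v : F, v^2 = w := by
      intro w
      have hinj : Function.Injective (fun x : F => x^2) := fun x y h => sqinj x y h
      exact Finite.surjective_of_injective hinj w
    have hzne : ∀ z : F, A * z^(2*q) + z^(q+1) + a*z^2 = d → z ≠ 0 := by
      rintro z hz rfl
      exact hd0 (hQ0 ▸ hz.symm)
    have hhne : ∀ z : F, A * z^(2*q) + z^(q+1) + a*z^2 = d →
        A*(z^(q-1))^2 + z^(q-1) + a ≠ 0 := by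
      intro z hz hc
      rw [hQfac z, hc, mul_zero] at hz
      exact hd0 hz.symm
    have him : (fun z : F => z^(q-1)) '' {z : F | A * z^(2*q) + z^(q+1) + a*z^2 = d}
        = {t : F | t^(q+1) = 1 ∧ A*t^2 + t + a ≠ 0} := by
      ext t
      constructor
      · rintro ⟨z, hz, rfl⟩
        exact ⟨hμ z (hzne z hz), hhne z hz⟩
      · rintro ⟨htμ, hth⟩
        obtain ⟨v, hv⟩ := sqsurj (d / (A*t^2 + t + a))
        have hdh0 : d / (A*t^2 + t + a) ≠ 0 := div_ne_zero hd0 hth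
        have hv0 : v ≠ 0 := by
          rintro rfl
          exact hdh0 (by rw [← hv, zero_pow (by norm_num : (2:ℕ) ≠ 0)])
        have hth2 : t^2 * (A*t^2+t+a)^(q-1) = 1 := by
          have hk := hkey t htμ
          have hsplit : (A*t^2+t+a)^q = (A*t^2+t+a)^(q-1) * (A*t^2+t+a) := by
            rw [← pow_succ]; congr 1; omega
          rw [hsplit, ← mul_assoc] at hk
          exact mul_right_cancel₀ hth (hk.trans (one_mul _).symm)
        have hvq : v^(q-1) = t := by
          apply sqinj
          rw [← pow_mul, mul_comm (q-1) 2, pow_mul, hv, div_pow, hdq1, eq_comm,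
            eq_div_iff (pow_ne_zero _ hth)]
          linear_combination hth2
        have hvZ : A * v^(2*q) + v^(q+1) + a*v^2 = d := by
          rw [hQfac v, hvq, hv]
          exact div_mul_cancel₀ d hth
        exact ⟨v, hvZ, hvq⟩
    have hinjOn : Set.InjOn (fun z : F => z^(q-1))
        {z : F | A * z^(2*q) + z^(q+1) + a*z^2 = d} := by
      intro z1 h1 z2 h2 heq
      simp only [Set.mem_setOf_eq] at h1 h2
      dsimp at heq
      have hh1 := hhne z1 h1
      have heq2 : z1^2 * (A*(z1^(q-1))^2 + z1^(q-1) + a)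
          = z2^2 * (A*(z1^(q-1))^2 + z1^(q-1) + a) := by
        conv_rhs => rw [heq]
        rw [← hQfac z1, ← hQfac z2, h1, h2]
      exact sqinj z1 z2 (mul_right_cancel₀ hh1 heq2)
    have hTMR : {t : F | t^(q+1) = 1 ∧ A*t^2 + t + a ≠ 0}
        = {t : F | t^(q+1) = 1} \ R := by
      ext t
      simp only [Set.mem_setOf_eq, Set.mem_diff, hRdef]
      tauto
    rw [← Set.ncard_image_of_injOn hinjOn, him, hTMR]
    rcases hRcases with hemp | ⟨r, r', hne, hRset⟩
    · rw [hemp, Set.diff_empty, M_ncard hq hF]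
      right; right; left; rfl
    · have hRsub : R ⊆ {t : F | t^(q+1) = 1} := fun t ht => ht.1
      rw [Set.ncard_diff hRsub (Set.toFinite _), M_ncard hq hF, hRset,
        Set.ncard_pair hne]
      right; left
      show q + 1 - 2 = q - 1
      omega

end


theorem stmt_6 (q : ℕ) (e : ℕ) (he : 1 ≤ e) (hqe : q = 2 ^ e)
    (F : Type*) [Field F] [Fintype F]
    (hF : Fintype.card F = q ^ 2) (a b c : F) (ha : a ≠ 0) :
    Set.ncard {p : F × F | p.1 ^ (q + 1) = p.2 ^ q + p.2 ∧
        p.2 = a * p.1 ^ 2 + b * p.1 + c}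
      ∈ ({1, q - 1, q + 1, 2 * q - 1} : Set ℕ) := by
  obtain ⟨h2, frob, pcard⟩ := char_facts he hqe hF
  have hq : 2 ≤ q := by
    rw [hqe]
    calc 2 = 2^1 := (pow_one 2).symm
      _ ≤ 2^e := Nat.pow_le_pow_right (by norm_num) he
  have addeq : ∀ u v : F, u + v = 0 ↔ u = v := by
    intro u v
    constructor
    · intro h; linear_combination h - v*h2
    · intro h; linear_combination h + v*h2
  have haqq : (a^q)^q = a := by rw [← pow_mul, ← pow_two]; exact pcard a
  have hbqq : (b^q)^q = b := by rw [← pow_mul, ← pow_two]; exact pcard b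
  have hcqq : (c^q)^q = c := by rw [← pow_mul, ← pow_two]; exact pcard c
  -- step 1: project onto first coordinate
  have hfinj : Function.Injective (fun x : F => (x, a*x^2+b*x+c)) := by
    intro x y h
    exact congrArg Prod.fst h
  have hS : {p : F × F | p.1 ^ (q + 1) = p.2 ^ q + p.2 ∧
        p.2 = a * p.1 ^ 2 + b * p.1 + c}
      = (fun x : F => (x, a*x^2+b*x+c)) ''
        {x : F | x^(q+1) = (a*x^2+b*x+c)^q + (a*x^2+b*x+c)} := by
    ext ⟨x, y⟩
    simp only [Set.mem_setOf_eq, Set.mem_image, Prod.mk.injEq]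
    constructor
    · rintro ⟨h1, rfl⟩
      exact ⟨x, h1, rfl, rfl⟩
    · rintro ⟨x', hx', rfl, rfl⟩
      exact ⟨hx', rfl⟩
  rw [hS, Set.ncard_image_of_injective _ hfinj]
  -- step 2: translate by b^q
  set d : F := a^q*b^2 + b*b^q + a*(b^q)^2 + c^q + c with hddef
  have hPq : ∀ x : F, (a*x^2 + b*x + c)^q = a^q*x^(2*q) + b^q*x^q + c^q := by
    intro x
    rw [frob, frob, mul_pow, mul_pow, ← pow_mul, mul_comm 2 q, pow_mul]
  have hxq : ∀ z : F, (z + b^q)^q = z^q + b := by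
    intro z
    rw [frob, hbqq]
  have hx2 : ∀ z : F, (z + b^q)^2 = z^2 + (b^q)^2 := by
    intro z
    linear_combination z*(b^q)*h2
  have hmemiff : ∀ z : F,
      ((z + b^q)^(q+1) = (a*(z+b^q)^2+b*(z+b^q)+c)^q + (a*(z+b^q)^2+b*(z+b^q)+c))
      ↔ a^q * z^(2*q) + z^(q+1) + a*z^2 = d := by
    intro z
    have hident : (z+b^q)^(q+1) +
        ((a*(z+b^q)^2+b*(z+b^q)+c)^q + (a*(z+b^q)^2+b*(z+b^q)+c))
        = (a^q * z^(2*q) + z^(q+1) + a*z^2) + d := by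
      rw [hPq (z+b^q), pow_succ, hxq z, hx2 z, hddef]
      have hx2q : (z+b^q)^(2*q) = z^(2*q) + b^2 := by
        rw [pow_mul, hx2 z, frob, ← pow_mul, mul_comm 2 q, pow_mul,
          ← pow_mul (b^q) 2 q, mul_comm 2 q, pow_mul (b^q) q 2, hbqq]
      rw [hx2q]
      have hzq1 : z^(q+1) = z^q * z := pow_succ z q
      rw [hzq1]
      linear_combination (b^q*z^q + b*z + b*b^q)*h2
    constructor
    · intro h
      exact (addeq _ _).mp (hident ▸ (addeq _ _).mpr h)
    · intro h
      exact (addeq _ _).mp (hident.symm ▸ (addeq _ _).mpr h)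
  have hX : {x : F | x^(q+1) = (a*x^2+b*x+c)^q + (a*x^2+b*x+c)}
      = (fun z : F => z + b^q) '' {z : F | a^q * z^(2*q) + z^(q+1) + a*z^2 = d} := by
    ext x
    simp only [Set.mem_setOf_eq, Set.mem_image]
    constructor
    · intro hx
      refine ⟨x + b^q, ?_, ?_⟩
      · rw [← hmemiff (x + b^q)]
        have hxx : x + b^q + b^q = x := by linear_combination (b^q)*h2
        rwa [hxx]
      · linear_combination (b^q)*h2
    · rintro ⟨z, hz, rfl⟩
      exact (hmemiff z).mpr hz
  rw [hX, Set.ncard_image_of_injective _ (add_left_injective (b^q))]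
  -- step 3: d is fixed by Frobenius, apply count_Q
  have hd : d^q = d := by
    rw [hddef, frob, frob, frob, frob, mul_pow, mul_pow, mul_pow, hcqq]
    linear_combination (b^2)^q * haqq + (b^q*hbqq) + a^q*((b^q)^q + b)*hbqq
  exact count_Q he hqe hF a d ha hd
end

section
/- Let q be an odd power of a prime, let F be the finite field with q² elements, let a, c ∈ F with a ≠ 0 and c^q + c = 0, and set Δ = 1 − 4·a^(q+1) (note Δ^q = Δ, so Δ lies in the subfield F_q). Let I be the cardinality of {(x,y) ∈ F×F : x^(q+1) = y^q + y and y = a·x² + c}. Then: if Δ = 0 then I = q; if Δ ≠ 0 and Δ is a square in F_q (i.e. there is z with z^q = z and z² = Δ) then I = 1; and if Δ is a non-square in F_q then I = 2q − 1. -/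
open Finset in
lemma aux_fiber_card {G : Type*} [CommGroup G] [Fintype G] [DecidableEq G] [IsCyclic G]
    (n m : ℕ) (hn : 0 < n) (hm : 0 < m) (hcard : Fintype.card G = n * m) (α : G) :
    (univ.filter (fun x : G => x ^ n = α)).card = if α ^ m = 1 then n else 0 := by
  classical
  have hle : ∀ k : ℕ, 0 < k → (univ.filter (fun a : G => a ^ k = 1)).card ≤ k := by
    intro k hk
    simpa using IsCyclic.card_pow_eq_one_le (α := G) hk
  have fib_eq : ∀ β : G, (∃ x₀ : G, x₀ ^ n = β) →
      (univ.filter (fun x : G => x ^ n = β)).card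
        = (univ.filter (fun x : G => x ^ n = 1)).card := by
    rintro β ⟨x₀, rfl⟩
    apply Finset.card_nbij' (fun x => x₀⁻¹ * x) (fun y => x₀ * y)
    · intro x hx
      simp only [mem_coe, mem_filter, mem_univ, true_and] at hx ⊢
      rw [mul_pow, hx, inv_pow, inv_mul_cancel]
    · intro y hy
      simp only [mem_coe, mem_filter, mem_univ, true_and] at hy ⊢
      rw [mul_pow, hy, mul_one]
    · intro x _; group
    · intro y _; group
  have himage : (univ.image (fun x : G => x ^ n)) ⊆ univ.filter (fun y : G => y ^ m = 1) := by
    intro y hy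
    simp only [mem_image, mem_univ, true_and] at hy
    obtain ⟨x, rfl⟩ := hy
    simp only [mem_filter, mem_univ, true_and]
    rw [← pow_mul, ← hcard, pow_card_eq_one]
  have hsum : (univ : Finset G).card = ∑ y ∈ univ.image (fun x : G => x ^ n),
      (univ.filter (fun x : G => x ^ n = y)).card :=
    card_eq_sum_card_fiberwise (fun x _ => mem_image_of_mem _ (mem_univ x))
  have hsum' : (univ : Finset G).card = (univ.image (fun x : G => x ^ n)).card *
      (univ.filter (fun x : G => x ^ n = 1)).card := by
    rw [hsum, Finset.sum_congr rfl (fun y hy => fib_eq y (by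
      simpa only [mem_image, mem_univ, true_and] using hy)), Finset.sum_const, smul_eq_mul]
  set A := (univ.image (fun x : G => x ^ n)).card with hA
  set K := (univ.filter (fun x : G => x ^ n = 1)).card with hK
  have hAle : A ≤ m := le_trans (card_le_card himage) (hle m hm)
  have hKle : K ≤ n := hle n hn
  have hprod : n * m = A * K := by rw [← hcard]; exact hsum'
  have hKn : K = n := by nlinarith
  have hAm : A = m := by nlinarith
  have himeq : (univ.image (fun x : G => x ^ n)) = univ.filter (fun y : G => y ^ m = 1) :=
    Finset.eq_of_subset_of_card_le himage (le_trans (hle m hm) (by omega))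
  by_cases hα : α ^ m = 1
  · have : α ∈ univ.image (fun x : G => x ^ n) := by
      rw [himeq]; simp [hα]
    simp only [mem_image, mem_univ, true_and] at this
    rw [if_pos hα, fib_eq α this, hKn]
  · rw [if_neg hα]
    rw [Finset.card_eq_zero, Finset.filter_eq_empty_iff]
    rintro x - rfl
    exact hα (by rw [← pow_mul, ← hcard, pow_card_eq_one])

lemma aux_count_field {F : Type*} [Field F] [Fintype F] (q : ℕ) (hq : 1 < q)
    (hF : Fintype.card F = q ^ 2) (α : F) (hα : α ≠ 0) :
    (α ^ (q + 1) = 1 → {x : F | x ^ (q - 1) = α}.ncard = q - 1) ∧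
    (α ^ (q + 1) ≠ 1 → {x : F | x ^ (q - 1) = α}.ncard = 0) := by
  classical
  have hcardu : Fintype.card Fˣ = (q - 1) * (q + 1) := by
    rw [Fintype.card_units, hF]
    obtain ⟨k, rfl⟩ : ∃ k, q = k + 1 := ⟨q - 1, by omega⟩
    simp only [Nat.add_sub_cancel]
    have : (k + 1) ^ 2 = k * (k + 2) + 1 := by ring
    rw [this, Nat.add_sub_cancel]
  set αu : Fˣ := Units.mk0 α hα with hαu
  have key := aux_fiber_card (G := Fˣ) (q - 1) (q + 1) (by omega) (by omega) hcardu αu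
  have hset : {x : F | x ^ (q - 1) = α} = (fun u : Fˣ => (u : F)) '' {u : Fˣ | u ^ (q - 1) = αu} := by
    ext x
    simp only [Set.mem_setOf_eq, Set.mem_image]
    constructor
    · intro hx
      have hx0 : x ≠ 0 := by
        rintro rfl
        rw [zero_pow (by omega : q - 1 ≠ 0)] at hx
        exact hα hx.symm
      exact ⟨Units.mk0 x hx0, by ext; simpa [hαu] using hx, rfl⟩
    · rintro ⟨u, hu, rfl⟩
      have := congrArg Units.val hu
      simpa [hαu] using this
  have hcond : (αu ^ (q + 1) = 1) ↔ α ^ (q + 1) = 1 := by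
    rw [Units.ext_iff]; simp [hαu]
  have main : {x : F | x ^ (q - 1) = α}.ncard
      = if αu ^ (q + 1) = 1 then q - 1 else 0 := by
    rw [hset, Set.ncard_image_of_injective _ Units.val_injective,
      Set.ncard_eq_toFinset_card', Set.toFinset_setOf, key]
  constructor
  · intro h; rw [main, if_pos (hcond.mpr h)]
  · intro h; rw [main, if_neg (fun hh => h (hcond.mp hh))]

theorem stmt_8 (q : ℕ) (hq : IsPrimePow q) (hodd : Odd q) (F : Type*) [Field F] [Fintype F]
    (hF : Fintype.card F = q ^ 2) (a c : F) (ha : a ≠ 0) (hc : c ^ q + c = 0)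
    (Δ : F) (hΔ : Δ = 1 - 4 * a ^ (q + 1)) (I : ℕ)
    (hI : I = Set.ncard {p : F × F | p.1 ^ (q + 1) = p.2 ^ q + p.2 ∧
        p.2 = a * p.1 ^ 2 + c}) :
    (Δ = 0 → I = q) ∧
    (Δ ≠ 0 → (∃ z : F, z ^ q = z ∧ z ^ 2 = Δ) → I = 1) ∧
    ((¬ ∃ z : F, z ^ q = z ∧ z ^ 2 = Δ) → I = 2 * q - 1) := by
    classical
  have hq1 : 1 < q := hq.one_lt
  have hq0 : q ≠ 0 := by omega
  obtain ⟨p, n, hpp, hn, hpn⟩ := hq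
  have hp' : Nat.Prime p := Nat.prime_iff.mpr hpp
  have hpc : ringChar F = p := by
    obtain ⟨m, hprime, hcards⟩ := FiniteField.card F (ringChar F)
    have hdvd : ringChar F ∣ p ^ (2 * n) := by
      have : ringChar F ^ (m : ℕ) = p ^ (2 * n) := by
        rw [← hcards, hF, ← hpn, ← pow_mul, mul_comm n 2]
      exact this ▸ dvd_pow_self (ringChar F) m.ne_zero
    exact (Nat.prime_dvd_prime_iff_eq hprime hp').mp (hprime.dvd_of_dvd_pow hdvd)
  haveI : Fact p.Prime := ⟨hp'⟩
  haveI hcharp : CharP F p := hpc ▸ ringChar.charP F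
  haveI : ExpChar F p := ExpChar.prime hp'
  have hpodd : p ≠ 2 := by
    rintro rfl
    have h2 : (2 : ℕ) ∣ q := hpn ▸ dvd_pow_self 2 (by omega)
    rw [Nat.odd_iff] at hodd
    omega
  set φ : F →+* F := iterateFrobenius F p n with hφdef
  have hφ : ∀ x : F, φ x = x ^ q := fun x => by
    rw [hφdef, iterateFrobenius_def, hpn]
  have htwo : (2 : F) ≠ 0 := by
    intro h
    have hd : p ∣ 2 := (CharP.cast_eq_zero_iff F p 2).mp (by exact_mod_cast h)
    have h1 := Nat.le_of_dvd (by norm_num) hd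
    have h2 := hp'.two_le
    omega
  have hfour : (4 : F) ≠ 0 := by
    intro h
    have h4 : (4 : F) = 2 * 2 := by norm_num
    rcases mul_eq_zero.mp (h4 ▸ h) with h' | h' <;> exact htwo h'
  have hpow_card : ∀ x : F, x ^ (q ^ 2) = x := fun x => by
    rw [← hF]; exact FiniteField.pow_card x
  have haq : a ^ q ≠ 0 := pow_ne_zero q ha
  have h2aq : (2 : F) * a ^ q ≠ 0 := mul_ne_zero htwo haq
  have haq1 : a ^ (q + 1) ≠ 0 := pow_ne_zero _ ha
  have haqq : (a ^ q) ^ q = a := by rw [← pow_mul, ← pow_two, hpow_card]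
  have h4a : (4 : F) * a ^ (q + 1) = 1 - Δ := by rw [hΔ]; ring
  have h1Δ : (1 : F) - Δ ≠ 0 := by
    rw [← h4a]; exact mul_ne_zero hfour haq1
  have hΔq : Δ ^ q = Δ := by
    have h1 : (a ^ (q + 1)) ^ q = a ^ (q + 1) := by
      rw [← pow_mul, add_mul, one_mul, ← pow_two, pow_add, hpow_card, pow_add, pow_one, mul_comm]
    rw [← hφ, hΔ, map_sub, map_one, map_mul, map_pow, hφ a]
    rw [show φ (4 : F) = 4 from map_ofNat φ 4]
    rw [← pow_mul, mul_comm q (q + 1), pow_mul, h1]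
  have pow_comp : ∀ v : F, ((1 + v) * (2 * a ^ q)⁻¹) ^ (q + 1)
      = (1 + v ^ q) * (1 + v) * ((1 : F) - Δ)⁻¹ := by
    intro v
    have h1 : ((1 + v) * (2 * a ^ q)⁻¹) ^ q = (1 + v ^ q) * (2 * a)⁻¹ := by
      rw [← hφ, map_mul, map_add, map_one, hφ v, map_inv₀, map_mul, hφ (a ^ q), haqq]
      rw [show φ (2 : F) = 2 from map_ofNat φ 2]
    have e4 : ((2 : F) * a)⁻¹ * (2 * a ^ q)⁻¹ = ((1 : F) - Δ)⁻¹ := by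
      rw [← mul_inv]
      congr 1
      rw [← h4a]
      ring
    rw [pow_succ, h1]
    calc (1 + v ^ q) * (2 * a)⁻¹ * ((1 + v) * (2 * a ^ q)⁻¹)
        = (1 + v ^ q) * (1 + v) * (((2 : F) * a)⁻¹ * (2 * a ^ q)⁻¹) := by ring
      _ = (1 + v ^ q) * (1 + v) * ((1 : F) - Δ)⁻¹ := by rw [e4]
  have main : ∀ w : F, w ^ 2 = Δ →
      I = 1 + {x : F | x ^ (q - 1) = (1 + w) * (2 * a ^ q)⁻¹
        ∨ x ^ (q - 1) = (1 - w) * (2 * a ^ q)⁻¹}.ncard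
      ∧ (1 + w) * (2 * a ^ q)⁻¹ ≠ 0 ∧ (1 - w) * (2 * a ^ q)⁻¹ ≠ 0 := by
    intro w hw
    set α := (1 + w) * (2 * a ^ q)⁻¹ with hα
    set β := (1 - w) * (2 * a ^ q)⁻¹ with hβ
    have hb : (2 * a ^ q) * (2 * a ^ q)⁻¹ = 1 := mul_inv_cancel₀ h2aq
    have hsum : a ^ q * (α + β) = 1 := by
      rw [hα, hβ]
      linear_combination hb
    have hprodeq : a ^ q * (α * β) = a := by
      rw [hα, hβ]
      have hw' : w ^ 2 = 1 - 4 * a ^ (q + 1) := by rw [hw, hΔ]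
      linear_combination (a * (2 * a ^ q * (2 * a ^ q)⁻¹ + 1)) * hb
        - (a ^ q * ((2 * a ^ q)⁻¹) ^ 2) * hw'
    have hαne : α ≠ 0 := by
      intro h
      apply ha
      rw [← hprodeq, h, zero_mul, mul_zero]
    have hβne : β ≠ 0 := by
      intro h
      apply ha
      rw [← hprodeq, h, mul_zero, mul_zero]
    refine ⟨?_, hαne, hβne⟩
    have hcq : c ^ q = -c := by linear_combination hc
    have hsimp : ∀ x : F, (x ^ (q + 1) = (a * x ^ 2 + c) ^ q + (a * x ^ 2 + c)) ↔
        x ^ (q + 1) = a ^ q * x ^ (2 * q) + a * x ^ 2 := by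
      intro x
      have hexp : (a * x ^ 2 + c) ^ q = a ^ q * x ^ (2 * q) + c ^ q := by
        rw [← hφ, map_add, map_mul, map_pow, hφ a, hφ x, hφ c, ← pow_mul, mul_comm q 2]
      rw [hexp, hcq]
      constructor <;> intro h <;> linear_combination h
    have hbij : {p : F × F | p.1 ^ (q + 1) = p.2 ^ q + p.2 ∧ p.2 = a * p.1 ^ 2 + c}
        = (fun x : F => (x, a * x ^ 2 + c)) ''
          {x : F | x ^ (q + 1) = a ^ q * x ^ (2 * q) + a * x ^ 2} := by
      ext ⟨x, y⟩
      simp only [Set.mem_setOf_eq, Set.mem_image, Prod.mk.injEq]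
      constructor
      · rintro ⟨h1, rfl⟩
        exact ⟨x, (hsimp x).mp h1, rfl, rfl⟩
      · rintro ⟨x', hx', rfl, rfl⟩
        exact ⟨(hsimp x').mpr hx', rfl⟩
    have hinj : Function.Injective (fun x : F => (x, a * x ^ 2 + c)) :=
      fun x y h => congrArg Prod.fst h
    rw [hI, hbij, Set.ncard_image_of_injective _ hinj]
    have hXY : {x : F | x ^ (q + 1) = a ^ q * x ^ (2 * q) + a * x ^ 2}
        = insert (0 : F) {x : F | x ^ (q - 1) = α ∨ x ^ (q - 1) = β} := by
      ext x
      simp only [Set.mem_setOf_eq, Set.mem_insert_iff]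
      rcases eq_or_ne x 0 with rfl | hx
      · rw [zero_pow (by omega : q + 1 ≠ 0), zero_pow (by omega : 2 * q ≠ 0)]
        simp
      · have e1 : x ^ (2 * q) = x ^ q * x ^ q := by rw [two_mul, pow_add]
        have e2 : x ^ (q + 1) = x ^ q * x := by rw [pow_succ]
        have e3 : x ^ (q - 1) * x = x ^ q := by
          rw [← pow_succ]
          congr 1
          omega
        have hid : a ^ q * ((x ^ q - α * x) * (x ^ q - β * x))
            = a ^ q * x ^ (2 * q) + a * x ^ 2 - x ^ (q + 1) := by
          rw [e1, e2]
          linear_combination x ^ 2 * hprodeq - (x ^ q * x) * hsum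
        constructor
        · intro h
          have h0 : a ^ q * ((x ^ q - α * x) * (x ^ q - β * x)) = 0 := by
            rw [hid]; linear_combination -h
          rcases mul_eq_zero.mp h0 with h' | h'
          · exact absurd h' haq
          rcases mul_eq_zero.mp h' with h'' | h''
          · refine Or.inr (Or.inl ?_)
            apply mul_right_cancel₀ hx
            rw [e3]
            linear_combination h''
          · refine Or.inr (Or.inr ?_)
            apply mul_right_cancel₀ hx
            rw [e3]
            linear_combination h''
        · rintro (rfl | h | h)
          · exact absurd rfl hx
          · have hxq : x ^ q = α * x := by rw [← e3, h]
            have h0 : a ^ q * ((x ^ q - α * x) * (x ^ q - β * x)) = 0 := by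
              rw [hxq]; ring
            rw [hid] at h0
            linear_combination -h0
          · have hxq : x ^ q = β * x := by rw [← e3, h]
            have h0 : a ^ q * ((x ^ q - α * x) * (x ^ q - β * x)) = 0 := by
              rw [hxq]; ring
            rw [hid] at h0
            linear_combination -h0
    rw [hXY]
    have h0notin : (0 : F) ∉ {x : F | x ^ (q - 1) = α ∨ x ^ (q - 1) = β} := by
      simp only [Set.mem_setOf_eq]
      rw [zero_pow (by omega : q - 1 ≠ 0)]
      rintro (h | h)
      · exact hαne h.symm
      · exact hβne h.symm
    rw [Set.ncard_insert_of_notMem h0notin (Set.toFinite _)]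
    omega
  have hqexp : (q - 1) * (q + 1) = q ^ 2 - 1 := by
    obtain ⟨k, rfl⟩ : ∃ k, q = k + 1 := ⟨q - 1, by omega⟩
    have : (k + 1) ^ 2 = k * (k + 2) + 1 := by ring
    rw [this]
    simp [Nat.add_sub_cancel]
  have hunit_pow : ∀ x : F, x ≠ 0 → (x ^ (q - 1)) ^ (q + 1) = 1 := by
    intro x hx
    rw [← pow_mul, hqexp, ← hF]
    exact FiniteField.pow_card_sub_one_eq_one x hx
  refine ⟨?_, ?_, ?_⟩
  · -- Δ = 0
    intro hΔ0
    obtain ⟨hmain, hαne, -⟩ := main 0 (by rw [hΔ0]; ring)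
    have hαβ : ((1 : F) - 0) * (2 * a ^ q)⁻¹ = ((1 : F) + 0) * (2 * a ^ q)⁻¹ := by norm_num
    rw [hαβ] at hmain
    simp only [or_self] at hmain
    have hαpow : (((1 : F) + 0) * (2 * a ^ q)⁻¹) ^ (q + 1) = 1 := by
      rw [pow_comp 0, hΔ0, zero_pow hq0]
      norm_num
    rw [(aux_count_field q hq1 hF _ hαne).1 hαpow] at hmain
    omega
  · -- Δ ≠ 0, square
    rintro hΔ0 ⟨z, hz1, hz2⟩
    have hzne : z ≠ 0 := by
      rintro rfl
      exact hΔ0 (by rw [← hz2]; ring)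
    obtain ⟨hmain, hαne, hβne⟩ := main z hz2
    have hz1' : (1 : F) + z ≠ 0 := by
      intro h
      apply haq1
      have hΔ1 : Δ = 1 := by rw [← hz2]; linear_combination (z - 1) * h
      have h4 : (4 : F) * a ^ (q + 1) = 0 := by rw [h4a, hΔ1]; ring
      rcases mul_eq_zero.mp h4 with h' | h'
      · exact absurd h' hfour
      · exact h'
    have hz2' : (1 : F) - z ≠ 0 := by
      intro h
      apply haq1
      have hΔ1 : Δ = 1 := by rw [← hz2]; linear_combination (-z - 1) * h
      have h4 : (4 : F) * a ^ (q + 1) = 0 := by rw [h4a, hΔ1]; ring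
      rcases mul_eq_zero.mp h4 with h' | h'
      · exact absurd h' hfour
      · exact h'
    have hαpow : ((1 + z) * (2 * a ^ q)⁻¹) ^ (q + 1) ≠ 1 := by
      rw [pow_comp z, hz1]
      intro h
      have h' : ((1 : F) + z) * (1 + z) = 1 - Δ := by
        have h2 := congrArg (· * ((1 : F) - Δ)) h
        simp only [one_mul] at h2
        rw [mul_assoc, inv_mul_cancel₀ h1Δ, mul_one] at h2
        exact h2
      have h2z : ((1 : F) + z) * (2 * z) = 0 := by linear_combination h' + hz2
      rcases mul_eq_zero.mp h2z with h'' | h''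
      · exact hz1' h''
      rcases mul_eq_zero.mp h'' with h3 | h3
      · exact htwo h3
      · exact hzne h3
    have hβpow : ((1 - z) * (2 * a ^ q)⁻¹) ^ (q + 1) ≠ 1 := by
      rw [sub_eq_add_neg, pow_comp (-z), hodd.neg_pow, hz1]
      intro h
      have h' : ((1 : F) + -z) * (1 + -z) = 1 - Δ := by
        have h2 := congrArg (· * ((1 : F) - Δ)) h
        simp only [one_mul] at h2
        rw [mul_assoc, inv_mul_cancel₀ h1Δ, mul_one] at h2
        exact h2
      have h2z : ((1 : F) - z) * (2 * z) = 0 := by linear_combination -h' - hz2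
      rcases mul_eq_zero.mp h2z with h'' | h''
      · exact hz2' h''
      rcases mul_eq_zero.mp h'' with h3 | h3
      · exact htwo h3
      · exact hzne h3
    have hempty : {x : F | x ^ (q - 1) = (1 + z) * (2 * a ^ q)⁻¹
        ∨ x ^ (q - 1) = (1 - z) * (2 * a ^ q)⁻¹} = ∅ := by
      ext x
      simp only [Set.mem_setOf_eq, Set.mem_empty_iff_false, iff_false]
      rintro (h | h)
      · have hx : x ≠ 0 := by
          rintro rfl
          rw [zero_pow (by omega : q - 1 ≠ 0)] at h
          exact hαne h.symm
        exact hαpow (h ▸ hunit_pow x hx)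
      · have hx : x ≠ 0 := by
          rintro rfl
          rw [zero_pow (by omega : q - 1 ≠ 0)] at h
          exact hβne h.symm
        exact hβpow (h ▸ hunit_pow x hx)
    rw [hempty, Set.ncard_empty] at hmain
    omega
  · -- nonsquare
    intro hne
    have hΔ0 : Δ ≠ 0 := by
      intro h
      exact hne ⟨0, by rw [zero_pow hq0], by rw [h]; ring⟩
    have hΔq1 : Δ ^ (q - 1) = 1 := by
      apply mul_right_cancel₀ hΔ0
      rw [one_mul, ← pow_succ, show q - 1 + 1 = q by omega, hΔq]
    have hsq : IsSquare Δ := by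
      rw [FiniteField.isSquare_iff (by rw [hpc]; exact hpodd) hΔ0, hF]
      obtain ⟨t, ht⟩ := hodd
      have hdiv : q ^ 2 / 2 = (q - 1) * ((q + 1) / 2) := by
        have e1 : q - 1 = 2 * t := by omega
        have e2 : (q + 1) / 2 = t + 1 := by omega
        have e3 : q ^ 2 = 2 * (2 * t * (t + 1)) + 1 := by rw [ht]; ring
        rw [e1, e2, e3]
        omega
      rw [hdiv, pow_mul, hΔq1, one_pow]
    obtain ⟨r, hr⟩ := hsq
    have hw2 : r ^ 2 = Δ := by rw [hr]; ring
    have hrne : r ≠ 0 := by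
      rintro rfl
      exact hΔ0 (by rw [hr]; ring)
    have hwq : r ^ q = -r := by
      have hsq' : (r ^ q) ^ 2 = r ^ 2 := by
        calc (r ^ q) ^ 2 = (r ^ 2) ^ q := by rw [← pow_mul, ← pow_mul, mul_comm]
          _ = Δ ^ q := by rw [hw2]
          _ = Δ := hΔq
          _ = r ^ 2 := hw2.symm
      have hfac : (r ^ q - r) * (r ^ q + r) = 0 := by linear_combination hsq'
      rcases mul_eq_zero.mp hfac with h | h
      · exact absurd ⟨r, by linear_combination h, hw2⟩ hne
      · linear_combination h
    obtain ⟨hmain, hαne, hβne⟩ := main r hw2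
    have hαpow : ((1 + r) * (2 * a ^ q)⁻¹) ^ (q + 1) = 1 := by
      rw [pow_comp r, hwq]
      have he : ((1 : F) + -r) * (1 + r) = 1 - Δ := by linear_combination -hw2
      rw [he, mul_inv_cancel₀ h1Δ]
    have hβpow : ((1 - r) * (2 * a ^ q)⁻¹) ^ (q + 1) = 1 := by
      rw [sub_eq_add_neg, pow_comp (-r), hodd.neg_pow, hwq, neg_neg]
      have he : ((1 : F) + r) * (1 + -r) = 1 - Δ := by linear_combination -hw2
      rw [he, mul_inv_cancel₀ h1Δ]
    have hA := (aux_count_field q hq1 hF _ hαne).1 hαpow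
    have hB := (aux_count_field q hq1 hF _ hβne).1 hβpow
    have hαβ : (1 + r) * (2 * a ^ q)⁻¹ ≠ (1 - r) * (2 * a ^ q)⁻¹ := by
      intro h
      have h1 : ((1 : F) + r) = 1 - r := mul_right_cancel₀ (inv_ne_zero h2aq) h
      have h2 : (2 : F) * r = 0 := by linear_combination h1
      rcases mul_eq_zero.mp h2 with h' | h'
      · exact htwo h'
      · exact hrne h'
    have hsplit : {x : F | x ^ (q - 1) = (1 + r) * (2 * a ^ q)⁻¹
          ∨ x ^ (q - 1) = (1 - r) * (2 * a ^ q)⁻¹}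
        = {x : F | x ^ (q - 1) = (1 + r) * (2 * a ^ q)⁻¹}
          ∪ {x : F | x ^ (q - 1) = (1 - r) * (2 * a ^ q)⁻¹} := Set.setOf_or
    have hdisj : Disjoint {x : F | x ^ (q - 1) = (1 + r) * (2 * a ^ q)⁻¹}
        {x : F | x ^ (q - 1) = (1 - r) * (2 * a ^ q)⁻¹} := by
      rw [Set.disjoint_left]
      intro x hx hx'
      simp only [Set.mem_setOf_eq] at hx hx'
      exact hαβ (hx.symm.trans hx')
    rw [hsplit, Set.ncard_union_eq hdisj (Set.toFinite _) (Set.toFinite _), hA, hB] at hmain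
    omega
end

section
/- Let q be an odd power of a prime, let F be the finite field with q² elements, let a, c ∈ F with a ≠ 0 and c^q + c ≠ 0, and set Δ = 1 − 4·a^(q+1) (note Δ^q = Δ, so Δ lies in the subfield F_q). Let I be the cardinality of {(x,y) ∈ F×F : x^(q+1) = y^q + y and y = a·x² + c}. Then: if Δ ≠ 0 and Δ is a square in F_q (i.e. there is z with z^q = z and z² = Δ) then I = q + 1; if Δ is a non-square in F_q then I = q − 1; and if Δ = 0 then I = 0 or I = 2q. -/
lemma aux_count {F : Type*} [Field F] [Fintype F] {n N : ℕ} (hn : 0 < n)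
    (hN : N = Fintype.card F - 1) (hdvd : n ∣ N) {s : F} (hs : s ≠ 0)
    (hpow : s ^ (N / n) = 1) : {x : F | x ^ n = s}.ncard = n := by
  classical
  have hN0 : 0 < N := by
    have h2 : 1 < Fintype.card F := Fintype.one_lt_card
    omega
  obtain ⟨g, hg⟩ := IsCyclic.exists_generator (α := Fˣ)
  have hog : orderOf g = N := by
    rw [orderOf_eq_card_of_forall_mem_zpowers hg, Nat.card_eq_fintype_card,
      Fintype.card_units, hN]
  set d := N / n with hd
  have hNd : n * d = N := Nat.mul_div_cancel' hdvd
  have hd0 : 0 < d := Nat.div_pos (Nat.le_of_dvd hN0 hdvd) hn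
  set su : Fˣ := Units.mk0 s hs with hsu
  obtain ⟨m, hm⟩ : ∃ m : ℕ, g ^ m = su :=
    Submonoid.mem_powers_iff _ _ |>.mp (mem_powers_iff_mem_zpowers.mpr (hg su))
  have hsu1 : su ^ d = 1 := by
    ext
    push_cast
    exact hpow
  have h2 : N ∣ m * d := by
    rw [← hog]
    apply orderOf_dvd_of_pow_eq_one
    rw [pow_mul, hm, hsu1]
  have hnm : n ∣ m := by
    rw [← hNd] at h2
    exact (Nat.mul_dvd_mul_iff_right hd0).mp h2
  obtain ⟨j, hj⟩ := hnm
  set α : Fˣ := g ^ j with hα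
  have hαn : α ^ n = su := by rw [hα, ← pow_mul, mul_comm, ← hj, hm]
  set ζ : Fˣ := g ^ d with hζdef
  have hoζ : orderOf ζ = n := by
    rw [hζdef, orderOf_pow, hog]
    have : Nat.gcd N d = d := Nat.gcd_eq_right ⟨n, by rw [← hNd, Nat.mul_comm]⟩
    rw [this, ← hNd, Nat.mul_div_cancel _ hd0]
  have hζ : IsPrimitiveRoot ((ζ : F)) n := by
    rw [IsPrimitiveRoot.coe_units_iff]
    exact hoζ ▸ IsPrimitiveRoot.orderOf ζ
  have hαF : ((α : F)) ≠ 0 := Units.ne_zero α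
  have hαFn : ((α : F)) ^ n = s := by
    have := congrArg (Units.val) hαn
    push_cast at this
    simpa [hsu] using this
  haveI : NeZero n := ⟨hn.ne'⟩
  have hset : {x : F | x ^ n = s} = ↑((Finset.range n).image (fun i => (ζ : F) ^ i * (α : F))) := by
    ext x
    simp only [Set.mem_setOf_eq, Finset.coe_image, Set.mem_image, Finset.mem_coe,
      Finset.mem_range]
    constructor
    · intro hx
      have hx0 : x ≠ 0 := by
        rintro rfl
        exact hs (by rw [← hx, zero_pow hn.ne'])
      have hy : (x * (α : F)⁻¹) ^ n = 1 := by
        rw [mul_pow, hx, inv_pow, hαFn, mul_inv_cancel₀ hs]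
      obtain ⟨i, hi, hie⟩ := hζ.eq_pow_of_pow_eq_one hy
      exact ⟨i, hi, by rw [hie]; field_simp⟩
    · rintro ⟨i, hi, rfl⟩
      rw [mul_pow, ← pow_mul, mul_comm i n, pow_mul]
      rw [show ((ζ:F)) ^ n = 1 from hζ.pow_eq_one, one_pow, one_mul, hαFn]
  rw [hset, Set.ncard_coe_finset]
  rw [Finset.card_image_of_injOn (by simpa using hζ.injOn_pow_mul hαF), Finset.card_range]

theorem stmt_9 (q : ℕ) (hq : IsPrimePow q) (hodd : Odd q) (F : Type*) [Field F] [Fintype F]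
    (hF : Fintype.card F = q ^ 2) (a c : F) (ha : a ≠ 0) (hc : c ^ q + c ≠ 0)
    (Δ : F) (hΔ : Δ = 1 - 4 * a ^ (q + 1)) (I : ℕ)
    (hI : I = Set.ncard {p : F × F | p.1 ^ (q + 1) = p.2 ^ q + p.2 ∧
        p.2 = a * p.1 ^ 2 + c}) :
    (Δ ≠ 0 → (∃ z : F, z ^ q = z ∧ z ^ 2 = Δ) → I = q + 1) ∧
    ((¬ ∃ z : F, z ^ q = z ∧ z ^ 2 = Δ) → I = q - 1) ∧
    (Δ = 0 → I = 0 ∨ I = 2 * q) := by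
  classical
  have hq' := hq
  obtain ⟨p, k, hp, hk, hpk⟩ := hq
  have pP : Nat.Prime p := hp.nat_prime
  haveI fpP : Fact (Nat.Prime p) := ⟨pP⟩
  have hq2 : 2 ≤ q := hq'.two_le
  have hq0 : q ≠ 0 := by omega
  -- characteristic
  haveI hchar : CharP F p := by
    haveI h0 : CharP F (ringChar F) := ringChar.charP F
    have hp₀ : (ringChar F).Prime := CharP.char_is_prime F (ringChar F)
    obtain ⟨n₀, _, hcard⟩ := FiniteField.card F (ringChar F)
    have hdvd : p ∣ (ringChar F) ^ (n₀ : ℕ) := by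
      rw [← hcard, hF, ← hpk, ← pow_mul]
      exact dvd_pow_self p (by positivity)
    have : p = ringChar F :=
      (Nat.prime_dvd_prime_iff_eq pP hp₀).mp (pP.dvd_of_dvd_pow hdvd)
    rwa [this]
  -- p is odd
  have hpodd : p ≠ 2 := by
    rintro rfl
    rw [← hpk] at hodd
    rcases hodd with ⟨m, hm⟩
    have : 2 ∣ 2 ^ k := dvd_pow_self 2 (by omega)
    omega
  have h2F : (2 : F) ≠ 0 := by
    intro h
    have hd2 := (CharP.cast_eq_zero_iff F p 2).mp (by exact_mod_cast h)
    exact hpodd ((Nat.prime_dvd_prime_iff_eq pP Nat.prime_two).mp hd2)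
  have h4F : (4 : F) ≠ 0 := by
    intro h
    apply h2F
    have : (4 : F) = 2 * 2 := by norm_num
    rw [this] at h
    rcases mul_eq_zero.mp h with h' | h' <;> exact h'
  -- frobenius facts
  have hqadd : ∀ x y : F, (x + y) ^ q = x ^ q + y ^ q := by
    intro x y; rw [← hpk]; exact add_pow_char_pow ..
  have hqmul : ∀ x y : F, (x * y) ^ q = x ^ q * y ^ q := fun x y => mul_pow x y q
  have hqneg : ∀ x : F, (-x) ^ q = -(x ^ q) := fun x => hodd.neg_pow x
  have hqsub : ∀ x y : F, (x - y) ^ q = x ^ q - y ^ q := by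
    intro x y
    rw [sub_eq_add_neg, hqadd, hqneg, sub_eq_add_neg]
  have hqdiv : ∀ x y : F, (x / y) ^ q = x ^ q / y ^ q := fun x y => div_pow x y q
  have hqone : (1 : F) ^ q = 1 := one_pow q
  have h2q : (2 : F) ^ q = 2 := by
    have : (2 : F) = 1 + 1 := by norm_num
    rw [this, hqadd, hqone]
  have h4q : (4 : F) ^ q = 4 := by
    have : (4 : F) = 2 * 2 := by norm_num
    rw [this, hqmul, h2q]
  have hqq : ∀ x : F, (x ^ q) ^ q = x := by
    intro x
    rw [← pow_mul, ← pow_two, ← hF]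
    exact FiniteField.pow_card x
  -- abbreviations
  set A : F := a ^ q with hA
  have hA0 : A ≠ 0 := pow_ne_zero q ha
  have hAq : A ^ q = a := hqq a
  set T : F := c ^ q + c with hT
  have hT0 : T ≠ 0 := hc
  have hTq : T ^ q = T := by rw [hT, hqadd, hqq]; ring
  have hΔ' : Δ = 1 - 4 * (a * A) := by rw [hΔ, pow_succ, hA]; ring
  -- the set recast
  have hIS : I = {x : F | x ^ q * x = A * (x ^ q) ^ 2 + a * x ^ 2 + T}.ncard := by
    rw [hI]
    have himg : {p : F × F | p.1 ^ (q + 1) = p.2 ^ q + p.2 ∧ p.2 = a * p.1 ^ 2 + c}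
        = (fun x : F => (x, a * x ^ 2 + c)) ''
          {x : F | x ^ q * x = A * (x ^ q) ^ 2 + a * x ^ 2 + T} := by
      have hpt : ∀ x : F, (x ^ (q + 1) = (a * x ^ 2 + c) ^ q + (a * x ^ 2 + c)) ↔
          (x ^ q * x = A * (x ^ q) ^ 2 + a * x ^ 2 + T) := by
        intro x
        rw [pow_succ, hqadd, hqmul, ← pow_mul, mul_comm 2 q, pow_mul, hT, hA]
        constructor <;> intro h <;> linear_combination h
      ext ⟨x, y⟩
      simp only [Set.mem_setOf_eq, Set.mem_image]
      constructor
      · rintro ⟨h1, rfl⟩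
        exact ⟨x, (hpt x).mp h1, rfl⟩
      · rintro ⟨x', hx', h'⟩
        injection h' with e1 e2
        subst e1; subst e2
        exact ⟨(hpt x').mpr hx', rfl⟩
    rw [himg, Set.ncard_image_of_injective _ (fun u v huv => congrArg Prod.fst huv)]
  set S : Set F := {x : F | x ^ q * x = A * (x ^ q) ^ 2 + a * x ^ 2 + T} with hSdef
  -- counting infrastructure
  have hNfact : (q + 1) * (q - 1) = q ^ 2 - 1 := by
    have h1 : 1 ≤ q ^ 2 := Nat.one_le_pow _ _ (by omega)
    zify [show 1 ≤ q by omega, h1]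
    ring
  have hcount1 : ∀ ρ : F, ρ ≠ 0 → ρ ^ q = ρ → {u : F | u ^ (q + 1) = ρ}.ncard = q + 1 := by
    intro ρ hρ0 hρq
    have hpow : ρ ^ ((q ^ 2 - 1) / (q + 1)) = 1 := by
      have h1 : (q ^ 2 - 1) / (q + 1) = q - 1 := by
        rw [← hNfact, Nat.mul_div_cancel_left _ (by omega)]
      rw [h1]
      have h2 : ρ ^ (q - 1) * ρ = ρ := by
        rw [← pow_succ, show q - 1 + 1 = q by omega, hρq]
      exact mul_right_cancel₀ hρ0 (by rw [h2, one_mul])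
    exact aux_count (by omega) (by rw [hF]) ⟨q - 1, hNfact.symm⟩ hρ0 hpow
  have hcount2 : ∀ s : F, s ≠ 0 → s ^ (q + 1) = 1 → {u : F | u ^ (q - 1) = s}.ncard = q - 1 := by
    intro s hs0 hsq
    have h1 : (q ^ 2 - 1) / (q - 1) = q + 1 := by
      rw [← hNfact, mul_comm, Nat.mul_div_cancel_left _ (by omega)]
    exact aux_count (by omega) (by rw [hF]) ⟨q + 1, by rw [← hNfact, mul_comm]⟩ hs0 (by rw [h1, hsq])
  refine ⟨?_, ?_, ?_⟩
  · -- case A : Δ ≠ 0 square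
    rintro hΔ0 ⟨z, hzq, hz2⟩
    have hz2' : z ^ 2 = 1 - 4 * (a * A) := by rw [hz2, hΔ']
    have hz0 : z ≠ 0 := by
      rintro rfl
      exact hΔ0 (by rw [← hz2]; norm_num)
    have haA : (4 : F) * (a * A) ≠ 0 :=
      mul_ne_zero h4F (mul_ne_zero ha hA0)
    have hz1 : (1 : F) - z ≠ 0 := by
      intro h
      exact haA (by linear_combination hz2' + (1 + z) * h)
    have hz1' : (1 : F) + z ≠ 0 := by
      intro h
      exact haA (by linear_combination hz2' + (1 - z) * h)
    set U : F → F := fun x => 2 * A * x ^ q - (1 + z) * x with hU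
    set ρ : F := 2 * (1 + z) * T with hρ
    have hρ0 : ρ ≠ 0 := mul_ne_zero (mul_ne_zero h2F hz1') hT0
    have hρq : ρ ^ q = ρ := by
      rw [hρ, hqmul, hqmul, h2q, hqadd, hqone, hzq, hTq]
    have hUq : ∀ x : F, (U x) ^ q = 2 * a * x - (1 + z) * x ^ q := by
      intro x
      simp only [hU, hqsub, hqmul, hqadd, hqone, h2q, hAq, hqq, hzq]
    have hkey : ∀ x : F, x ∈ S ↔ (U x) ^ (q + 1) = ρ := by
      intro x
      have hprod : (U x) ^ (q + 1)
          = 2 * (1 + z) * (x ^ q * x - a * x ^ 2 - A * (x ^ q) ^ 2) := by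
        rw [pow_succ, hUq]
        simp only [hU]
        linear_combination (x * x ^ q) * hz2'
      simp only [hSdef, Set.mem_setOf_eq]
      constructor
      · intro h
        rw [hprod, hρ]
        linear_combination 2 * (1 + z) * h
      · intro h
        rw [hprod, hρ] at h
        have h2z : (2 : F) * (1 + z) ≠ 0 := mul_ne_zero h2F hz1'
        have h' := mul_left_cancel₀ h2z h
        linear_combination h'
    have hUinj : Function.Injective U := by
      intro x y hxy
      simp only [hU] at hxy
      have e0 : 2 * A * (x ^ q - y ^ q) = (1 + z) * (x - y) := by
        linear_combination hxy
      have e1 : 2 * a * (x - y) = (1 + z) * (x ^ q - y ^ q) := by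
        have h' := congrArg (· ^ q) e0
        simp only [hqsub, hqmul, hqadd, hqone, h2q, hAq, hqq, hzq] at h'
        linear_combination h'
      have e2 : (2 * z * (1 + z)) * (x - y) = 0 := by
        linear_combination (-(1 + z)) * e0 + (-(2 * A)) * e1 + (x - y) * hz2'
      have hnz : (2 : F) * z * (1 + z) ≠ 0 := mul_ne_zero (mul_ne_zero h2F hz0) hz1'
      have h0 := (mul_eq_zero.mp e2).resolve_left hnz
      linear_combination h0
    have himg : U '' S = {u : F | u ^ (q + 1) = ρ} := by
      apply Set.Subset.antisymm
      · rintro _ ⟨x, hx, rfl⟩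
        exact (hkey x).mp hx
      · rintro u hu
        simp only [Set.mem_setOf_eq] at hu
        set x : F := -((1 + z) * u + 2 * A * u ^ q) / (2 * z * (1 + z)) with hx
        have hnz : (2 : F) * z * (1 + z) ≠ 0 := mul_ne_zero (mul_ne_zero h2F hz0) hz1'
        have hxq : x ^ q = -((1 + z) * u ^ q + 2 * a * u) / (2 * z * (1 + z)) := by
          rw [hx]
          simp only [hqdiv, hqneg, hqadd, hqmul, hqone, h2q, hAq, hqq, hzq]
        have hUx : U x = u := by
          simp only [hU]
          rw [hxq, hx]
          field_simp
          linear_combination (-u) * hz2'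
        exact ⟨x, (hkey x).mpr (by rw [hUx]; exact hu), hUx⟩
    have hcard := Set.ncard_image_of_injective S hUinj
    rw [himg] at hcard
    rw [hIS, ← hcard]
    exact hcount1 ρ hρ0 hρq
  · -- case B : nonsquare
    intro hnex
    have hΔ0 : Δ ≠ 0 := by
      intro h
      exact hnex ⟨0, by rw [zero_pow hq0], by rw [h]; ring⟩
    have haA : (4 : F) * (a * A) ≠ 0 := mul_ne_zero h4F (mul_ne_zero ha hA0)
    have h4AT : -(4 * A * T) ≠ 0 :=
      neg_ne_zero.mpr (mul_ne_zero (mul_ne_zero h4F hA0) hT0)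
    have hΔq : Δ ^ q = Δ := by
      rw [hΔ', hqsub, hqone, hqmul, hqmul, h4q, hAq]
      rw [show (a ^ q : F) = A from rfl]
      ring
    have hΔq1 : Δ ^ (q - 1) = 1 := by
      apply mul_right_cancel₀ hΔ0
      rw [← pow_succ, show q - 1 + 1 = q by omega, hΔq, one_mul]
    have hcard2 : Fintype.card F / 2 = (q - 1) * ((q + 1) / 2) := by
      rw [hF]
      obtain ⟨m, hm⟩ := hodd
      have h1 : (q + 1) / 2 = m + 1 := by omega
      have h2 : q - 1 = 2 * m := by omega
      rw [h1, h2]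
      have h3 : q ^ 2 = (2 * m * (m + 1)) * 2 + 1 := by rw [hm]; ring
      generalize hQ : q ^ 2 = Q at h3 ⊢
      generalize 2 * m * (m + 1) = K at h3 ⊢
      omega
    have hEuler : Δ ^ (Fintype.card F / 2) = 1 := by
      rw [hcard2, pow_mul, hΔq1, one_pow]
    have hring2 : ringChar F ≠ 2 := by
      rw [ringChar.eq F p]
      exact hpodd
    obtain ⟨δ, hδ⟩ := (FiniteField.isSquare_iff hring2 hΔ0).mpr hEuler
    have hδ2 : δ ^ 2 = Δ := by rw [hδ]; ring
    have hδ0 : δ ≠ 0 := by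
      rintro rfl
      exact hΔ0 (by rw [← hδ2]; ring)
    have hδq : δ ^ q = -δ := by
      have h1 : (δ ^ q) ^ 2 = Δ := by
        calc (δ ^ q) ^ 2 = (δ ^ 2) ^ q := by rw [← pow_mul, ← pow_mul, mul_comm]
        _ = Δ ^ q := by rw [hδ2]
        _ = Δ := hΔq
      have hsq : (δ ^ q - δ) * (δ ^ q + δ) = 0 := by
        linear_combination h1 - hδ2
      rcases mul_eq_zero.mp hsq with h | h
      · exact absurd ⟨δ, by linear_combination h, hδ2⟩ hnex
      · linear_combination h
    have hδ2' : δ ^ 2 = 1 - 4 * (a * A) := by rw [hδ2, hΔ']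
    have hδ1 : (1 : F) - δ ≠ 0 := fun h => haA (by linear_combination hδ2' + (1 + δ) * h)
    have hδ1' : (1 : F) + δ ≠ 0 := fun h => haA (by linear_combination hδ2' + (1 - δ) * h)
    set U : F → F := fun x => 2 * A * x ^ q - (1 + δ) * x with hU
    set V : F → F := fun x => 2 * A * x ^ q - (1 - δ) * x with hV
    set s : F := -(1 - δ) / (2 * A) with hs
    have hs0 : s ≠ 0 := div_ne_zero (neg_ne_zero.mpr hδ1) (mul_ne_zero h2F hA0)
    have hsq' : s ^ q = -(1 + δ) / (2 * a) := by
      rw [hs, hqdiv, hqneg, hqsub, hqone, hδq, hqmul, h2q, hAq]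
      ring
    have hs1 : s ^ (q + 1) = 1 := by
      rw [pow_succ, hsq', hs]
      field_simp
      linear_combination -hδ2'
    have hUq : ∀ x : F, (U x) ^ q = s * U x := by
      intro x
      simp only [hU, hqsub, hqmul, hqadd, hqone, h2q, hAq, hqq, hδq]
      rw [hs]
      field_simp
      linear_combination x * hδ2'
    have hUV : ∀ x : F, x ∈ S ↔ U x * V x = -(4 * A * T) := by
      intro x
      simp only [hSdef, Set.mem_setOf_eq, hU, hV]
      constructor <;> intro h
      · linear_combination (-(4 * A)) * h - x ^ 2 * hδ2'
      · apply mul_left_cancel₀ (mul_ne_zero h4F hA0)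
        linear_combination -h - x ^ 2 * hδ2'
    have hUne : ∀ x ∈ S, U x ≠ 0 := by
      intro x hx h0
      have h1 := (hUV x).mp hx
      rw [h0, zero_mul] at h1
      exact h4AT h1.symm
    have himg : U '' S = {u : F | u ^ (q - 1) = s} := by
      apply Set.Subset.antisymm
      · rintro _ ⟨x, hx, rfl⟩
        simp only [Set.mem_setOf_eq]
        apply mul_right_cancel₀ (hUne x hx)
        rw [← pow_succ, show q - 1 + 1 = q by omega]
        exact hUq x
      · rintro u hu
        simp only [Set.mem_setOf_eq] at hu
        have hu0 : u ≠ 0 := by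
          rintro rfl
          rw [zero_pow (show q - 1 ≠ 0 by omega)] at hu
          exact hs0 hu.symm
        have huq' : 2 * A * u ^ q = -(1 - δ) * u := by
          have h1 : u ^ q = s * u := by
            rw [show q = q - 1 + 1 by omega, pow_succ, hu]
          rw [h1, hs]
          field_simp
        set v : F := -(4 * A * T) / u with hv
        have hv0 : v ≠ 0 := div_ne_zero h4AT hu0
        have hunq : u ^ q ≠ 0 := pow_ne_zero _ hu0
        have hvq' : 2 * A * v ^ q = -(1 + δ) * v := by
          rw [hv, hqdiv, hqneg, hqmul, hqmul, h4q, hAq, hTq]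
          field_simp
          apply mul_left_cancel₀ (mul_ne_zero h2F hA0)
          linear_combination (-(1 + δ)) * huq' - u * hδ2'
        set x : F := (v - u) / (2 * δ) with hx
        have hxq : x ^ q = (v ^ q - u ^ q) / -(2 * δ) := by
          rw [hx, hqdiv, hqsub, hqmul, h2q, hδq]
          ring
        have hUx : U x = u := by
          simp only [hU]
          rw [hxq, hx]
          field_simp
          linear_combination -hvq' + huq'
        have hVx : V x = v := by
          simp only [hV]
          rw [hxq, hx]
          field_simp
          linear_combination -hvq' + huq'
        refine ⟨x, (hUV x).mpr ?_, hUx⟩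
        rw [hUx, hVx, hv]
        field_simp
    have hinj : Set.InjOn U S := by
      intro x hx y hy hxy
      have hVxy : V x = V y := by
        apply mul_left_cancel₀ (hUne x hx)
        rw [(hUV x).mp hx, hxy, (hUV y).mp hy]
      have h2δ : 2 * δ * x = 2 * δ * y := by
        simp only [hU, hV] at hxy hVxy
        linear_combination hVxy - hxy
      exact mul_left_cancel₀ (mul_ne_zero h2F hδ0) h2δ
    have hcard := Set.ncard_image_of_injOn hinj
    rw [himg] at hcard
    rw [hIS, ← hcard]
    exact hcount2 s hs0 hs1
  · -- case C : Δ = 0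
    intro hΔ0
    have h4aA : 4 * (a * A) = 1 := by
      rw [hΔ0] at hΔ'
      linear_combination hΔ'
    have h4AT : -(4 * A * T) ≠ 0 := by
      simp only [neg_ne_zero]
      exact mul_ne_zero (mul_ne_zero h4F hA0) hT0
    set U : F → F := fun x => 2 * A * x ^ q - x with hU
    have hfac : ∀ x : F, x ∈ S ↔ (U x) ^ 2 = -(4 * A * T) := by
      intro x
      simp only [hSdef, Set.mem_setOf_eq, hU]
      constructor <;> intro h
      · linear_combination (-(4 * A)) * h + (-(x ^ 2)) * h4aA
      · apply mul_left_cancel₀ (mul_ne_zero h4F hA0)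
        linear_combination -h - x ^ 2 * h4aA
    by_cases hex : ∃ x₀ : F, (U x₀) ^ 2 = -(4 * A * T)
    · right
      obtain ⟨x₀, hx₀⟩ := hex
      set w : F := U x₀ with hw
      have hw0 : w ≠ 0 := by
        intro h
        exact h4AT (by rw [← hx₀, h]; ring)
      have hUadd : ∀ x y : F, U (x + y) = U x + U y := by
        intro x y; simp only [hU, hqadd]; ring
      have hUneg : ∀ x : F, U (-x) = -(U x) := by
        intro x; simp only [hU, hqneg]; ring
      set s₀ : F := 1 / (2 * A) with hs₀def
      have hs₀0 : s₀ ≠ 0 := by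
        rw [hs₀def]
        exact one_div_ne_zero (mul_ne_zero h2F hA0)
      have hs₀q : s₀ ^ (q + 1) = 1 := by
        rw [pow_succ, hs₀def, hqdiv, hqone, hqmul, h2q, hAq]
        field_simp
        linear_combination -h4aA
      have hKset : {y : F | U y = 0} = insert (0 : F) {y : F | y ^ (q - 1) = s₀} := by
        ext y
        simp only [hU, Set.mem_setOf_eq, Set.mem_insert_iff]
        constructor
        · intro h
          by_cases hy : y = 0
          · exact Or.inl hy
          · right
            apply mul_right_cancel₀ hy
            rw [← pow_succ, show q - 1 + 1 = q by omega, hs₀def]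
            field_simp
            linear_combination h
        · rintro (rfl | h)
          · simp [zero_pow hq0]
          · have hyq : y ^ q = s₀ * y := by
              rw [show q = q - 1 + 1 by omega, pow_succ, h]
            rw [hyq, hs₀def]
            field_simp
            ring
        
      have hK : {y : F | U y = 0}.ncard = q := by
        rw [hKset, Set.ncard_insert_of_notMem (by
            simp only [Set.mem_setOf_eq]
            rw [zero_pow (show q - 1 ≠ 0 by omega)]
            exact fun h => hs₀0 h.symm) (Set.toFinite _),
          hcount2 s₀ hs₀0 hs₀q]
        omega
      have hSsplit : S = ((fun y => y + x₀) '' {y : F | U y = 0})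
          ∪ ((fun y => y + (-x₀)) '' {y : F | U y = 0}) := by
        ext x
        simp only [Set.mem_union, Set.mem_image, Set.mem_setOf_eq]
        rw [hfac x]
        constructor
        · intro h
          have hfac2 : (U x - w) * (U x + w) = 0 := by
            linear_combination h - hx₀
          rcases mul_eq_zero.mp hfac2 with h' | h'
          · left
            refine ⟨x - x₀, ?_, by ring⟩
            have := hUadd (x - x₀) x₀
            rw [show x - x₀ + x₀ = x by ring] at this
            linear_combination h' - this
          · right
            refine ⟨x + x₀, ?_, by ring⟩
            have := hUadd (x + x₀) (-x₀)
            rw [show x + x₀ + -x₀ = x by ring, hUneg] at this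
            linear_combination h' - this
        · rintro (⟨y, hy, rfl⟩ | ⟨y, hy, rfl⟩)
          · show U (y + x₀) ^ 2 = -(4 * A * T)
            rw [hUadd, hy, zero_add, ← hw, hx₀]
          · show U (y + -x₀) ^ 2 = -(4 * A * T)
            rw [hUadd, hy, zero_add, hUneg, neg_sq, ← hw, hx₀]
      have hdisj : Disjoint ((fun y => y + x₀) '' {y : F | U y = 0})
          ((fun y => y + (-x₀)) '' {y : F | U y = 0}) := by
        rw [Set.disjoint_left]
        rintro _ ⟨y, hy, rfl⟩ ⟨y', hy', he⟩
        have h1 : U (y + x₀) = w := by rw [hUadd, hy, zero_add]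
        have he' : y' + -x₀ = y + x₀ := he
        have h2 : U (y + x₀) = -w := by
          rw [← he', hUadd, hy', zero_add, hUneg]
        apply hw0
        have h2w : (2 : F) * w = 0 := by linear_combination h2 - h1
        rcases mul_eq_zero.mp h2w with h | h
        · exact absurd h h2F
        · exact h
      rw [hIS, hSsplit, Set.ncard_union_eq hdisj (Set.toFinite _) (Set.toFinite _),
        Set.ncard_image_of_injective _ (add_left_injective x₀),
        Set.ncard_image_of_injective _ (add_left_injective (-x₀)), hK]
      ring
    · left
      have hempty : S = ∅ := by
        ext x
        simp only [Set.mem_empty_iff_false, iff_false]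
        intro hx
        exact hex ⟨x, (hfac x).mp hx⟩
      rw [hIS, hempty, Set.ncard_empty]
end

section
/- Let q be an odd power of a prime and let F be the finite field with q² elements. Let a, v ∈ F be such that (2a)^(q+1) = 1 (i.e. N(2a) = 1) and v^q + 2·a·v ≠ 0. Then the Hermitian curve intersects the parabola y = a·(x+v)² in exactly q points, i.e. the set {(x,y) ∈ F×F : x^(q+1) = y^q + y and y = a·(x+v)²} has cardinality q. -/
theorem stmt_10 (q : ℕ) (hq : IsPrimePow q) (hodd : Odd q) (F : Type*) [Field F] [Fintype F]
    (hF : Fintype.card F = q ^ 2) (a v : F)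
    (h1 : (2 * a) ^ (q + 1) = 1) (h2 : v ^ q + 2 * a * v ≠ 0) :
    Set.ncard {p : F × F | p.1 ^ (q + 1) = p.2 ^ q + p.2 ∧
        p.2 = a * (p.1 + v) ^ 2} = q := by
  classical
  obtain ⟨r, n, hr, hn, hrn⟩ := hq
  have hrp : Nat.Prime r := hr.nat_prime
  haveI : Fact (Nat.Prime r) := ⟨hrp⟩
  have hq2 : 2 ≤ q := by
    calc 2 ≤ r := hrp.two_le
    _ ≤ r ^ n := Nat.le_self_pow (by omega) r
    _ = q := hrn
  have hq0 : 0 < q := by omega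
  -- characteristic
  obtain ⟨m, hpchar, hcardm⟩ := FiniteField.card F (ringChar F)
  have hrchar : r = ringChar F := by
    have hdvd : r ∣ ringChar F ^ (m : ℕ) := by
      rw [← hcardm, hF, ← hrn, ← pow_mul]
      exact dvd_pow_self r (by positivity)
    exact (Nat.prime_dvd_prime_iff_eq hrp hpchar).mp (hrp.dvd_of_dvd_pow hdvd)
  haveI hcharF : CharP F r := hrchar ▸ ringChar.charP F
  have hrodd : Odd r := by
    rcases hrp.eq_two_or_odd' with h | h
    · exfalso
      rw [← hrn, h, ← Nat.not_even_iff_odd] at hodd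
      exact hodd ((Nat.even_pow).mpr ⟨even_two, by omega⟩)
    · exact h
  have h2F0 : (2 : F) ≠ 0 := by
    intro h
    have h' : (2 : F) = ((2 : ℕ) : F) := by norm_num
    have := (CharP.cast_eq_zero_iff F r 2).mp (by rw [← h']; exact h)
    have : r = 2 := (Nat.prime_dvd_prime_iff_eq hrp Nat.prime_two).mp this
    rw [this] at hrodd
    exact (Nat.not_odd_iff_even.mpr even_two) hrodd
  -- Frobenius facts
  have fsub : ∀ x y : F, (x - y) ^ q = x ^ q - y ^ q := by
    intro x y; rw [← hrn]; exact sub_pow_char_pow (p := r) x y n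
  have fadd : ∀ x y : F, (x + y) ^ q = x ^ q + y ^ q := by
    intro x y; rw [← hrn]; exact add_pow_char_pow (p := r) x y n
  have hpow : ∀ x : F, (x ^ q) ^ q = x := by
    intro x
    rw [← pow_mul, ← sq, ← hF]
    exact FiniteField.pow_card x
  have h2q : (2 : F) ^ q = 2 := by
    have h' : ((1 : F) + 1) ^ q = 1 ^ q + 1 ^ q := fadd 1 1
    norm_num at h'
    exact h'
  have ha0 : a ≠ 0 := by
    rintro rfl
    rw [mul_zero, zero_pow (by omega)] at h1
    exact zero_ne_one h1
  have h4a0 : (4 : F) * a ≠ 0 := by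
    have h4 : (4 : F) ≠ 0 := by
      intro h
      apply h2F0
      have h22 : (2 : F) * 2 = 0 := by rw [show (2:F)*2 = 4 by norm_num, h]
      rcases mul_eq_zero.mp h22 with h' | h' <;> exact h'
    exact mul_ne_zero h4 ha0
  have hb : 4 * (a ^ q * a) = 1 := by
    have e : (2 * a) ^ (q + 1) = (2 : F) ^ q * 2 * (a ^ q * a) := by
      rw [mul_pow, pow_succ, pow_succ]
    rw [e, h2q] at h1
    linear_combination h1
  -- the key sets
  set S : Set F := {u : F | (u ^ q - 2 * a * u) ^ 2 = 4 * a * (v ^ q * v - (v * u ^ q + v ^ q * u))} with hSdef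
  set Ψ : F → F × F := fun u => (u ^ q - 2 * a * u, v * u ^ q + v ^ q * u) with hΨdef
  set L : Set F := {s : F | 2 * a * s ^ q + s = 0} with hLdef
  set T : Set F := {t : F | t ^ q = t} with hTdef
  set Γ : Set (F × F) :=
    {s : F × F | (2 * a * s.1 ^ q + s.1 = 0) ∧ s.2 ^ q = s.2 ∧ s.1 ^ 2 = 4 * a * (v ^ q * v - s.2)}
    with hΓdef
  -- equivalence of curve equation with S condition
  have key : ∀ u : F, ((u - v) ^ (q + 1) = (a * u ^ 2) ^ q + a * u ^ 2 ↔
      (u ^ q - 2 * a * u) ^ 2 = 4 * a * (v ^ q * v - (v * u ^ q + v ^ q * u))) := by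
    intro u
    have e1 : (u - v) ^ (q + 1) = (u ^ q - v ^ q) * (u - v) := by
      rw [pow_succ, fsub]
    have e2 : (a * u ^ 2) ^ q = a ^ q * (u ^ q) ^ 2 := by
      rw [mul_pow, ← pow_mul, mul_comm 2 q, pow_mul]
    rw [e1, e2]
    constructor
    · intro h
      linear_combination (-4 * a) * h - (u ^ q) ^ 2 * hb
    · intro h
      apply mul_left_cancel₀ h4a0
      linear_combination (-1 : F) * h - (u ^ q) ^ 2 * hb
  -- main set is the image of S
  have hset : {p : F × F | p.1 ^ (q + 1) = p.2 ^ q + p.2 ∧ p.2 = a * (p.1 + v) ^ 2}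
      = (fun u => (u - v, a * u ^ 2)) '' S := by
    ext ⟨x, y⟩
    simp only [Set.mem_setOf_eq, Set.mem_image]
    constructor
    · rintro ⟨hc, hy⟩
      refine ⟨x + v, ?_, ?_⟩
      · show (x + v) ∈ S
        rw [hSdef, Set.mem_setOf_eq, ← key (x + v), add_sub_cancel_right, ← hy]
        exact hc
      · simp only [add_sub_cancel_right, Prod.mk.injEq]
        exact ⟨trivial, hy.symm⟩
    · rintro ⟨u, hu, heq⟩
      rw [hSdef, Set.mem_setOf_eq] at hu
      injection heq with hx hy
      subst hx; subst hy
      refine ⟨(key u).mpr hu, ?_⟩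
      rw [sub_add_cancel]
  -- membership lemmas for Ψ
  have hwL : ∀ x : F, 2 * a * (x ^ q - 2 * a * x) ^ q + (x ^ q - 2 * a * x) = 0 := by
    intro x
    have hwq : (x ^ q - 2 * a * x) ^ q = x - 2 * a ^ q * x ^ q := by
      rw [fsub, hpow, mul_pow, mul_pow, h2q]
    rw [hwq]
    linear_combination (-(x ^ q)) * hb
  have htT : ∀ x : F, (v * x ^ q + v ^ q * x) ^ q = v * x ^ q + v ^ q * x := by
    intro x
    rw [fadd, mul_pow, mul_pow, hpow, hpow]
    ring
  -- Ψ is injective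
  have hinj : Function.Injective Ψ := by
    intro u u' h
    have h1' : u ^ q - 2 * a * u = u' ^ q - 2 * a * u' := congrArg Prod.fst h
    have h2' : v * u ^ q + v ^ q * u = v * u' ^ q + v ^ q * u' := congrArg Prod.snd h
    have hz : (u - u') * (v ^ q + 2 * a * v) = 0 := by linear_combination h2' - v * h1'
    rcases mul_eq_zero.mp hz with h' | h'
    · exact sub_eq_zero.mp h'
    · exact absurd h' h2
  -- root-count bound
  have hcount : ∀ c d : F, c ≠ 0 → {x : F | c * x ^ q + d * x = 0}.ncard ≤ q := by
    intro c d hc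
    set P : Polynomial F := Polynomial.C c * Polynomial.X ^ q + Polynomial.C d * Polynomial.X with hP
    have hdeg1 : (Polynomial.C c * Polynomial.X ^ q : Polynomial F).natDegree = q :=
      Polynomial.natDegree_C_mul_X_pow q c hc
    have hdeg2 : (Polynomial.C d * Polynomial.X : Polynomial F).natDegree ≤ 1 := by
      simpa using Polynomial.natDegree_C_mul_X_pow_le d 1
    have hdeg : P.natDegree = q := by
      rw [hP, Polynomial.natDegree_add_eq_left_of_natDegree_lt (by omega), hdeg1]
    have hPne : P ≠ 0 := by
      intro h
      rw [h, Polynomial.natDegree_zero] at hdeg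
      omega
    have hsub : {x : F | c * x ^ q + d * x = 0} ⊆ (P.roots.toFinset : Set F) := by
      intro x hx
      simp only [Set.mem_setOf_eq] at hx
      simp only [Finset.coe_sort_coe, Finset.mem_coe, Multiset.mem_toFinset,
        Polynomial.mem_roots hPne, Polynomial.IsRoot, hP]
      simp [hx]
      exact hPne
    calc {x : F | c * x ^ q + d * x = 0}.ncard ≤ (P.roots.toFinset : Set F).ncard :=
          Set.ncard_le_ncard hsub (Set.toFinite _)
      _ = P.roots.toFinset.card := Set.ncard_coe_finset _
      _ ≤ Multiset.card P.roots := Multiset.toFinset_card_le _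
      _ ≤ P.natDegree := Polynomial.card_roots' P
      _ = q := hdeg
  have hLle : L.ncard ≤ q := by
    have := hcount (2 * a) 1 (mul_ne_zero h2F0 ha0)
    have hLeq : L = {x : F | 2 * a * x ^ q + 1 * x = 0} := by
      rw [hLdef]; ext x; simp [one_mul]
    rw [hLeq]; exact this
  have hTle : T.ncard ≤ q := by
    have := hcount 1 (-1) one_ne_zero
    have hTeq : T = {x : F | 1 * x ^ q + (-1) * x = 0} := by
      rw [hTdef]; ext x
      simp only [Set.mem_setOf_eq, one_mul, neg_one_mul]
      constructor
      · intro h; linear_combination h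
      · intro h; linear_combination h
    rw [hTeq]; exact this
  -- range of Ψ equals L ×ˢ T
  have hrsub : Set.range Ψ ⊆ L ×ˢ T := by
    rintro _ ⟨u, rfl⟩
    exact ⟨hwL u, htT u⟩
  have hcard_range : (Set.range Ψ).ncard = q ^ 2 := by
    rw [← Set.image_univ, Set.ncard_image_of_injective _ hinj, Set.ncard_univ,
      Nat.card_eq_fintype_card, hF]
  have hprodcard : (L ×ˢ T).ncard = L.ncard * T.ncard := by
    rw [← Nat.card_coe_set_eq, ← Nat.card_coe_set_eq, ← Nat.card_coe_set_eq,
      Nat.card_congr (Equiv.Set.prod L T), Nat.card_prod]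
  have hrange_eq : Set.range Ψ = L ×ˢ T := by
    apply Set.eq_of_subset_of_ncard_le hrsub
    rw [hcard_range, hprodcard, pow_two]
    exact Nat.mul_le_mul hLle hTle
  have hLcard : L.ncard = q := by
    have he : L.ncard * T.ncard = q ^ 2 := by rw [← hprodcard, ← hrange_eq, hcard_range]
    nlinarith [hLle, hTle, he]
  -- S as preimage of Γ
  have hSpre : S = Ψ ⁻¹' Γ := by
    ext u
    simp only [hSdef, hΓdef, hΨdef, Set.mem_setOf_eq, Set.mem_preimage]
    constructor
    · intro hu
      exact ⟨hwL u, htT u, hu⟩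
    · rintro ⟨_, _, h⟩
      exact h
  have hΓsub : Γ ⊆ Set.range Ψ := by
    rw [hrange_eq]
    rintro s ⟨hs1, hs2, _⟩
    exact ⟨hs1, hs2⟩
  have himg : Ψ '' S = Γ := by
    rw [hSpre, Set.image_preimage_eq_inter_range, Set.inter_eq_left.mpr hΓsub]
  have hScard : S.ncard = Γ.ncard := by
    rw [← himg, Set.ncard_image_of_injective _ hinj]
  -- Γ bijects with L via first projection
  have hbij : Set.BijOn Prod.fst Γ L := by
    refine ⟨fun s hs => hs.1, ?_, ?_⟩
    · rintro s ⟨_, _, hs3⟩ s' ⟨_, _, hs3'⟩ hfst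
      have hsnd : s.2 = s'.2 := by
        have e : 4 * a * (v ^ q * v - s.2) = 4 * a * (v ^ q * v - s'.2) := by
          rw [← hs3, ← hs3', hfst]
        have h5 := mul_left_cancel₀ h4a0 e
        linear_combination -h5
      exact Prod.ext hfst hsnd
    · intro w hw
      rw [hLdef, Set.mem_setOf_eq] at hw
      refine ⟨(w, v ^ q * v - w ^ 2 * a ^ q), ⟨hw, ?_, ?_⟩, rfl⟩
      · -- t ^ q = t
        have e1 : (v ^ q * v - w ^ 2 * a ^ q) ^ q
            = (v ^ q * v) ^ q - (w ^ 2 * a ^ q) ^ q := fsub _ _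
        have e2 : (v ^ q * v) ^ q = v * v ^ q := by rw [mul_pow, hpow]
        have e3 : (w ^ 2 * a ^ q) ^ q = (w ^ q) ^ 2 * a := by
          rw [mul_pow, hpow, ← pow_mul, mul_comm 2 q, pow_mul]
        rw [e1, e2, e3]
        clear_value S Ψ L T Γ
        have hkey : 4 * a * ((w ^ q) ^ 2 * a) = 4 * a * (w ^ 2 * a ^ q) := by
          linear_combination (2 * a * w ^ q - w) * hw - w ^ 2 * hb
        have h6 := mul_left_cancel₀ h4a0 hkey
        linear_combination -h6
      · linear_combination (-(w ^ 2)) * hb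
  have hΓcard : Γ.ncard = L.ncard := by
    rw [← hbij.image_eq]
    exact (Set.ncard_image_of_injOn hbij.injOn).symm
  -- conclusion
  have hginj : Function.Injective (fun u : F => (u - v, a * u ^ 2)) := by
    intro u u' h
    have := congrArg Prod.fst h
    simpa using this
  rw [hset, Set.ncard_image_of_injective _ hginj, hScard, hΓcard, hLcard]
end

section
/- Let q = 2^e with e ≥ 1 and let F be the finite field with q² elements. Let a ∈ F, a ≠ 0, and let I be the cardinality of {(x,y) ∈ F×F : x^(q+1) = y^q + y and y = a·x²}. If there exists z ∈ F with z^q = z and z² + z = a^(q+1) (i.e. the absolute trace of a^(q+1) from F_q to F_2 is 0), then I = 1; otherwise I = 2q − 1. -/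
open Polynomial in
lemma aux_root_bound {F : Type*} [Field F] (P : Polynomial F) (hP : P ≠ 0) :
    Set.ncard {x : F | P.eval x = 0} ≤ P.natDegree := by
  classical
  have hsub : {x : F | P.eval x = 0} ⊆ (P.roots.toFinset : Set F) := by
    intro x hx
    simp only [Multiset.mem_toFinset, Finset.coe_sort_coe, Finset.mem_coe]
    rw [Polynomial.mem_roots hP]
    exact hx
  calc Set.ncard {x : F | P.eval x = 0} ≤ (P.roots.toFinset : Finset F).card := by
        simpa [Set.ncard_coe_finset] using Set.ncard_le_ncard hsub (Finset.finite_toSet _)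
    _ ≤ P.roots.card := Multiset.toFinset_card_le _
    _ ≤ P.natDegree := Polynomial.card_roots' P

lemma aux_pow_bound {F : Type*} [Field F] (n : ℕ) (hn : 0 < n) (c : F) :
    Set.ncard {x : F | x ^ n = c} ≤ n := by
  have h0 : (Polynomial.X ^ n - Polynomial.C c : Polynomial F) ≠ 0 :=
    Polynomial.X_pow_sub_C_ne_zero hn c
  have := aux_root_bound (Polynomial.X ^ n - Polynomial.C c) h0
  rw [Polynomial.natDegree_X_pow_sub_C] at this
  refine le_trans (le_of_eq ?_) this
  congr 1
  ext x
  simp [sub_eq_zero]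

lemma aux_card_hom {G H : Type*} [Group G] [Group H] (f : G →* H) :
    Nat.card G = Nat.card f.range * Nat.card f.ker := by
  rw [Subgroup.card_eq_card_quotient_mul_card_subgroup f.ker,
    Nat.card_congr (QuotientGroup.quotientKerEquivRange f).toEquiv]

lemma aux_card_addhom {G H : Type*} [AddGroup G] [AddGroup H] (f : G →+ H) :
    Nat.card G = Nat.card f.range * Nat.card f.ker := by
  rw [AddSubgroup.card_eq_card_quotient_mul_card_addSubgroup f.ker,
    Nat.card_congr (QuotientAddGroup.quotientKerEquivRange f).toEquiv]

lemma aux_qsq (q : ℕ) (hq : 2 ≤ q) : (q + 1) * (q - 1) = q ^ 2 - 1 := by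
  obtain ⟨k, rfl⟩ := Nat.exists_eq_add_of_le hq
  have h1 : 2 + k - 1 = k + 1 := by omega
  have h2 : (2 + k) ^ 2 = (2 + k + 1) * (k + 1) + 1 := by ring
  rw [h1]
  omega

-- cardinality of the fixed set {x | x^q = x} is at most q
lemma aux_fix_bound {F : Type*} [Field F] [Fintype F] (q : ℕ) (hq : 2 ≤ q) :
    Set.ncard {x : F | x ^ q = x} ≤ q := by
  have hsub : {x : F | x ^ q = x} ⊆ insert (0:F) {x : F | x ^ (q-1) = 1} := by
    intro x hx
    rcases eq_or_ne x 0 with h | h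
    · rw [h]; exact Set.mem_insert _ _
    · right
      have : x ^ (q - 1) * x = 1 * x := by
        rw [one_mul]
        calc x ^ (q-1) * x = x ^ (q - 1 + 1) := by rw [pow_succ]
          _ = x ^ q := by congr 1; omega
          _ = x := hx
      simpa using mul_right_cancel₀ h this
  calc Set.ncard {x : F | x ^ q = x} ≤ (insert (0:F) {x : F | x ^ (q-1) = 1}).ncard :=
        Set.ncard_le_ncard hsub (Set.toFinite _)
    _ ≤ Set.ncard {x : F | x ^ (q-1) = 1} + 1 := Set.ncard_insert_le _ _
    _ ≤ q := by have := aux_pow_bound (q-1) (by omega) (1:F); omega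

lemma aux_AS {F : Type*} [Field F] [Fintype F] (q : ℕ) (hq : 2 ≤ q)
    (hF : Fintype.card F = q ^ 2)
    (hfrob : ∀ x y : F, (x + y) ^ q = x ^ q + y ^ q)
    (h2 : (2 : F) = 0)
    (b : F) (hb : b ^ q = b) : ∃ u : F, u ^ q + u = b := by
  classical
  have hneg : ∀ x : F, -x = x := fun x =>
    neg_eq_of_add_eq_zero_left (by rw [← two_mul, h2, zero_mul])
  set W : Set F := {x : F | x ^ q = x} with hW
  have hWcard : W.ncard ≤ q := aux_fix_bound q hq
  set T : F →+ F := AddMonoidHom.mk' (fun u => u ^ q + u)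
    (fun x y => by rw [hfrob]; ring) with hT
  have hrange_sub : (T.range : Set F) ⊆ W := by
    rintro _ ⟨u, rfl⟩
    show (T u) ^ q = T u
    simp only [hT, AddMonoidHom.mk'_apply]
    rw [hfrob]
    have huq : (u ^ q) ^ q = u := by
      rw [← pow_mul, ← pow_two, ← hF]; exact FiniteField.pow_card u
    rw [huq, add_comm]
  have hker_le : Nat.card T.ker ≤ q := by
    have inj : Function.Injective (fun u : T.ker => (⟨(u : F), by
        have hu : (u : F) ^ q + (u : F) = 0 := by
          have h4 := u.2
          rw [AddMonoidHom.mem_ker] at h4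
          exact h4
        show (u : F) ^ q = (u : F)
        have h3 : (u:F) ^ q = -(u:F) := eq_neg_of_add_eq_zero_left hu
        rw [h3, hneg]⟩ : W)) := by
      intro a b h
      have h5 := congrArg Subtype.val h
      exact Subtype.ext h5

    calc Nat.card T.ker ≤ Nat.card W := Nat.card_le_card_of_injective _ inj
      _ = W.ncard := Nat.card_coe_set_eq _
      _ ≤ q := hWcard
  have hmain : Nat.card F = Nat.card T.range * Nat.card T.ker := aux_card_addhom T
  have hcF : Nat.card F = q ^ 2 := by rw [Nat.card_eq_fintype_card, hF]
  have hrange_card : (T.range : Set F).ncard = Nat.card T.range := by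
    rw [← Nat.card_coe_set_eq, SetLike.coe_sort_coe]
  have hrange_ge : q ≤ Nat.card T.range := by
    have h1 : q * q ≤ Nat.card T.range * q := by
      calc q * q = q ^ 2 := (pow_two q).symm
        _ = Nat.card T.range * Nat.card T.ker := by rw [← hcF, hmain]
        _ ≤ Nat.card T.range * q := Nat.mul_le_mul_left _ hker_le
    exact Nat.le_of_mul_le_mul_right h1 (by omega)
  have hset : (T.range : Set F) = W := by
    apply Set.eq_of_subset_of_ncard_le hrange_sub _ (Set.toFinite _)
    rw [hrange_card]; omega
  have hbW : b ∈ (T.range : Set F) := by rw [hset]; exact hb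
  obtain ⟨u, hu⟩ := hbW
  exact ⟨u, by simpa [hT] using hu⟩

lemma aux_pow_fiber {F : Type*} [Field F] [Fintype F] (q : ℕ) (hq : 2 ≤ q)
    (hF : Fintype.card F = q ^ 2) (t : F) (ht : t ^ (q + 1) = 1) :
    Set.ncard {x : F | x ^ (q - 1) = t} = q - 1 := by
  classical
  have ht0 : t ≠ 0 := by
    intro h; rw [h, zero_pow (show q + 1 ≠ 0 by omega)] at ht; exact zero_ne_one ht
  set μ : Fˣ →* Fˣ := powMonoidHom (q - 1) with hμ
  have hμapp : ∀ v : Fˣ, μ v = v ^ (q - 1) := fun v => rfl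
  have hcu : Nat.card Fˣ = q ^ 2 - 1 := by
    rw [Nat.card_eq_fintype_card, Fintype.card_units, hF]
  have hker_le : Nat.card μ.ker ≤ q - 1 := by
    have inj : Function.Injective (fun u : μ.ker => (⟨((u : Fˣ) : F), by
        have hu : ((u : Fˣ)) ^ (q - 1) = 1 := by
          have h4 := u.2; rw [MonoidHom.mem_ker, hμapp] at h4; exact h4
        show ((u : Fˣ) : F) ^ (q - 1) = 1
        rw [← Units.val_pow_eq_pow_val, hu, Units.val_one]⟩ :
        {x : F | x ^ (q - 1) = 1})) := by
      intro a b h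
      have h5 := congrArg Subtype.val h
      exact Subtype.ext (Units.ext h5)
    calc Nat.card μ.ker ≤ Nat.card {x : F | x ^ (q - 1) = 1} :=
          Nat.card_le_card_of_injective _ inj
      _ = Set.ncard {x : F | x ^ (q - 1) = 1} := Nat.card_coe_set_eq _
      _ ≤ q - 1 := aux_pow_bound _ (by omega) _
  have hpow1 : ∀ u : Fˣ, u ∈ μ.range → u ^ (q + 1) = 1 := by
    rintro _ ⟨v, rfl⟩
    have hv : ((v : F)) ^ (q ^ 2 - 1) = 1 := by
      rw [← hF]; exact FiniteField.pow_card_sub_one_eq_one (v : F) (Units.ne_zero v)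
    apply Units.ext
    rw [hμapp]
    calc (((v ^ (q - 1)) ^ (q + 1) : Fˣ) : F) = (v : F) ^ ((q + 1) * (q - 1)) := by
          rw [Units.val_pow_eq_pow_val, Units.val_pow_eq_pow_val, ← pow_mul,
            Nat.mul_comm (q - 1) (q + 1)]
      _ = (v : F) ^ (q ^ 2 - 1) := by rw [aux_qsq q hq]
      _ = 1 := hv
  have hrange_sub : (μ.range : Set Fˣ) ⊆ {u : Fˣ | u ^ (q + 1) = 1} :=
    fun u hu => hpow1 u hu
  have hS_le : Set.ncard {u : Fˣ | u ^ (q + 1) = 1} ≤ q + 1 := by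
    have inj : Function.Injective (fun u : {u : Fˣ | u ^ (q + 1) = 1} =>
        (⟨((u : Fˣ) : F), by
          have hu : ((u : Fˣ)) ^ (q + 1) = 1 := u.2
          show ((u : Fˣ) : F) ^ (q + 1) = 1
          rw [← Units.val_pow_eq_pow_val, hu, Units.val_one]⟩ :
        {x : F | x ^ (q + 1) = 1})) := by
      intro a b h
      have h5 := congrArg Subtype.val h
      exact Subtype.ext (Units.ext h5)
    calc Set.ncard {u : Fˣ | u ^ (q + 1) = 1}
        = Nat.card {u : Fˣ | u ^ (q + 1) = 1} := (Nat.card_coe_set_eq _).symm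
      _ ≤ Nat.card {x : F | x ^ (q + 1) = 1} := Nat.card_le_card_of_injective _ inj
      _ = Set.ncard {x : F | x ^ (q + 1) = 1} := Nat.card_coe_set_eq _
      _ ≤ q + 1 := aux_pow_bound _ (by omega) _
  have hmain : Nat.card Fˣ = Nat.card μ.range * Nat.card μ.ker := aux_card_hom μ
  have hrange_card : (μ.range : Set Fˣ).ncard = Nat.card μ.range := by
    rw [← Nat.card_coe_set_eq, SetLike.coe_sort_coe]
  have hrange_le : Nat.card μ.range ≤ q + 1 := by
    rw [← hrange_card]
    exact le_trans (Set.ncard_le_ncard hrange_sub (Set.toFinite _)) hS_le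
  have hker_ge : q - 1 ≤ Nat.card μ.ker := by
    have h1 : (q + 1) * (q - 1) ≤ (q + 1) * Nat.card μ.ker := by
      calc (q + 1) * (q - 1) = q ^ 2 - 1 := aux_qsq q hq
        _ = Nat.card μ.range * Nat.card μ.ker := by rw [← hcu, hmain]
        _ ≤ (q + 1) * Nat.card μ.ker := Nat.mul_le_mul_right _ hrange_le
    exact Nat.le_of_mul_le_mul_left h1 (by omega)
  have hrange_ge : q + 1 ≤ Nat.card μ.range := by
    have h1 : (q + 1) * (q - 1) ≤ Nat.card μ.range * (q - 1) := by
      calc (q + 1) * (q - 1) = q ^ 2 - 1 := aux_qsq q hq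
        _ = Nat.card μ.range * Nat.card μ.ker := by rw [← hcu, hmain]
        _ ≤ Nat.card μ.range * (q - 1) := Nat.mul_le_mul_left _ hker_le
    exact Nat.le_of_mul_le_mul_right h1 (by omega)
  have hkerval : Nat.card μ.ker = q - 1 := le_antisymm hker_le hker_ge
  have hrange_eq : (μ.range : Set Fˣ) = {u : Fˣ | u ^ (q + 1) = 1} := by
    apply Set.eq_of_subset_of_ncard_le hrange_sub _ (Set.toFinite _)
    rw [hrange_card]; omega
  set tu : Fˣ := Units.mk0 t ht0 with htu
  have htu_mem : tu ∈ μ.range := by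
    have h6 : tu ∈ (μ.range : Set Fˣ) := by
      rw [hrange_eq]
      show tu ^ (q + 1) = 1
      apply Units.ext
      rw [Units.val_pow_eq_pow_val]
      simp only [htu, Units.val_mk0, Units.val_one]
      exact ht
    exact h6
  obtain ⟨x₀, hx₀⟩ := htu_mem
  have hfiber : Nat.card (μ ⁻¹' {tu} : Set Fˣ) = q - 1 := by
    rw [← hx₀, Nat.card_congr (μ.fiberEquivKer x₀), hkerval]
  have hEquiv : (μ ⁻¹' {tu} : Set Fˣ) ≃ {x : F | x ^ (q - 1) = t} :=
    { toFun := fun u => ⟨((u : Fˣ) : F), by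
        have hu : μ u.1 = tu := u.2
        show ((u.1 : Fˣ) : F) ^ (q - 1) = t
        rw [← Units.val_pow_eq_pow_val, ← hμapp u.1, hu]
        simp [htu]⟩
      invFun := fun x => ⟨Units.mk0 x.1 (by
          intro h
          have h7 : (x : F) ^ (q - 1) = t := x.2
          rw [h, zero_pow (show q - 1 ≠ 0 by omega)] at h7
          exact ht0 h7.symm), by
        show μ _ ∈ ({tu} : Set Fˣ)
        simp only [Set.mem_singleton_iff]
        apply Units.ext
        rw [hμapp, Units.val_pow_eq_pow_val]
        simp only [Units.val_mk0, htu]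
        exact x.2⟩
      left_inv := fun u => by apply Subtype.ext; apply Units.ext; rfl
      right_inv := fun x => by apply Subtype.ext; rfl }
  calc Set.ncard {x : F | x ^ (q - 1) = t}
      = Nat.card {x : F | x ^ (q - 1) = t} := (Nat.card_coe_set_eq _).symm
    _ = Nat.card (μ ⁻¹' {tu} : Set Fˣ) := (Nat.card_congr hEquiv).symm
    _ = q - 1 := hfiber

lemma aux_tele {F : Type*} [CommRing F] (h2 : (2 : F) = 0) (u : F) :
    ∀ n : ℕ, 1 ≤ n →
    (∑ i ∈ Finset.range n, u ^ (2 ^ i)) ^ 2 + (∑ i ∈ Finset.range n, u ^ (2 ^ i))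
      = u ^ (2 ^ n) + u := by
  intro n hn
  induction n with
  | zero => omega
  | succ n ih =>
    rcases Nat.lt_or_ge 1 (n + 1) with h | h
    · have hn1 : 1 ≤ n := by omega
      have ih' := ih hn1
      rw [Finset.sum_range_succ]
      set g := ∑ i ∈ Finset.range n, u ^ (2 ^ i) with hg
      have hv : (u ^ (2 ^ n)) ^ 2 = u ^ (2 ^ (n + 1)) := by
        rw [← pow_mul, ← pow_succ]
      linear_combination ih' + hv + (g * u ^ (2 ^ n) + u ^ (2 ^ n)) * h2
    · have : n = 0 := by omega
      subst this
      simp [Finset.sum_range_one]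
theorem stmt_11 (q : ℕ) (e : ℕ) (he : 1 ≤ e) (hqe : q = 2 ^ e)
    (F : Type*) [Field F] [Fintype F]
    (hF : Fintype.card F = q ^ 2) (a : F) (ha : a ≠ 0) (I : ℕ)
    (hI : I = Set.ncard {p : F × F | p.1 ^ (q + 1) = p.2 ^ q + p.2 ∧
        p.2 = a * p.1 ^ 2}) :
    ((∃ z : F, z ^ q = z ∧ z ^ 2 + z = a ^ (q + 1)) → I = 1) ∧
    ((¬ ∃ z : F, z ^ q = z ∧ z ^ 2 + z = a ^ (q + 1)) → I = 2 * q - 1) := by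
  classical
  have hq2 : 2 ≤ q := by
    rw [hqe]
    calc 2 = 2 ^ 1 := (pow_one 2).symm
      _ ≤ 2 ^ e := Nat.pow_le_pow_right (by norm_num) he
  -- characteristic 2
  haveI hfact : Fact (Nat.Prime 2) := ⟨Nat.prime_two⟩
  obtain ⟨n, hp, hcard⟩ := FiniteField.card F (ringChar F)
  have hp2 : ringChar F = 2 := by
    have h1 : (ringChar F) ∣ Fintype.card F := by
      rw [hcard]; exact dvd_pow_self _ (by exact_mod_cast n.2.ne')
    rw [hF, hqe, ← pow_mul] at h1
    exact (Nat.prime_dvd_prime_iff_eq hp Nat.prime_two).mp (hp.dvd_of_dvd_pow h1)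
  haveI hchar : CharP F 2 := hp2 ▸ ringChar.charP F
  have h2F : (2 : F) = 0 := by exact_mod_cast CharP.cast_eq_zero F 2
  have hfrob : ∀ x y : F, (x + y) ^ q = x ^ q + y ^ q := by
    intro x y; rw [hqe]; exact add_pow_char_pow x y 2 e
  have hneg : ∀ x : F, -x = x := fun x =>
    neg_eq_of_add_eq_zero_left (by rw [← two_mul, h2F, zero_mul])
  set b := a ^ (q + 1) with hbdef
  have hb0 : b ≠ 0 := pow_ne_zero _ ha
  have hxcard : ∀ x : F, x ≠ 0 → x ^ (q ^ 2 - 1) = 1 := fun x hx => by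
    rw [← hF]; exact FiniteField.pow_card_sub_one_eq_one x hx
  have hqsq : (q - 1) * (q + 1) = q ^ 2 - 1 := by
    rw [Nat.mul_comm]; exact aux_qsq q hq2
  have hbq : b ^ q = b := by
    rw [hbdef, ← pow_mul]
    have h9 : (q + 1) * q = q ^ 2 + q := by ring
    have h10 : 1 ≤ q ^ 2 := Nat.one_le_pow _ _ (by omega)
    have e1 : (q + 1) * q = (q ^ 2 - 1) + (q + 1) := by omega
    rw [e1, pow_add, hxcard a ha, one_mul]
  have haq : a ^ (q * (q + 1)) = b := by
    rw [Nat.mul_comm, pow_mul, ← hbdef, hbq]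
  set Sx : Set F := {x : F | x ^ (q + 1) = (a * x ^ 2) ^ q + a * x ^ 2} with hSx
  have hsetcard : I = Sx.ncard := by
    rw [hI, ← Nat.card_coe_set_eq, ← Nat.card_coe_set_eq]
    apply Nat.card_congr
    exact {
      toFun := fun p => ⟨p.1.1, by
        have h1 := p.2.1
        have h2p := p.2.2
        show p.1.1 ^ (q + 1) = (a * p.1.1 ^ 2) ^ q + a * p.1.1 ^ 2
        rw [← h2p]; exact h1⟩
      invFun := fun x => ⟨(x.1, a * x.1 ^ 2), ⟨x.2, rfl⟩⟩
      left_inv := fun p => by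
        apply Subtype.ext
        exact Prod.ext rfl p.2.2.symm
      right_inv := fun x => rfl }
  have h0mem : (0 : F) ∈ Sx := by
    show (0 : F) ^ (q + 1) = (a * 0 ^ 2) ^ q + a * 0 ^ 2
    rw [zero_pow (show q + 1 ≠ 0 by omega), zero_pow (show (2:ℕ) ≠ 0 by omega)]
    rw [mul_zero, zero_pow (show q ≠ 0 by omega), add_zero]
  have hkey : ∀ x : F, x ≠ 0 →
      (x ∈ Sx ↔ (a ^ q * x ^ (q - 1)) ^ 2 + a ^ q * x ^ (q - 1) = b) := by
    intro x hx
    have hA0 : a ^ q ≠ 0 := pow_ne_zero _ ha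
    have hx2 : x ^ 2 ≠ 0 := pow_ne_zero _ hx
    have e1 : x ^ (q + 1) = x ^ (q - 1) * x ^ 2 := by
      rw [← pow_add]; congr 1; omega
    have e2 : (a * x ^ 2) ^ q = a ^ q * ((x ^ (q - 1)) ^ 2 * x ^ 2) := by
      rw [mul_pow]
      congr 1
      rw [← pow_mul, ← pow_mul, ← pow_add]
      congr 1; omega
    have hba : b = a ^ q * a := by rw [hbdef, pow_succ]
    show x ^ (q + 1) = (a * x ^ 2) ^ q + a * x ^ 2 ↔ _
    rw [e1, e2]
    constructor
    · intro h
      have h3 : x ^ (q - 1) = a ^ q * (x ^ (q - 1)) ^ 2 + a := by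
        apply mul_right_cancel₀ hx2
        linear_combination h
      rw [hba]
      linear_combination (a ^ q) * h3 + (a ^ q * x ^ (q - 1)) ^ 2 * h2F
    · intro h
      rw [hba] at h
      have h3 : a ^ q * (x ^ (q - 1) - (a ^ q * (x ^ (q - 1)) ^ 2 + a)) = 0 := by
        linear_combination h - (a ^ q * x ^ (q - 1)) ^ 2 * h2F
      have h4 : x ^ (q - 1) - (a ^ q * (x ^ (q - 1)) ^ 2 + a) = 0 := by
        rcases mul_eq_zero.mp h3 with h' | h'
        · exact absurd h' hA0
        · exact h'
      have h5 : x ^ (q - 1) = a ^ q * (x ^ (q - 1)) ^ 2 + a := sub_eq_zero.mp h4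
      linear_combination (x ^ 2) * h5
  constructor
  · -- trace zero case
    rintro ⟨z, hzq, hz⟩
    have hXset : Sx = {0} := by
      ext x
      simp only [Set.mem_singleton_iff]
      constructor
      · intro hxD
        by_contra hx
        set s := a ^ q * x ^ (q - 1) with hs
        have hseq : s ^ 2 + s = b := (hkey x hx).mp hxD
        have hs0 : s ≠ 0 := mul_ne_zero (pow_ne_zero _ ha) (pow_ne_zero _ hx)
        have hzz : (s + z) * ((s + z) + 1) = 0 := by
          linear_combination hseq + hz + (s * z + b) * h2F
        have hsq : s ^ q = s := by
          rcases mul_eq_zero.mp hzz with h' | h'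
          · have h9 : s = -z := eq_neg_of_add_eq_zero_left h'
            rw [hneg] at h9
            rw [h9, hzq]
          · have h9 : s = -(z + 1) := eq_neg_of_add_eq_zero_left (by linear_combination h')
            rw [hneg] at h9
            rw [h9, hfrob z 1, hzq, one_pow]
        have hsq1 : s ^ (q + 1) = s ^ 2 := by
          rw [pow_succ, hsq, pow_two]
        have hsq2 : s ^ (q + 1) = b := by
          rw [hs, mul_pow, ← pow_mul, ← pow_mul, haq, hqsq, hxcard x hx, mul_one]
        have h9 : s ^ 2 = b := by rw [← hsq1, hsq2]
        have h10 : s = 0 := by linear_combination hseq - h9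
        exact hs0 h10
      · intro h; rw [h]; exact h0mem
    rw [hsetcard, hXset, Set.ncard_singleton]
  · -- trace one case
    intro hn
    obtain ⟨u, hu⟩ := aux_AS q hq2 hF hfrob h2F b hbq
    set s := ∑ i ∈ Finset.range e, u ^ (2 ^ i) with hsdef
    have hseq : s ^ 2 + s = b := by
      calc s ^ 2 + s = u ^ (2 ^ e) + u := aux_tele h2F u e he
        _ = u ^ q + u := by rw [← hqe]
        _ = b := hu
    have hsq : s ^ q = s + 1 := by
      have h4 : (s ^ q) ^ 2 + s ^ q = b := by
        have h5 : (s ^ 2 + s) ^ q = (s ^ q) ^ 2 + s ^ q := by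
          rw [hfrob, pow_right_comm]
        rw [← h5, hseq, hbq]
      have hw : (s ^ q + s) * ((s ^ q + s) + 1) = 0 := by
        linear_combination h4 + hseq + (s ^ q * s + b) * h2F
      rcases mul_eq_zero.mp hw with h' | h'
      · exfalso
        have h9 : s ^ q = -s := eq_neg_of_add_eq_zero_left h'
        rw [hneg] at h9
        exact hn ⟨s, h9, hseq⟩
      · have h10 : s ^ q + s + 1 = 0 := by linear_combination h'
        linear_combination h10 - (s + 1) * h2F
    have hs0 : s ≠ 0 := by
      intro h
      apply hb0
      rw [← hseq, h]; ring
    have hs1 : s + 1 ≠ 0 := by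
      intro h
      apply hb0
      have h9 : s = -1 := eq_neg_of_add_eq_zero_left h
      rw [← hseq, h9]; ring
    have hA0 : a ^ q ≠ 0 := pow_ne_zero _ ha
    have hAq1 : (a ^ q) ^ (q + 1) = b := by rw [← pow_mul]; exact haq
    have hsq1 : s ^ (q + 1) = b := by
      rw [pow_succ, hsq]; linear_combination hseq
    have hs1q : (s + 1) ^ (q + 1) = b := by
      have h9 : (s + 1) ^ q = s := by
        rw [hfrob, hsq, one_pow]
        linear_combination h2F
      rw [pow_succ, h9]; linear_combination hseq
    set t₁ := s / a ^ q with ht1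
    set t₂ := (s + 1) / a ^ q with ht2
    have ht1pow : t₁ ^ (q + 1) = 1 := by
      rw [ht1, div_pow, hsq1, hAq1, div_self hb0]
    have ht2pow : t₂ ^ (q + 1) = 1 := by
      rw [ht2, div_pow, hs1q, hAq1, div_self hb0]
    have ht1c := aux_pow_fiber q hq2 hF t₁ ht1pow
    have ht2c := aux_pow_fiber q hq2 hF t₂ ht2pow
    have ht10 : t₁ ≠ 0 := div_ne_zero hs0 hA0
    have ht20 : t₂ ≠ 0 := div_ne_zero hs1 hA0
    have ht1t2 : t₁ ≠ t₂ := by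
      intro h
      rw [ht1, ht2, div_eq_div_iff hA0 hA0] at h
      have h9 : s = s + 1 := mul_right_cancel₀ hA0 h
      simp at h9
    have hXset : Sx = insert (0 : F)
        ({x : F | x ^ (q - 1) = t₁} ∪ {x : F | x ^ (q - 1) = t₂}) := by
      ext x
      simp only [Set.mem_insert_iff, Set.mem_union, Set.mem_setOf_eq]
      rcases eq_or_ne x 0 with hx | hx
      · subst hx
        constructor
        · intro _; left; rfl
        · intro _; exact h0mem
      · have hk := hkey x hx
        constructor
        · intro hxD
          have hseq' : (a ^ q * x ^ (q - 1)) ^ 2 + a ^ q * x ^ (q - 1) = b :=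
            hk.mp hxD
          set w := a ^ q * x ^ (q - 1) with hw
          have hroots : (w + s) * ((w + s) + 1) = 0 := by
            linear_combination hseq' + hseq + (w * s + b) * h2F
          right
          rcases mul_eq_zero.mp hroots with h' | h'
          · left
            have h9 : w = -s := eq_neg_of_add_eq_zero_left h'
            rw [hneg] at h9
            rw [ht1, eq_div_iff hA0]
            linear_combination h9
          · right
            have h9 : w = -(s + 1) := eq_neg_of_add_eq_zero_left (by linear_combination h')
            rw [hneg] at h9
            rw [ht2, eq_div_iff hA0]
            linear_combination h9
        · rintro (h | h | h)
          · exact absurd h hx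
          · apply hk.mpr
            have h9 : a ^ q * x ^ (q - 1) = s := by
              rw [h, ht1]; field_simp
            rw [h9]; exact hseq
          · apply hk.mpr
            have h9 : a ^ q * x ^ (q - 1) = s + 1 := by
              rw [h, ht2]; field_simp
            rw [h9]
            linear_combination hseq + (s + 1) * h2F
    have hd12 : Disjoint {x : F | x ^ (q - 1) = t₁} {x : F | x ^ (q - 1) = t₂} := by
      rw [Set.disjoint_left]
      intro x h1x h2x
      exact ht1t2 (h1x.symm.trans h2x)
    have h0notin : (0 : F) ∉ {x : F | x ^ (q - 1) = t₁} ∪ {x : F | x ^ (q - 1) = t₂} := by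
      rintro (h | h)
      · rw [Set.mem_setOf_eq, zero_pow (show q - 1 ≠ 0 by omega)] at h
        exact ht10 h.symm
      · rw [Set.mem_setOf_eq, zero_pow (show q - 1 ≠ 0 by omega)] at h
        exact ht20 h.symm
    rw [hsetcard, hXset,
      Set.ncard_insert_of_notMem h0notin (Set.toFinite _),
      Set.ncard_union_eq hd12 (Set.toFinite _) (Set.toFinite _), ht1c, ht2c]
    omega
end
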